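/- arXiv:math/0311312 — 11 statements merged into one kernel-verified Lean document; each statement's English description precedes it below -/
import Mathlib

section
/- Let e ≥ 0 be an integer and let f ∈ R[y]. Write f = g·Q_e(y) + A with A ∈ R[y] of degree at most e (division with remainder by the monic polynomial Q_e(y)). Then e!·(v−u)^e·(the coefficient of y^e in A) = Σ_{s=0}^{e} (−1)^s·binom(e,s)·f(−(e−s)·u − s·v), where f(−(e−s)·u − s·v) denotes the evaluation of f at the element −(e−s)·u − s·v of R. -/
open Polynomial Finset

section FinDiff
variable {S : Type*} [CommRing S]

lemma hasse_eval_top {e : ℕ} {P : Polynomial S} (h : P.natDegree ≤ e + 1) (d : S) :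
    (Polynomial.hasseDeriv (e+1) P).eval d = P.coeff (e+1) := by
  have h1 : (Polynomial.hasseDeriv (e+1) P).natDegree < 1 := by
    have := Polynomial.natDegree_hasseDeriv_le P (e+1)
    omega
  rw [Polynomial.eval_eq_sum_range' h1]
  simp [Polynomial.hasseDeriv_coeff]

lemma hasse_eval_sub {e : ℕ} {P : Polynomial S} (h : P.natDegree ≤ e + 1) (d : S) :
    (Polynomial.hasseDeriv e P).eval d = P.coeff e + (e+1) * P.coeff (e+1) * d := by
  have h1 : (Polynomial.hasseDeriv e P).natDegree < 2 := by
    have := Polynomial.natDegree_hasseDeriv_le P e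
    omega
  rw [Polynomial.eval_eq_sum_range' h1]
  simp [Finset.sum_range_succ, Polynomial.hasseDeriv_coeff, Nat.add_comm 1 e,
    Nat.choose_succ_self_right]


lemma diff_degree {e : ℕ} {P : Polynomial S} (h : P.degree ≤ (e + 1 : ℕ)) (d : S) :
    ((Polynomial.taylor d P) - P).degree ≤ (e : ℕ) := by
  have hnd : P.natDegree ≤ e + 1 := Polynomial.natDegree_le_iff_degree_le.2 h
  have htd : (Polynomial.taylor d P).degree ≤ (e + 1 : ℕ) := by
    rw [← Polynomial.natDegree_le_iff_degree_le, Polynomial.natDegree_taylor]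
    exact hnd
  rw [Polynomial.degree_le_iff_coeff_zero]
  intro m hm
  rw [Polynomial.coeff_sub]
  rcases eq_or_lt_of_le (show (e:ℕ) + 1 ≤ m by exact_mod_cast Nat.add_one_le_iff.2 (by exact_mod_cast hm)) with hme | hme
  · subst hme
    rw [Polynomial.taylor_coeff, hasse_eval_top hnd, sub_self]
  · rw [Polynomial.coeff_eq_zero_of_degree_lt (lt_of_le_of_lt htd (by exact_mod_cast hme)),
      Polynomial.coeff_eq_zero_of_degree_lt (lt_of_le_of_lt h (by exact_mod_cast hme)), sub_self]

lemma diff_coeff {e : ℕ} {P : Polynomial S} (h : P.degree ≤ (e + 1 : ℕ)) (d : S) :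
    ((Polynomial.taylor d P) - P).coeff e = (e+1) * P.coeff (e+1) * d := by
  have hnd : P.natDegree ≤ e + 1 := Polynomial.natDegree_le_iff_degree_le.2 h
  rw [Polynomial.coeff_sub, Polynomial.taylor_coeff, hasse_eval_sub hnd]
  ring


lemma findiff : ∀ (e : ℕ) (P : Polynomial S), P.degree ≤ (e : ℕ) → ∀ (a d : S),
    ∑ s ∈ Finset.range (e+1), (-1:S)^s * (e.choose s : S) * P.eval (a + s * d)
      = (-1:S)^e * (e.factorial : S) * d^e * P.coeff e := by
  intro e
  induction e with
  | zero =>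
    intro P hP a d
    simp only [Finset.sum_range_one, Nat.cast_zero, pow_zero, Nat.choose_self, Nat.cast_one,
      one_mul, Nat.factorial_zero, zero_mul, add_zero]
    rw [Finset.sum_range_one, Polynomial.eq_C_of_degree_le_zero (show P.degree ≤ 0 by exact_mod_cast hP)]
    simp
  | succ e ih =>
    intro P hP a d
    set Q : Polynomial S := (Polynomial.taylor d P) - P with hQ
    have hQdeg : Q.degree ≤ (e : ℕ) := diff_degree (by exact_mod_cast hP) d
    have hQev : ∀ x : S, Q.eval x = P.eval (x + d) - P.eval x := by
      intro x
      simp [hQ, Polynomial.taylor_eval]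
    have choose_top : (e.choose (e+1) : S) = 0 := by simp [Nat.choose_succ_self]
    calc ∑ s ∈ Finset.range (e+1+1), (-1:S)^s * ((e+1).choose s : S) * P.eval (a + s*d)
        = ∑ k ∈ Finset.range (e+1), ((-1:S)^(k+1) * (e.choose (k+1) : S) * P.eval (a + (↑(k+1)) * d)
            - (-1:S)^k * (e.choose k : S) * P.eval ((a+d) + ↑k * d)) + P.eval a := by
          rw [Finset.sum_range_succ']
          congr 1
          · apply Finset.sum_congr rfl
            intro k _
            have hc : ((e+1).choose (k+1) : S) = (e.choose (k+1) : S) + (e.choose k : S) := by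
              rw [Nat.choose_succ_succ]; push_cast; ring
            have harg : a + (↑(k+1) : S) * d = (a + d) + (↑k : S) * d := by push_cast; ring
            rw [hc, harg]
            ring
          · simp
      _ = (∑ s ∈ Finset.range (e+1), (-1:S)^s * (e.choose s : S) * P.eval (a + ↑s * d))
            - ∑ s ∈ Finset.range (e+1), (-1:S)^s * (e.choose s : S) * P.eval ((a+d) + ↑s * d) := by
          rw [Finset.sum_sub_distrib]
          have h2 : ∑ k ∈ Finset.range (e+1), (-1:S)^(k+1) * (e.choose (k+1) : S) * P.eval (a + (↑(k+1) : S) * d)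
              = ∑ k ∈ Finset.range e, (-1:S)^(k+1) * (e.choose (k+1) : S) * P.eval (a + (↑(k+1) : S) * d) := by
            rw [Finset.sum_range_succ, choose_top]
            simp
          rw [h2, Finset.sum_range_succ' (fun s => (-1:S)^s * (e.choose s : S) * P.eval (a + ↑s * d)) e]
          push_cast
          simp only [zero_mul, add_zero, Nat.choose_zero_right, Nat.cast_one, one_mul]
          ring
      _ = - ∑ s ∈ Finset.range (e+1), (-1:S)^s * (e.choose s : S) * Q.eval (a + ↑s * d) := by
          rw [← Finset.sum_sub_distrib, ← Finset.sum_neg_distrib]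
          apply Finset.sum_congr rfl
          intro s _
          rw [hQev, show a + ↑s * d + d = a + d + ↑s * d from by ring]
          ring
      _ = (-1:S)^(e+1) * ((e+1).factorial : S) * d^(e+1) * P.coeff (e+1) := by
          rw [ih Q hQdeg a d, diff_coeff (by exact_mod_cast hP) d]
          rw [Nat.factorial_succ]
          push_cast
          ring

end FinDiff

noncomputable section

abbrev R2 : Type := MvPolynomial (Fin 2) ℚ

def uu : R2 := MvPolynomial.X 0
def vv : R2 := MvPolynomial.X 1

/-- The involution of `R2 = ℚ[u,v]` swapping `u` and `v`; `P*`. -/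
def swapUV (P : R2) : R2 := MvPolynomial.rename (Equiv.swap (0 : Fin 2) 1) P

/-- `Q_k(y) = ∏_{j=0}^{k} (y + j·u + (k−j)·v)` in `R2[y]`. -/
def Qp (k : ℕ) : Polynomial R2 :=
  ∏ j ∈ Finset.range (k + 1),
    (Polynomial.X + Polynomial.C ((j : R2) * uu + ((k - j : ℕ) : R2) * vv))

/-- `C_{d+1} = ∏_{j=0}^{d} (j·u + (d−j)·v)` in `R2`. -/
def Cdtop (d : ℕ) : R2 :=
  ∏ j ∈ Finset.range (d + 1), ((j : R2) * uu + ((d - j : ℕ) : R2) * vv)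

/-- `Q_k(x_i)` as an element of `R2[x_1,…,x_r]`. -/
def Qm (r k : ℕ) (i : Fin r) : MvPolynomial (Fin r) R2 :=
  ∏ j ∈ Finset.range (k + 1),
    (MvPolynomial.X i + MvPolynomial.C ((j : R2) * uu + ((k - j : ℕ) : R2) * vv))

/-- Lemma 3.2: the top coefficient of the reduced representative of `f` modulo `Q_e`. -/
theorem stmt0 (e : ℕ) (f g A : Polynomial R2) (hdeg : A.degree ≤ (e : ℕ))
    (hf : f = g * Qp e + A) :
    (e.factorial : R2) * (vv - uu) ^ e * A.coeff e =
      ∑ s ∈ Finset.range (e + 1), (-1 : R2) ^ s * (e.choose s : R2) *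
        Polynomial.eval (-(((e - s : ℕ) : R2) * uu + (s : R2) * vv)) f := by
  have hroot : ∀ s ∈ Finset.range (e + 1),
      Polynomial.eval (-(((e - s : ℕ) : R2) * uu + (s : R2) * vv)) (Qp e) = 0 := by
    intro s hs
    rw [Finset.mem_range] at hs
    have hs' : s ≤ e := Nat.lt_succ_iff.mp hs
    rw [Qp, Polynomial.eval_prod]
    apply Finset.prod_eq_zero (Finset.mem_range.mpr (Nat.lt_succ_of_le (Nat.sub_le e s)))
    rw [Polynomial.eval_add, Polynomial.eval_X, Polynomial.eval_C,
      Nat.sub_sub_self hs']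
    ring
  have hsum : ∀ s ∈ Finset.range (e + 1),
      (-1 : R2) ^ s * (e.choose s : R2) *
        Polynomial.eval (-(((e - s : ℕ) : R2) * uu + (s : R2) * vv)) f
      = (-1 : R2) ^ s * (e.choose s : R2) *
        Polynomial.eval ((-(e : R2) * uu) + (s : R2) * (uu - vv)) A := by
    intro s hs
    have hs' : s ≤ e := Nat.lt_succ_iff.mp (Finset.mem_range.mp hs)
    have harg : -(((e - s : ℕ) : R2) * uu + (s : R2) * vv)
        = (-(e : R2) * uu) + (s : R2) * (uu - vv) := by
      rw [Nat.cast_sub hs']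
      ring
    rw [hf, Polynomial.eval_add, Polynomial.eval_mul, hroot s hs, mul_zero, zero_add, harg]
  rw [Finset.sum_congr rfl hsum, findiff e A hdeg (-(e : R2) * uu) (uu - vv)]
  have : (-1 : R2) ^ e * (uu - vv) ^ e = (vv - uu) ^ e := by
    rw [← neg_pow, neg_sub]
  rw [← this]
  ring
end
end

section
/- There exists exactly one reduced polynomial F ∈ R[x_1,…,x_r] such that (Σ_{i=1}^r i·x_i)·F + C_{d+1} lies in the ideal of R[x_1,…,x_r] generated by Q_{e_1}(x_1),…,Q_{e_r}(x_r). -/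
noncomputable section

open MvPolynomial Finset

/-! ### Auxiliary lemmas -/

/-- A polynomial with `degreeOf i ≤ e i` vanishing on a full grid of
pointwise-distinct points is zero. -/
lemma grid_zero {A : Type*} [CommRing A] [IsDomain A] :
    ∀ (r : ℕ) (e : Fin r → ℕ) (pts : (i : Fin r) → ℕ → A),
    (∀ i, ∀ j ≤ e i, ∀ j' ≤ e i, pts i j = pts i j' → j = j') →
    ∀ (F : MvPolynomial (Fin r) A),
    (∀ i, F.degreeOf i ≤ e i) →
    (∀ t : (i : Fin r) → ℕ, (∀ i, t i ≤ e i) →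
      MvPolynomial.eval (fun i => pts i (t i)) F = 0) → F = 0 := by
  intro r
  induction r with
  | zero =>
    intro e pts hp F hdeg hev
    rw [MvPolynomial.eq_C_of_isEmpty F]
    have := hev (fun i => 0) (fun i => Nat.zero_le _)
    rw [MvPolynomial.eq_C_of_isEmpty F, eval_C] at this
    rw [this, map_zero]
  | succ r ih =>
    intro e pts hp F hdeg hev
    set φ := finSuccEquiv A r F with hφ
    have hφ0 : φ = 0 := by
      refine Polynomial.ext fun m => ?_
      rw [Polynomial.coeff_zero]
      refine ih (fun j => e j.succ) (fun j => pts j.succ) (fun j => hp j.succ)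
        (φ.coeff m) (fun j => le_trans (degreeOf_coeff_finSuccEquiv F j m) (hdeg j.succ)) ?_
      intro t' ht'
      have hq : (φ.map (eval fun j => pts j.succ (t' j))) = 0 := by
        apply Polynomial.eq_zero_of_natDegree_lt_card_of_eval_eq_zero
          (f := fun j : Fin (e 0 + 1) => pts 0 j)
        · intro a b hab
          exact Fin.ext (hp 0 a (Nat.lt_succ_iff.mp a.2) b (Nat.lt_succ_iff.mp b.2) hab)
        · intro j
          rw [← eval_eq_eval_mv_eval']
          have : (Fin.cons (pts 0 j.1) fun i => pts i.succ (t' i) : Fin (r+1) → A)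
              = fun i => pts i ((Fin.cons j.1 t' : Fin (r+1) → ℕ) i) := by
            funext i
            refine Fin.cases ?_ ?_ i <;> simp
          rw [this]
          exact hev _ (fun i => Fin.cases (motive := fun i =>
            (Fin.cons j.1 t' : Fin (r+1) → ℕ) i ≤ e i)
            (Nat.lt_succ_iff.mp j.2) (by simpa using ht') i)
        · calc (φ.map (eval fun j => pts j.succ (t' j))).natDegree
              ≤ φ.natDegree := Polynomial.natDegree_map_le
            _ = F.degreeOf 0 := natDegree_finSuccEquiv F
            _ < e 0 + 1 := Nat.lt_succ_of_le (hdeg 0)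
            _ = Fintype.card (Fin (e 0 + 1)) := (Fintype.card_fin _).symm
      have := congrArg (fun q => Polynomial.coeff q m) hq
      simpa [Polynomial.coeff_map] using this
    have : F = (finSuccEquiv A r).symm φ := by rw [hφ]; simp
    rw [this, hφ0, map_zero]

lemma Qp_monic (k : ℕ) : (Qp k).Monic :=
  Polynomial.monic_prod_of_monic _ _ fun j _ => Polynomial.monic_X_add_C _

lemma Qp_natDegree (k : ℕ) : (Qp k).natDegree = k + 1 := by
  rw [Qp, Polynomial.natDegree_prod_of_monic _ _ fun j _ => Polynomial.monic_X_add_C _]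
  simp only [Polynomial.natDegree_X_add_C, Finset.sum_const, Finset.card_range, smul_eq_mul,
    mul_one]

lemma Qm_eq_aeval (r k : ℕ) (i : Fin r) :
    Qm r k i = Polynomial.aeval (X i : MvPolynomial (Fin r) R2) (Qp k) := by
  rw [Qm, Qp, map_prod]
  refine Finset.prod_congr rfl fun j _ => ?_
  simp [Polynomial.aeval_X, Polynomial.aeval_C, MvPolynomial.algebraMap_eq]

/-- `Q_{k}(x_i) = x_i^{k+1} + ∑_{m ≤ k} c_m x_i^m`. -/
lemma Qm_as_sum (r k : ℕ) (i : Fin r) :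
    Qm r k i = X i ^ (k + 1)
      + ∑ m ∈ range (k + 1), C ((Qp k).coeff m) * X i ^ m := by
  rw [Qm_eq_aeval]
  conv_lhs => rw [(Qp_monic k).as_sum]
  rw [Qp_natDegree, map_add, map_pow, Polynomial.aeval_X, map_sum]
  congr 1
  refine Finset.sum_congr rfl fun m _ => ?_
  rw [map_mul, map_pow, Polynomial.aeval_X, Polynomial.aeval_C, MvPolynomial.algebraMap_eq]

/-- The submodule of reduced polynomials. -/
def redSub (r : ℕ) (e : Fin r → ℕ) : Submodule R2 (MvPolynomial (Fin r) R2) where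
  carrier := {F | ∀ i, F.degreeOf i ≤ e i}
  add_mem' := fun ha hb i => le_trans (degreeOf_add_le _ _ _) (max_le (ha i) (hb i))
  zero_mem' := fun i => by simp
  smul_mem' := fun c F hF i => by
    rw [smul_eq_C_mul]
    exact le_trans (degreeOf_mul_le _ _ _) (by simpa [degreeOf_C] using hF i)

lemma monomial_mem (r : ℕ) (e : Fin r → ℕ) :
    ∀ (n : ℕ) (a : Fin r →₀ ℕ), (∑ i, a i) ≤ n →
    (monomial a (1 : R2)) ∈
      redSub r e ⊔ (Ideal.span (Set.range fun i : Fin r => Qm r (e i) i)).restrictScalars R2 := by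
  intro n
  induction n with
  | zero =>
    intro a ha
    refine Submodule.mem_sup_left (fun i => ?_)
    have h0 : a i = 0 :=
      Finset.sum_eq_zero_iff.mp (Nat.le_zero.mp ha) i (Finset.mem_univ i)
    calc degreeOf i (monomial a (1:R2)) = a i := degreeOf_monomial_eq _ _ one_ne_zero
      _ ≤ e i := by rw [h0]; exact Nat.zero_le _
  | succ n IH =>
    intro a ha
    by_cases hred : ∀ i, a i ≤ e i
    · refine Submodule.mem_sup_left (fun i => ?_)
      calc degreeOf i (monomial a (1:R2)) = a i := degreeOf_monomial_eq _ _ one_ne_zero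
        _ ≤ e i := hred i
    · push_neg at hred
      obtain ⟨i, hi⟩ := hred
      set a' : Fin r →₀ ℕ := a - Finsupp.single i (e i + 1) with ha'
      have haa' : a' + Finsupp.single i (e i + 1) = a := by
        ext j
        by_cases hj : j = i
        · subst hj
          simp [ha', Finsupp.sub_apply, Nat.sub_add_cancel hi]
        · simp [ha', Finsupp.sub_apply, Finsupp.single_apply, Ne.symm hj, hj]
      have hw : (∑ j, a' j) + (e i + 1) = ∑ j, a j := by
        rw [← haa']
        simp [Finsupp.add_apply, Finset.sum_add_distrib, Finsupp.single_apply]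
      have hXpow : ∀ m : ℕ, monomial a' (1:R2) * X i ^ m
          = monomial (a' + Finsupp.single i m) (1:R2) := by
        intro m
        rw [X_pow_eq_monomial, monomial_mul, mul_one]
      have key : monomial a (1:R2) = monomial a' 1 * Qm r (e i) i
          - ∑ m ∈ range (e i + 1),
              (Qp (e i)).coeff m • monomial (a' + Finsupp.single i m) (1:R2) := by
        rw [Qm_as_sum, mul_add, Finset.mul_sum, hXpow, haa']
        rw [eq_sub_iff_add_eq]
        congr 1
        refine Finset.sum_congr rfl fun m _ => ?_
        rw [smul_eq_C_mul, ← hXpow, mul_left_comm]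
      rw [key]
      refine Submodule.sub_mem _ (Submodule.mem_sup_right ?_)
        (Submodule.sum_mem _ fun m hm => ?_)
      · show monomial a' 1 * Qm r (e i) i ∈ Ideal.span _
        exact Ideal.mul_mem_left _ _ (Ideal.subset_span ⟨i, rfl⟩)
      · refine Submodule.smul_mem _ _ (IH _ ?_)
        have hm' : m ≤ e i := Nat.lt_succ_iff.mp (Finset.mem_range.mp hm)
        have : (∑ j, (a' + Finsupp.single i m) j) = (∑ j, a' j) + m := by
          simp [Finsupp.add_apply, Finset.sum_add_distrib, Finsupp.single_apply]
        rw [this]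
        omega

/-- Every polynomial is (reduced) + (element of the ideal). -/
lemma decomp (r : ℕ) (e : Fin r → ℕ) (P : MvPolynomial (Fin r) R2) :
    ∃ F G : MvPolynomial (Fin r) R2, (∀ i, F.degreeOf i ≤ e i) ∧
      G ∈ Ideal.span (Set.range fun i : Fin r => Qm r (e i) i) ∧ P = F + G := by
  have hP : P ∈ redSub r e ⊔
      (Ideal.span (Set.range fun i : Fin r => Qm r (e i) i)).restrictScalars R2 := by
    rw [← support_sum_monomial_coeff P]
    refine Submodule.sum_mem _ fun a _ => ?_
    have : monomial a (coeff a P) = (coeff a P) • monomial a (1:R2) := by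
      rw [smul_eq_C_mul, C_mul_monomial, mul_one]
    rw [this]
    exact Submodule.smul_mem _ _ (monomial_mem r e (∑ i, a i) a le_rfl)
  obtain ⟨F, hF, G, hG, hFG⟩ := Submodule.mem_sup.mp hP
  exact ⟨F, G, hF, hG, hFG.symm⟩

/-- evaluation of `R2` at `(u,v) = (1,0)` resp. `(0,1)`. -/
def ev10 : R2 →+* ℚ := (MvPolynomial.eval (fun w : Fin 2 => if w = 0 then (1:ℚ) else 0))
def ev01 : R2 →+* ℚ := (MvPolynomial.eval (fun w : Fin 2 => if w = 0 then (0:ℚ) else 1))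

lemma ev10_apply (a b : ℕ) : ev10 ((a : R2) * uu + (b : R2) * vv) = a := by
  simp [ev10, uu, vv]

lemma ev01_apply (a b : ℕ) : ev01 ((a : R2) * uu + (b : R2) * vv) = b := by
  simp [ev01, uu, vv]

lemma lincomb_ne_zero {a b : ℕ} (h : a + b ≠ 0) : (a : R2) * uu + (b : R2) * vv ≠ 0 := by
  intro hab
  have ha := congrArg ev10 hab
  have hb := congrArg ev01 hab
  rw [ev10_apply, map_zero] at ha
  rw [ev01_apply, map_zero] at hb
  have ha' : a = 0 := by exact_mod_cast ha
  have hb' : b = 0 := by exact_mod_cast hb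
  omega

/-- The grid points `p i j = -(j·u + (e i − j)·v)`. -/
def gpt (r : ℕ) (e : Fin r → ℕ) (i : Fin r) (j : ℕ) : R2 :=
  -((j : R2) * uu + ((e i - j : ℕ) : R2) * vv)

lemma gpt_inj (r : ℕ) (e : Fin r → ℕ) (i : Fin r) :
    ∀ j ≤ e i, ∀ j' ≤ e i, gpt r e i j = gpt r e i j' → j = j' := by
  intro j hj j' hj' h
  have := congrArg ev10 (neg_injective h)
  rw [ev10_apply, ev10_apply] at this
  exact_mod_cast this

/-- generic: `x ∣ ∏ (x + c j) − ∏ c j`. -/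
lemma dvd_prod_sub {A : Type*} [CommRing A] (x : A) (s : Finset ℕ) (c : ℕ → A) :
    x ∣ (∏ j ∈ s, (x + c j)) - ∏ j ∈ s, c j := by
  induction s using Finset.induction with
  | empty => simp
  | insert a s hns ih =>
    rw [Finset.prod_insert hns, Finset.prod_insert hns]
    obtain ⟨y, hy⟩ := ih
    exact ⟨∏ j ∈ s, (x + c j) + c a * y, by linear_combination c a * hy⟩

/-! ### Main theorem -/

/-- There is exactly one reduced `F ∈ R[x_1,…,x_r]` with
`(Σ i·x_i)·F + C_{d+1} ∈ (Q_{e_1}(x_1),…,Q_{e_r}(x_r))`. -/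
theorem stmt1 (r : ℕ) (hr : 1 ≤ r) (e : Fin r → ℕ) (he : ∃ i, e i ≠ 0)
    (d : ℕ) (hd : d = ∑ i, (i.1 + 1) * e i) :
    ∃! F : MvPolynomial (Fin r) R2,
      (∀ i, F.degreeOf i ≤ e i) ∧
      (∑ i, ((i.1 + 1 : ℕ) : MvPolynomial (Fin r) R2) * MvPolynomial.X i) * F
          + MvPolynomial.C (Cdtop d)
        ∈ Ideal.span (Set.range fun i : Fin r => Qm r (e i) i) := by
  classical
  set I := Ideal.span (Set.range fun i : Fin r => Qm r (e i) i) with hI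
  set L : MvPolynomial (Fin r) R2 :=
    ∑ i, ((i.1 + 1 : ℕ) : MvPolynomial (Fin r) R2) * X i with hL
  have hd1 : 1 ≤ d := by
    obtain ⟨i0, hi0⟩ := he
    have h1 : 1 ≤ (i0.1 + 1) * e i0 := by
      have : 1 ≤ e i0 := Nat.one_le_iff_ne_zero.mpr hi0
      calc 1 ≤ e i0 := this
        _ ≤ (i0.1 + 1) * e i0 := Nat.le_mul_of_pos_left _ (Nat.succ_pos _)
    calc 1 ≤ (i0.1 + 1) * e i0 := h1
      _ ≤ ∑ i, (i.1 + 1) * e i :=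
        Finset.single_le_sum (f := fun i : Fin r => (i.1 + 1) * e i)
          (fun _ _ => Nat.zero_le _) (Finset.mem_univ i0)
      _ = d := hd.symm
  -- evaluation of ideal elements is 0
  have hevI : ∀ (t : (i : Fin r) → ℕ), (∀ i, t i ≤ e i) →
      ∀ P ∈ I, MvPolynomial.eval (fun i => gpt r e i (t i)) P = 0 := by
    intro t ht P hP
    have hker : I ≤ RingHom.ker (MvPolynomial.eval (fun i => gpt r e i (t i))) := by
      rw [hI, Ideal.span_le]
      rintro _ ⟨i, rfl⟩
      rw [SetLike.mem_coe, RingHom.mem_ker]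
      unfold Qm
      rw [map_prod]
      apply Finset.prod_eq_zero (Finset.mem_range.mpr (Nat.lt_succ_of_le (ht i)))
      rw [map_add, eval_X, eval_C, gpt]
      exact neg_add_cancel _
    exact hker hP
  -- evaluation of L
  have hevL : ∀ (t : (i : Fin r) → ℕ),
      MvPolynomial.eval (fun i => gpt r e i (t i)) L
        = -(((∑ i, (i.1 + 1) * t i : ℕ) : R2) * uu
            + ((∑ i, (i.1 + 1) * (e i - t i) : ℕ) : R2) * vv) := by
    intro t
    rw [hL, map_sum]
    have hterm : ∀ i : Fin r,
        MvPolynomial.eval (fun i => gpt r e i (t i))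
            (((i.1 + 1 : ℕ) : MvPolynomial (Fin r) R2) * X i)
          = -((((i.1 + 1) * t i : ℕ) : R2) * uu) +
            -((((i.1 + 1) * (e i - t i) : ℕ) : R2) * vv) := by
      intro i
      rw [map_mul, map_natCast, eval_X, gpt]
      push_cast
      ring
    rw [Finset.sum_congr rfl fun i _ => hterm i, Finset.sum_add_distrib,
      Finset.sum_neg_distrib, Finset.sum_neg_distrib,
      Nat.cast_sum, Nat.cast_sum, Finset.sum_mul, Finset.sum_mul, neg_add]
  have hsum : ∀ (t : (i : Fin r) → ℕ), (∀ i, t i ≤ e i) →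
      (∑ i, (i.1 + 1) * t i) + (∑ i, (i.1 + 1) * (e i - t i)) = d := by
    intro t ht
    rw [hd, ← Finset.sum_add_distrib]
    refine Finset.sum_congr rfl fun i _ => ?_
    rw [← Nat.mul_add]
    congr 1
    have := ht i
    omega
  -- Q_d(L)
  set QdL : MvPolynomial (Fin r) R2 :=
    ∏ j ∈ range (d + 1), (L + C ((j : R2) * uu + ((d - j : ℕ) : R2) * vv)) with hQdL
  have hevQdL : ∀ (t : (i : Fin r) → ℕ), (∀ i, t i ≤ e i) →
      MvPolynomial.eval (fun i => gpt r e i (t i)) QdL = 0 := by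
    intro t ht
    rw [hQdL, map_prod]
    have hs : (∑ i, (i.1 + 1) * t i) < d + 1 := by
      have := hsum t ht; omega
    apply Finset.prod_eq_zero (Finset.mem_range.mpr hs)
    rw [map_add, hevL t, eval_C]
    have : (d - (∑ i, (i.1 + 1) * t i) : ℕ) = ∑ i, (i.1 + 1) * (e i - t i) := by
      have := hsum t ht; omega
    rw [this]
    exact neg_add_cancel _
  have hQdLI : QdL ∈ I := by
    obtain ⟨Fq, Gq, hFqdeg, hGq, hFGq⟩ := decomp r e QdL
    have hFq0 : Fq = 0 := by
      refine grid_zero r e (gpt r e) (gpt_inj r e) Fq hFqdeg ?_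
      intro t ht
      have h1 := hevQdL t ht
      rw [hFGq, map_add, hevI t ht _ hGq, add_zero] at h1
      exact h1
    rw [hFGq, hFq0, zero_add]
    exact hGq
  obtain ⟨HL, hHL⟩ : L ∣ QdL - C (Cdtop d) := by
    have hC : (C (Cdtop d) : MvPolynomial (Fin r) R2)
        = ∏ j ∈ range (d + 1), C ((j : R2) * uu + ((d - j : ℕ) : R2) * vv) := by
      rw [Cdtop, map_prod]
    rw [hC, hQdL]
    exact dvd_prod_sub L (range (d + 1)) _
  obtain ⟨F, G, hFdeg, hG, hFG⟩ := decomp r e HL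
  have hFsol : L * F + C (Cdtop d) ∈ I := by
    have heq : L * F + C (Cdtop d) = QdL - L * G := by
      rw [hFG] at hHL
      linear_combination -hHL
    rw [heq]
    exact Ideal.sub_mem _ hQdLI (Ideal.mul_mem_left _ _ hG)
  refine ⟨F, ⟨hFdeg, hFsol⟩, ?_⟩
  intro F' hF'
  have hDdeg : ∀ i, (F' - F).degreeOf i ≤ e i := fun i =>
    le_trans (degreeOf_sub_le _ _ _) (max_le (hF'.1 i) (hFdeg i))
  have hLD : L * (F' - F) ∈ I := by
    have h2 := Ideal.sub_mem _ hF'.2 hFsol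
    have h3 : (L * F' + C (Cdtop d)) - (L * F + C (Cdtop d)) = L * (F' - F) := by ring
    rwa [h3] at h2
  have hD0 : F' - F = 0 := by
    refine grid_zero r e (gpt r e) (gpt_inj r e) _ hDdeg ?_
    intro t ht
    have h3 := hevI t ht _ hLD
    rw [map_mul] at h3
    have hLne : MvPolynomial.eval (fun i => gpt r e i (t i)) L ≠ 0 := by
      rw [hevL t]
      refine neg_ne_zero.mpr (lincomb_ne_zero ?_)
      rw [hsum t ht]
      omega
    exact (mul_eq_zero.mp h3).resolve_left hLne
  exact sub_eq_zero.mp hD0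
end
end

section
/- Write Q_d(x) = Σ_{k=0}^{d+1} C_{d+1−k}·x^k with C_0 = 1, defining C_0,…,C_{d+1} ∈ R. If F ∈ R[x_1,…,x_r] is a reduced representative of q(Σ_{i=1}^r i·x_i), then (v−u)^n·(∏_{i=1}^r e_i!)·(the coefficient of ∏_{i=1}^r x_i^{e_i} in F) = Σ_{j=n}^{d} Σ_{j_1+⋯+j_r=j, j_i ≥ 0} C_{d−j}·(j!/(j_1!⋯j_r!))·∏_{i=1}^{r} [ Σ_{s_i=0}^{e_i} (−1)^{s_i}·binom(e_i,s_i)·(−i)^{j_i}·((e_i−s_i)·u + s_i·v)^{j_i} ]. -/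
noncomputable section

/-- The coefficients `C_m` of `Q_d(x) = Σ_{k=0}^{d+1} C_{d+1−k} x^k` (so `C_0 = 1`). -/
def Ccoef (d m : ℕ) : R2 := (Qp d).coeff (d + 1 - m)

open Finset

section Aux

variable {S : Type*} [CommRing S]

lemma pascal_step (e : ℕ) (A : ℕ → S) :
    ∑ s ∈ range (e+2), (-1:S)^s * ((e+1).choose s : S) * A s
      = ∑ s ∈ range (e+1), (-1:S)^s * (e.choose s : S) * (A s - A (s+1)) := by
  have h1 : ∑ s ∈ range (e+2), (-1:S)^s * ((e+1).choose s : S) * A s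
      = (∑ s ∈ range (e+1), (-1:S)^(s+1) * ((e.choose s : S) + (e.choose (s+1) : S)) * A (s+1)) + A 0 := by
    rw [Finset.sum_range_succ' (fun s => (-1:S)^s * ((e+1).choose s : S) * A s) (e+1)]
    simp [Nat.choose_succ_succ, Nat.cast_add]
  have h2 : ∑ s ∈ range (e+1), (-1:S)^s * (e.choose s : S) * A s
      = (∑ s ∈ range (e+1), (-1:S)^(s+1) * (e.choose (s+1) : S) * A (s+1)) + A 0 := by
    rw [Finset.sum_range_succ' (fun s => (-1:S)^s * (e.choose s : S) * A s) e,
      Finset.sum_range_succ]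
    simp
  rw [h1]
  simp only [mul_sub, Finset.sum_sub_distrib, h2]
  have h3 : ∑ s ∈ range (e+1), (-1:S)^(s+1) * ((e.choose s : S) + (e.choose (s+1) : S)) * A (s+1)
      = (∑ s ∈ range (e+1), (-1:S)^(s+1) * (e.choose (s+1) : S) * A (s+1))
        - ∑ s ∈ range (e+1), (-1:S)^s * (e.choose s : S) * A (s+1) := by
    rw [← Finset.sum_sub_distrib]
    exact Finset.sum_congr rfl fun s _ => by ring
  rw [h3]; ring

lemma diff_pow : ∀ (e : ℕ) (c t : S), ∀ m ≤ e,
    ∑ s ∈ range (e+1), (-1:S)^s * (e.choose s : S) * (c + (s:S)*t)^m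
      = if m = e then (-t)^e * (e.factorial : S) else 0 := by
  intro e
  induction e with
  | zero =>
    intro c t m hm
    interval_cases m
    simp
  | succ e ih =>
    intro c t m hm
    have hps := pascal_step e (fun s => (c + (s:S)*t)^m)
    rw [show e+1+1 = e+2 from rfl, hps]
    have expand : ∀ s : ℕ, (c + (s:S)*t)^m - (c + ((s+1:ℕ):S)*t)^m
        = ∑ j ∈ range m, -((m.choose j : S) * t^(m-j) * (c + (s:S)*t)^j) := by
      intro s
      have h : (c + ((s+1:ℕ):S)*t) = (c + (s:S)*t) + t := by push_cast; ring
      rw [h]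
      generalize c + (s:S)*t = x
      rw [add_pow, Finset.sum_range_succ]
      simp only [Nat.choose_self, Nat.cast_one, Nat.sub_self, pow_zero, mul_one]
      rw [show x ^ m - (∑ k ∈ range m, x ^ k * t ^ (m - k) * ((m.choose k : ℕ) : S) + x ^ m)
            = -∑ k ∈ range m, x ^ k * t ^ (m - k) * ((m.choose k : ℕ) : S) from by ring,
        Finset.sum_neg_distrib]
      exact neg_inj.mpr (Finset.sum_congr rfl fun j _ => by ring)
    calc ∑ s ∈ range (e+1), (-1:S)^s * (e.choose s : S) * ((c + (s:S)*t)^m - (c + ((s+1:ℕ):S)*t)^m)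
        = ∑ j ∈ range m, -((m.choose j : S) * t^(m-j)
            * ∑ s ∈ range (e+1), (-1:S)^s * (e.choose s : S) * (c + (s:S)*t)^j) := by
          simp_rw [expand, Finset.mul_sum]
          rw [Finset.sum_comm]
          refine Finset.sum_congr rfl fun j _ => ?_
          rw [← Finset.sum_neg_distrib]
          exact Finset.sum_congr rfl fun s _ => by ring
      _ = ∑ j ∈ range m, -((m.choose j : S) * t^(m-j)
            * if j = e then (-t)^e * (e.factorial : S) else 0) := by
          refine Finset.sum_congr rfl fun j hj => ?_
          rw [ih c t j (by have := Finset.mem_range.mp hj; omega)]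
      _ = if m = e + 1 then (-t)^(e+1) * ((e+1).factorial : S) else 0 := by
          by_cases hme : m = e + 1
          · subst hme
            rw [Finset.sum_eq_single e]
            · simp only [Nat.choose_succ_self_right, Nat.factorial_succ, if_pos rfl,
                show e + 1 - e = 1 from by omega]
              push_cast
              ring
            · intro b hb hne; simp [hne]
            · intro h; simp at h
          · rw [if_neg hme]
            refine Finset.sum_eq_zero fun j hj => ?_
            have : j ≠ e := by have := Finset.mem_range.mp hj; omega
            simp [this]

end Aux

lemma node_sum (a : R2) (e p : ℕ) (hp : p ≤ e) :
    ∑ s ∈ Finset.range (e+1), (-1:R2)^s * ((e.choose s : ℕ) : R2)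
        * ((-a)^p * (((e-s:ℕ):R2)*uu + (s:R2)*vv)^p)
      = if p = e then (a*(vv-uu))^e * ((e.factorial : ℕ):R2) else 0 := by
  have h := diff_pow e (-(a*(e:R2)*uu)) (a*(uu-vv)) p hp
  rw [show (-(a*(uu-vv))) = a*(vv-uu) from by ring] at h
  rw [← h]
  refine Finset.sum_congr rfl fun s hs => ?_
  have hs' : s ≤ e := Nat.lt_succ_iff.mp (Finset.mem_range.mp hs)
  rw [Nat.cast_sub hs', ← mul_pow]
  congr 2
  ring

def nodes (r : ℕ) (e : Fin r → ℕ) (s : Fin r → ℕ) (i : Fin r) : R2 :=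
  -(((e i - s i : ℕ) : R2) * uu + ((s i : ℕ) : R2) * vv)

def Tset (r : ℕ) (e : Fin r → ℕ) : Finset (Fin r → ℕ) :=
  Fintype.piFinset fun i => Finset.range (e i + 1)

def sgn (r : ℕ) (e : Fin r → ℕ) (s : Fin r → ℕ) : R2 :=
  ∏ i, (-1:R2)^(s i) * (((e i).choose (s i) : ℕ) : R2)

def Phi (r : ℕ) (e : Fin r → ℕ) (G : MvPolynomial (Fin r) R2) : R2 :=
  ∑ s ∈ Tset r e, sgn r e s * MvPolynomial.eval (nodes r e s) G

lemma eval_Qm_eq_zero (r : ℕ) (e : Fin r → ℕ) (s : Fin r → ℕ) (hs : s ∈ Tset r e) (i : Fin r) :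
    MvPolynomial.eval (nodes r e s) (Qm r (e i) i) = 0 := by
  have hsle : s i < e i + 1 := Finset.mem_range.mp ((Fintype.mem_piFinset.mp hs) i)
  rw [Qm, map_prod]
  refine Finset.prod_eq_zero (Finset.mem_range.mpr (show e i - s i < e i + 1 by omega)) ?_
  rw [map_add, MvPolynomial.eval_X, MvPolynomial.eval_C,
    show e i - (e i - s i) = s i from by omega]
  simp only [nodes]
  ring

lemma Phi_congr (r : ℕ) (e : Fin r → ℕ) (G F : MvPolynomial (Fin r) R2)
    (h : G - F ∈ Ideal.span (Set.range fun i : Fin r => Qm r (e i) i)) :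
    Phi r e G = Phi r e F := by
  have hz : ∀ s ∈ Tset r e, MvPolynomial.eval (nodes r e s) (G - F) = 0 := by
    intro s hs
    obtain ⟨c, hc⟩ := (Submodule.mem_span_range_iff_exists_fun _).mp h
    rw [← hc, map_sum]
    refine Finset.sum_eq_zero fun i _ => ?_
    rw [smul_eq_mul, map_mul, eval_Qm_eq_zero r e s hs i, mul_zero]
  unfold Phi
  refine Finset.sum_congr rfl fun s hs => ?_
  have := hz s hs
  rw [map_sub, sub_eq_zero] at this
  rw [this]

lemma Phi_reduced (r : ℕ) (e : Fin r → ℕ) (F : MvPolynomial (Fin r) R2)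
    (hred : ∀ i, F.degreeOf i ≤ e i) :
    Phi r e F = (vv - uu) ^ (∑ i, e i) * (∏ i, ((e i).factorial : R2))
      * MvPolynomial.coeff (Finsupp.equivFunOnFinite.symm e) F := by
  classical
  unfold Phi
  simp_rw [MvPolynomial.eval_eq', Finset.mul_sum]
  rw [Finset.sum_comm]
  have key : ∀ m ∈ F.support,
      (∑ s ∈ Tset r e, sgn r e s * (MvPolynomial.coeff m F * ∏ i, (nodes r e s i)^(m i)))
        = MvPolynomial.coeff m F * (if (Finsupp.equivFunOnFinite.symm e) = m then
            (vv - uu) ^ (∑ i, e i) * (∏ i, ((e i).factorial : R2)) else 0) := by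
    intro m hm
    have hle : ∀ i, m i ≤ e i := by
      intro i
      have h1 : m i ≤ F.degreeOf i := by
        rw [MvPolynomial.degreeOf_eq_sup]
        exact Finset.le_sup (f := fun m => m i) hm
      exact h1.trans (hred i)
    calc ∑ s ∈ Tset r e, sgn r e s * (MvPolynomial.coeff m F * ∏ i, (nodes r e s i)^(m i))
        = MvPolynomial.coeff m F * ∑ s ∈ Tset r e, ∏ i,
            ((-1:R2)^(s i) * (((e i).choose (s i) : ℕ) : R2) * (nodes r e s i)^(m i)) := by
          rw [Finset.mul_sum]
          refine Finset.sum_congr rfl fun s _ => ?_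
          simp only [sgn]
          conv_rhs => rw [Finset.prod_mul_distrib]
          ring
      _ = MvPolynomial.coeff m F * ∏ i, ∑ si ∈ Finset.range (e i + 1),
            ((-1:R2)^si * (((e i).choose si : ℕ) : R2)
              * (-((((e i - si:ℕ):R2)*uu + (si:R2)*vv)))^(m i)) := by
          rw [Finset.prod_univ_sum]
          rfl
      _ = MvPolynomial.coeff m F * ∏ i,
            (if m i = e i then (vv - uu)^(e i) * (((e i).factorial : ℕ):R2) else 0) := by
          congr 1
          refine Finset.prod_congr rfl fun i _ => ?_
          have h := node_sum 1 (e i) (m i) (hle i)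
          simp only [one_mul] at h
          rw [← h]
          refine Finset.sum_congr rfl fun si _ => ?_
          rw [show (-((((e i - si:ℕ):R2))*uu + (si:R2)*vv))
              = (-1) * ((((e i - si:ℕ):R2))*uu + (si:R2)*vv) from by ring, mul_pow]
      _ = MvPolynomial.coeff m F * (if (Finsupp.equivFunOnFinite.symm e) = m then
            (vv - uu) ^ (∑ i, e i) * (∏ i, ((e i).factorial : R2)) else 0) := by
          congr 1
          by_cases hme : (Finsupp.equivFunOnFinite.symm e) = m
          · rw [if_pos hme]
            have hmi : ∀ i, m i = e i := by
              intro i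
              rw [← hme]
              rfl
            rw [Finset.prod_congr rfl (fun i (_ : i ∈ Finset.univ) => if_pos (hmi i))]
            rw [Finset.prod_mul_distrib, Finset.prod_pow_eq_pow_sum]
          · rw [if_neg hme]
            have : ∃ i, m i ≠ e i := by
              by_contra hall
              push_neg at hall
              exact hme (Finsupp.ext fun i => by
                simp [Finsupp.coe_equivFunOnFinite_symm, hall i])
            obtain ⟨i, hi⟩ := this
            exact Finset.prod_eq_zero (Finset.mem_univ i) (if_neg hi)
  rw [Finset.sum_congr rfl key,
    Finset.sum_eq_single (Finsupp.equivFunOnFinite.symm e)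
      (fun b _ hb => by rw [if_neg (Ne.symm hb), mul_zero])
      (fun h => by rw [MvPolynomial.notMem_support_iff.mp h, zero_mul]),
    if_pos rfl]
  ring

lemma Phi_qY (r d : ℕ) (e : Fin r → ℕ) (q : Polynomial R2) (hq : q.natDegree < d + 1) :
    Phi r e (Polynomial.aeval
        (∑ i, ((i.1 + 1 : ℕ) : MvPolynomial (Fin r) R2) * MvPolynomial.X i) q)
      = ∑ k ∈ Finset.range (d+1), ∑ p ∈ Finset.Nat.antidiagonalTuple r k,
          q.coeff k * (Nat.multinomial Finset.univ p : R2) *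
            ∏ i, ∑ s ∈ Finset.range (e i + 1),
              (-1 : R2) ^ s * ((e i).choose s : R2) * (-((i.1 + 1 : ℕ) : R2)) ^ p i *
                (((e i - s : ℕ) : R2) * uu + (s : R2) * vv) ^ p i := by
  classical
  unfold Phi
  have hev : ∀ s ∈ Tset r e,
      sgn r e s * MvPolynomial.eval (nodes r e s) (Polynomial.aeval
          (∑ i, ((i.1 + 1 : ℕ) : MvPolynomial (Fin r) R2) * MvPolynomial.X i) q)
      = ∑ k ∈ Finset.range (d+1), ∑ p ∈ Finset.Nat.antidiagonalTuple r k,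
          q.coeff k * (Nat.multinomial Finset.univ p : R2) *
            (sgn r e s * ∏ i, (((i.1+1:ℕ):R2) * nodes r e s i)^(p i)) := by
    intro s _
    have h1 : MvPolynomial.eval (nodes r e s) (Polynomial.aeval
          (∑ i, ((i.1 + 1 : ℕ) : MvPolynomial (Fin r) R2) * MvPolynomial.X i) q)
        = Polynomial.eval (∑ i, ((i.1+1:ℕ):R2) * nodes r e s i) q := by
      have h4 : ∀ (P : MvPolynomial (Fin r) R2),
          MvPolynomial.eval (nodes r e s) P = MvPolynomial.aeval (nodes r e s) P := fun P => by
        rw [MvPolynomial.aeval_def, Algebra.algebraMap_self]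
        rfl
      have h2 := Polynomial.aeval_algHom_apply (MvPolynomial.aeval (nodes r e s))
        (∑ i, ((i.1 + 1 : ℕ) : MvPolynomial (Fin r) R2) * MvPolynomial.X i) q
      have h3 : (MvPolynomial.aeval (nodes r e s))
            (∑ i, ((i.1 + 1 : ℕ) : MvPolynomial (Fin r) R2) * MvPolynomial.X i)
          = ∑ i, ((i.1+1:ℕ):R2) * nodes r e s i := by
        rw [map_sum]
        exact Finset.sum_congr rfl fun i _ => by rw [map_mul, MvPolynomial.aeval_X, map_natCast]
      rw [h4, ← h2, h3]
      exact congrFun (Polynomial.coe_aeval_eq_eval _) q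
    rw [h1, Polynomial.eval_eq_sum_range' hq, Finset.mul_sum]
    refine Finset.sum_congr rfl fun k _ => ?_
    rw [Finset.sum_pow_eq_sum_piAntidiag, Finset.piAntidiag_univ_fin_eq_antidiagonalTuple,
      Finset.mul_sum, Finset.mul_sum]
    exact Finset.sum_congr rfl fun p _ => by ring
  rw [Finset.sum_congr rfl hev, Finset.sum_comm]
  refine Finset.sum_congr rfl fun k _ => ?_
  rw [Finset.sum_comm]
  refine Finset.sum_congr rfl fun p _ => ?_
  rw [← Finset.mul_sum]
  congr 1
  calc ∑ s ∈ Tset r e, sgn r e s * ∏ i, (((i.1+1:ℕ):R2) * nodes r e s i)^(p i)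
      = ∑ s ∈ Tset r e, ∏ i, ((-1:R2)^(s i) * (((e i).choose (s i):ℕ):R2)
          * (((i.1+1:ℕ):R2) * nodes r e s i)^(p i)) := by
        refine Finset.sum_congr rfl fun s _ => ?_
        simp only [sgn]
        conv_rhs => rw [Finset.prod_mul_distrib]
    _ = ∏ i, ∑ si ∈ Finset.range (e i + 1), ((-1:R2)^si * (((e i).choose si:ℕ):R2)
          * (((i.1+1:ℕ):R2) * (-((((e i - si:ℕ):R2)*uu + (si:R2)*vv))))^(p i)) := by
        rw [Finset.prod_univ_sum]
        rfl
    _ = ∏ i, ∑ si ∈ Finset.range (e i + 1),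
          (-1 : R2) ^ si * ((e i).choose si : R2) * (-((i.1 + 1 : ℕ) : R2)) ^ p i *
            (((e i - si : ℕ) : R2) * uu + (si : R2) * vv) ^ p i := by
        refine Finset.prod_congr rfl fun i _ => Finset.sum_congr rfl fun si _ => ?_
        rw [show ((((i.1+1:ℕ)):R2) * (-((((e i - si:ℕ):R2)*uu + (si:R2)*vv))))
            = (-(((i.1+1:ℕ)):R2)) * ((((e i - si:ℕ)):R2)*uu + (si:R2)*vv) from by ring,
          mul_pow]
        ring

/-- Corollary 3.3 (the "naive" formula), with denominators cleared. -/
theorem stmt2 (r : ℕ) (hr : 1 ≤ r) (e : Fin r → ℕ) (he : ∃ i, e i ≠ 0)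
    (n d : ℕ) (hn : n = ∑ i, e i) (hd : d = ∑ i, (i.1 + 1) * e i)
    (q : Polynomial R2) (hq : Polynomial.X * q = Qp d - Polynomial.C (Cdtop d))
    (F : MvPolynomial (Fin r) R2)
    (hred : ∀ i, F.degreeOf i ≤ e i)
    (hrep : Polynomial.aeval
          (∑ i, ((i.1 + 1 : ℕ) : MvPolynomial (Fin r) R2) * MvPolynomial.X i) q - F
        ∈ Ideal.span (Set.range fun i : Fin r => Qm r (e i) i)) :
    (vv - uu) ^ n * (∏ i, ((e i).factorial : R2)) *
        MvPolynomial.coeff (Finsupp.equivFunOnFinite.symm e) F =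
      ∑ j ∈ Finset.Icc n d, ∑ p ∈ Finset.Nat.antidiagonalTuple r j,
        Ccoef d (d - j) * (Nat.multinomial Finset.univ p : R2) *
          ∏ i, ∑ s ∈ Finset.range (e i + 1),
            (-1 : R2) ^ s * ((e i).choose s : R2) * (-((i.1 + 1 : ℕ) : R2)) ^ p i *
              (((e i - s : ℕ) : R2) * uu + (s : R2) * vv) ^ p i := by
  classical
  have hqc : ∀ k, q.coeff k = (Qp d).coeff (k+1) := by
    intro k
    have h := congrArg (fun p => Polynomial.coeff p (k+1)) hq
    simpa [Polynomial.coeff_X_mul, Polynomial.coeff_C] using h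
  have hQdeg : (Qp d).natDegree ≤ d + 1 := by
    rw [Qp]
    refine le_trans (Polynomial.natDegree_prod_le _ _) (le_of_eq ?_)
    rw [Finset.sum_congr rfl fun j _ => Polynomial.natDegree_X_add_C _]
    simp
  have hqd : q.natDegree < d + 1 := by
    have : q.natDegree ≤ d := by
      rw [Polynomial.natDegree_le_iff_coeff_eq_zero]
      intro N hN
      rw [hqc N]
      exact Polynomial.coeff_eq_zero_of_natDegree_lt (lt_of_le_of_lt hQdeg (by omega))
    omega
  have hnd : n ≤ d := by
    rw [hn, hd]
    exact Finset.sum_le_sum fun i _ => Nat.le_mul_of_pos_left _ (by omega)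
  have h1 := Phi_congr r e _ F hrep
  have h2 := Phi_reduced r e F hred
  rw [← hn] at h2
  have h3 := Phi_qY r d e q hqd
  rw [← h2, ← h1, h3]
  have hsplit : ∀ f : ℕ → R2, ∑ k ∈ Finset.range (d+1), f k
      = (∑ k ∈ Finset.range n, f k) + ∑ k ∈ Finset.Icc n d, f k := by
    intro f
    rw [Finset.range_eq_Ico,
      ← Finset.sum_Ico_consecutive _ (Nat.zero_le n) (show n ≤ d+1 by omega),
      Finset.Ico_add_one_right_eq_Icc, ← Finset.range_eq_Ico]
  rw [hsplit]
  have hz : ∑ k ∈ Finset.range n, ∑ p ∈ Finset.Nat.antidiagonalTuple r k,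
      q.coeff k * (Nat.multinomial Finset.univ p : R2) *
        ∏ i, ∑ s ∈ Finset.range (e i + 1),
          (-1 : R2) ^ s * ((e i).choose s : R2) * (-((i.1 + 1 : ℕ) : R2)) ^ p i *
            (((e i - s : ℕ) : R2) * uu + (s : R2) * vv) ^ p i = 0 := by
    refine Finset.sum_eq_zero fun k hk => Finset.sum_eq_zero fun p hp => ?_
    have hkn : k < n := Finset.mem_range.mp hk
    have hps : ∑ i, p i = k := Finset.Nat.mem_antidiagonalTuple.mp hp
    have hex : ∃ i, p i < e i := by
      by_contra hall
      push_neg at hall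
      have : n ≤ k := by
        rw [hn, ← hps]
        exact Finset.sum_le_sum fun i _ => hall i
      omega
    obtain ⟨i, hpi⟩ := hex
    have hzero : (∑ s ∈ Finset.range (e i + 1),
        (-1 : R2) ^ s * ((e i).choose s : R2) * (-((i.1 + 1 : ℕ) : R2)) ^ p i *
          (((e i - s : ℕ) : R2) * uu + (s : R2) * vv) ^ p i) = 0 := by
      have h := node_sum ((i.1+1:ℕ):R2) (e i) (p i) (le_of_lt hpi)
      rw [if_neg (Nat.ne_of_lt hpi)] at h
      rw [← h]
      exact Finset.sum_congr rfl fun s _ => by ring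
    rw [Finset.prod_eq_zero (Finset.mem_univ i) hzero, mul_zero]
  rw [hz, zero_add]
  refine Finset.sum_congr rfl fun k hk => Finset.sum_congr rfl fun p _ => ?_
  have hkd : k ≤ d := (Finset.mem_Icc.mp hk).2
  rw [hqc k, Ccoef, show d + 1 - (d - k) = k + 1 from by omega]
end
end

section
/- If F ∈ R[x_1,…,x_r] is a reduced representative of q(Σ_{i=1}^r i·x_i), then (v−u)^n·(∏_{i=1}^r e_i!)·(the coefficient of ∏_{i=1}^r x_i^{e_i} in F) = Σ_{s_1=0}^{e_1} ⋯ Σ_{s_r=0}^{e_r} (−1)^{s_1+⋯+s_r}·(∏_{i=1}^r binom(e_i,s_i))·∏_{0 ≤ j ≤ d, j ≠ d − Σ_{i=1}^r i·s_i} (j·u + (d−j)·v). -/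
noncomputable section

open Finset

/-- Pascal-type rearrangement of an alternating binomial sum. -/
lemma alt_pascal {A : Type*} [CommRing A] (f : ℕ → A) (n : ℕ) :
    ∑ s ∈ range (n + 2), (-1 : A) ^ s * ((n + 1).choose s : A) * f s
      = ∑ s ∈ range (n + 1), (-1 : A) ^ s * (n.choose s : A) * (f s - f (s + 1)) := by
  have h2 : ∑ s ∈ range (n + 1 + 1), (-1 : A) ^ s * (n.choose s : A) * f s
      = (∑ s ∈ range (n + 1), (-1 : A) ^ (s + 1) * (n.choose (s + 1) : A) * f (s + 1))
        + (-1 : A) ^ 0 * (n.choose 0 : A) * f 0 :=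
    Finset.sum_range_succ' (fun s => (-1 : A) ^ s * (n.choose s : A) * f s) (n + 1)
  have h3 : ∑ s ∈ range (n + 1 + 1), (-1 : A) ^ s * (n.choose s : A) * f s
      = ∑ s ∈ range (n + 1), (-1 : A) ^ s * (n.choose s : A) * f s := by
    rw [Finset.sum_range_succ, Nat.choose_succ_self]
    simp
  have hA3 : ∑ s ∈ range (n + 1), (-1 : A) ^ (s + 1) * (n.choose (s + 1) : A) * f (s + 1)
      = (∑ s ∈ range (n + 1), (-1 : A) ^ s * (n.choose s : A) * f s) - f 0 := by
    rw [← h3, h2]; simp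
  have hL : ∑ s ∈ range (n + 2), (-1 : A) ^ s * ((n + 1).choose s : A) * f s
      = (∑ s ∈ range (n + 1), ((-1 : A) ^ (s + 1) * (n.choose s : A) * f (s + 1)
          + (-1 : A) ^ (s + 1) * (n.choose (s + 1) : A) * f (s + 1))) + f 0 := by
    rw [Finset.sum_range_succ' (fun s => (-1 : A) ^ s * ((n + 1).choose s : A) * f s) (n + 1)]
    simp only [Nat.choose_succ_succ, Nat.cast_add]
    congr 1
    · exact Finset.sum_congr rfl fun s _ => by ring
    · simp
  have hneg : ∑ s ∈ range (n + 1), (-1 : A) ^ (s + 1) * (n.choose s : A) * f (s + 1)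
      = - ∑ s ∈ range (n + 1), (-1 : A) ^ s * (n.choose s : A) * f (s + 1) := by
    rw [← Finset.sum_neg_distrib]
    exact Finset.sum_congr rfl fun s _ => by ring
  have hR : ∑ s ∈ range (n + 1), (-1 : A) ^ s * (n.choose s : A) * (f s - f (s + 1))
      = (∑ s ∈ range (n + 1), (-1 : A) ^ s * (n.choose s : A) * f s)
        - ∑ s ∈ range (n + 1), (-1 : A) ^ s * (n.choose s : A) * f (s + 1) := by
    rw [← Finset.sum_sub_distrib]
    exact Finset.sum_congr rfl fun s _ => by ring
  rw [hL, Finset.sum_add_distrib, hA3, hneg, hR]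
  ring

lemma pow_sub_pow_add {A : Type*} [CommRing A] (x h : A) (a : ℕ) :
    x ^ a - (x + h) ^ a = - ∑ j ∈ range a, x ^ j * h ^ (a - j) * (a.choose j) := by
  rw [add_pow, Finset.sum_range_succ]
  simp only [Nat.sub_self, pow_zero, Nat.choose_self, Nat.cast_one, mul_one]
  ring

/-- One-dimensional finite-difference identity. -/
lemma oneD {A : Type*} [CommRing A] (h : A) :
    ∀ (e : ℕ) (c : A) (a : ℕ), a ≤ e →
      ∑ s ∈ range (e + 1), (-1 : A) ^ s * (e.choose s : A) * (c + (s : A) * h) ^ a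
        = if a = e then (-1 : A) ^ e * (e.factorial : A) * h ^ e else 0 := by
  intro e
  induction e with
  | zero =>
    intro c a ha
    obtain rfl : a = 0 := Nat.le_zero.mp ha
    simp
  | succ e ih =>
    intro c a ha
    rw [show e + 1 + 1 = e + 2 from rfl,
      alt_pascal (fun s => (c + (s : A) * h) ^ a) e]
    have step : ∀ s ∈ range (e + 1),
        (-1 : A) ^ s * (e.choose s : A) * ((c + (s : A) * h) ^ a - (c + ((s + 1 : ℕ) : A) * h) ^ a)
          = ∑ j ∈ range a,
              ((-1 : A) ^ s * (e.choose s : A) * (c + (s : A) * h) ^ j)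
                * (-(h ^ (a - j) * (a.choose j))) := by
      intro s _
      have hx : (c + ((s + 1 : ℕ) : A) * h) = (c + (s : A) * h) + h := by push_cast; ring
      rw [hx, pow_sub_pow_add (c + (s : A) * h) h a, mul_neg, Finset.mul_sum,
        ← Finset.sum_neg_distrib]
      exact Finset.sum_congr rfl fun j _ => by ring
    rw [Finset.sum_congr rfl step, Finset.sum_comm]
    have inner : ∀ j ∈ range a,
        ∑ s ∈ range (e + 1),
            ((-1 : A) ^ s * (e.choose s : A) * (c + (s : A) * h) ^ j)
              * (-(h ^ (a - j) * (a.choose j)))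
          = (if j = e then (-1 : A) ^ e * (e.factorial : A) * h ^ e else 0)
              * (-(h ^ (a - j) * (a.choose j))) := by
      intro j hj
      rw [← Finset.sum_mul, ih c j (by
        have := Finset.mem_range.mp hj; omega)]
    rw [Finset.sum_congr rfl inner]
    by_cases hae : a = e + 1
    · subst hae
      rw [Finset.sum_eq_single e]
      · rw [if_pos rfl, if_pos rfl]
        have h1 : e + 1 - e = 1 := by omega
        rw [h1, Nat.choose_succ_self_right, Nat.factorial_succ]
        push_cast
        ring
      · intro b hb hbe
        rw [if_neg hbe, zero_mul]
      · intro habs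
        exact absurd (Finset.self_mem_range_succ e) habs
    · rw [if_neg hae]
      apply Finset.sum_eq_zero
      intro j hj
      have : j ≠ e := by
        have := Finset.mem_range.mp hj; omega
      rw [if_neg this, zero_mul]

lemma lin_ne_zero (a b : ℕ) (hab : a + b ≠ 0) :
    ((a : R2) * uu + (b : R2) * vv) ≠ 0 := by
  intro h0
  have h1 := congrArg (MvPolynomial.eval (fun j : Fin 2 => if j = 0 then (1 : ℚ) else 0)) h0
  have h2 := congrArg (MvPolynomial.eval (fun j : Fin 2 => if j = 0 then (0 : ℚ) else 1)) h0
  simp [uu, vv] at h1 h2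
  omega

set_option maxHeartbeats 2000000 in
/-- Theorem 3.4: the closed formula for the Thom polynomial of the coincident root
locus `X_λ`, `λ = (1^{e_1}⋯r^{e_r})`, with denominators cleared. -/
theorem stmt3 (r : ℕ) (hr : 1 ≤ r) (e : Fin r → ℕ) (he : ∃ i, e i ≠ 0)
    (n d : ℕ) (hn : n = ∑ i, e i) (hd : d = ∑ i, (i.1 + 1) * e i)
    (q : Polynomial R2) (hq : Polynomial.X * q = Qp d - Polynomial.C (Cdtop d))
    (F : MvPolynomial (Fin r) R2)
    (hred : ∀ i, F.degreeOf i ≤ e i)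
    (hrep : Polynomial.aeval
          (∑ i, ((i.1 + 1 : ℕ) : MvPolynomial (Fin r) R2) * MvPolynomial.X i) q - F
        ∈ Ideal.span (Set.range fun i : Fin r => Qm r (e i) i)) :
    (vv - uu) ^ n * (∏ i, ((e i).factorial : R2)) *
        MvPolynomial.coeff (Finsupp.equivFunOnFinite.symm e) F =
      ∑ s ∈ Fintype.piFinset (fun i : Fin r => Finset.range (e i + 1)),
        (-1 : R2) ^ (∑ i, s i) * (∏ i, ((e i).choose (s i) : R2)) *
          ∏ j ∈ (Finset.range (d + 1)).erase (d - ∑ i, (i.1 + 1) * s i),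
            ((j : R2) * uu + ((d - j : ℕ) : R2) * vv) := by
  classical
  obtain ⟨i₀, hi₀⟩ := he
  have hd1 : 0 < d := by
    rw [hd]
    have h1 : 0 < (i₀.1 + 1) * e i₀ := Nat.mul_pos (Nat.succ_pos _) (Nat.pos_of_ne_zero hi₀)
    exact lt_of_lt_of_le h1
      (Finset.single_le_sum (f := fun i : Fin r => (i.1 + 1) * e i)
        (fun i _ => Nat.zero_le _) (Finset.mem_univ i₀))
  set e₀ : Fin r →₀ ℕ := Finsupp.equivFunOnFinite.symm e with he₀
  have he₀c : ∀ i, e₀ i = e i := fun i => rfl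
  set P : MvPolynomial (Fin r) R2 :=
    ∑ i, ((i.1 + 1 : ℕ) : MvPolynomial (Fin r) R2) * MvPolynomial.X i with hP
  set pt : (Fin r → ℕ) → Fin r → R2 :=
    fun s i => -(((e i - s i : ℕ) : R2) * uu + ((s i : ℕ) : R2) * vv) with hpt
  set φ : (Fin r → ℕ) → MvPolynomial (Fin r) R2 →ₐ[R2] R2 :=
    fun s => MvPolynomial.aeval (pt s) with hφ
  set S := Fintype.piFinset (fun i : Fin r => Finset.range (e i + 1)) with hS
  have hmemS : ∀ s ∈ S, ∀ i, s i ≤ e i := by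
    intro s hs i
    have := Fintype.mem_piFinset.mp hs i
    simpa [Nat.lt_succ_iff] using this
  -- φ kills the generators
  have hgen : ∀ s ∈ S, ∀ i, φ s (Qm r (e i) i) = 0 := by
    intro s hs i
    have hsi := hmemS s hs i
    rw [hφ, Qm, map_prod]
    apply Finset.prod_eq_zero
      (Finset.mem_range.mpr (Nat.lt_succ_of_le (Nat.sub_le (e i) (s i))))
    rw [map_add, MvPolynomial.aeval_X, MvPolynomial.aeval_C, Nat.sub_sub_self hsi]
    rw [hpt]
    simp only [Algebra.algebraMap_self, RingHom.id_apply]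
    ring
  -- F and q(P) agree under each φ s
  have hφF : ∀ s ∈ S, φ s F = φ s (Polynomial.aeval P q) := by
    intro s hs
    obtain ⟨c, hc⟩ := Ideal.mem_span_range_iff_exists_fun.mp hrep
    have h0 : φ s (Polynomial.aeval P q - F) = 0 := by
      rw [← hc, map_sum]
      apply Finset.sum_eq_zero
      intro i _
      rw [map_mul, hgen s hs i, mul_zero]
    rw [map_sub] at h0
    exact (sub_eq_zero.mp h0).symm
  -- evaluation of q(P) under φ s
  have hqeval : ∀ s ∈ S, φ s (Polynomial.aeval P q)
      = ∏ j ∈ (Finset.range (d + 1)).erase (d - ∑ i, (i.1 + 1) * s i),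
          ((j : R2) * uu + ((d - j : ℕ) : R2) * vv) := by
    intro s hs
    set m := ∑ i, (i.1 + 1) * s i with hm
    have hmd : m ≤ d := by
      rw [hm, hd]
      exact Finset.sum_le_sum fun i _ => Nat.mul_le_mul_left _ (hmemS s hs i)
    set y : R2 := -(((d - m : ℕ) : R2) * uu + ((m : ℕ) : R2) * vv) with hy
    have cast_dm : ((d - m : ℕ) : R2) = (d : R2) - (m : R2) := by
      rw [Nat.cast_sub hmd]
    have hφP : φ s P = y := by
      rw [hφ, hP, map_sum]
      have term : ∀ i : Fin r, (MvPolynomial.aeval (pt s))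
            (((i.1 + 1 : ℕ) : MvPolynomial (Fin r) R2) * MvPolynomial.X i)
          = ((i.1 + 1 : ℕ) : R2) * ((s i : R2) * uu)
            - ((i.1 + 1 : ℕ) : R2) * ((e i : R2) * uu)
            - ((i.1 + 1 : ℕ) : R2) * ((s i : R2) * vv) := by
        intro i
        rw [map_mul, MvPolynomial.aeval_X, map_natCast, hpt]
        simp only
        rw [Nat.cast_sub (hmemS s hs i)]
        ring
      rw [Finset.sum_congr rfl fun i _ => term i]
      rw [Finset.sum_sub_distrib, Finset.sum_sub_distrib]
      have cd : ((d : ℕ) : R2) = ∑ i : Fin r, ((i.1 + 1 : ℕ) : R2) * ((e i : ℕ) : R2) := by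
        rw [hd]; push_cast; rfl
      have cm : ((m : ℕ) : R2) = ∑ i : Fin r, ((i.1 + 1 : ℕ) : R2) * ((s i : ℕ) : R2) := by
        rw [hm]; push_cast; rfl
      have e1 : ∑ i : Fin r, ((i.1 + 1 : ℕ) : R2) * ((s i : R2) * uu)
          = (∑ i : Fin r, ((i.1 + 1 : ℕ) : R2) * ((s i : ℕ) : R2)) * uu := by
        rw [Finset.sum_mul]; exact Finset.sum_congr rfl fun i _ => by ring
      have e2 : ∑ i : Fin r, ((i.1 + 1 : ℕ) : R2) * ((e i : R2) * uu)
          = (∑ i : Fin r, ((i.1 + 1 : ℕ) : R2) * ((e i : ℕ) : R2)) * uu := by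
        rw [Finset.sum_mul]; exact Finset.sum_congr rfl fun i _ => by ring
      have e3 : ∑ i : Fin r, ((i.1 + 1 : ℕ) : R2) * ((s i : R2) * vv)
          = (∑ i : Fin r, ((i.1 + 1 : ℕ) : R2) * ((s i : ℕ) : R2)) * vv := by
        rw [Finset.sum_mul]; exact Finset.sum_congr rfl fun i _ => by ring
      rw [e1, e2, e3, ← cd, ← cm, hy, cast_dm]
      ring
    have hj₀ : d - m ∈ Finset.range (d + 1) := Finset.mem_range.mpr (by omega)
    have haeval : φ s (Polynomial.aeval P q) = Polynomial.eval y q := by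
      rw [← hφP, ← Polynomial.aeval_algHom_apply, Polynomial.coe_aeval_eq_eval]
    have hQp0 : Polynomial.eval y (Qp d) = 0 := by
      rw [Qp, Polynomial.eval_prod]
      apply Finset.prod_eq_zero hj₀
      rw [Polynomial.eval_add, Polynomial.eval_X, Polynomial.eval_C, Nat.sub_sub_self hmd, hy]
      ring
    have hyq : y * Polynomial.eval y q = - Cdtop d := by
      have h := congrArg (Polynomial.eval y) hq
      rw [Polynomial.eval_mul, Polynomial.eval_X, Polynomial.eval_sub, Polynomial.eval_C,
        hQp0] at h
      linear_combination h
    have hc₀ : (((d - m : ℕ) : R2) * uu + ((m : ℕ) : R2) * vv) ≠ 0 :=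
      lin_ne_zero _ _ (by omega)
    have hmain : (((d - m : ℕ) : R2) * uu + ((m : ℕ) : R2) * vv) * Polynomial.eval y q
        = (((d - m : ℕ) : R2) * uu + ((m : ℕ) : R2) * vv)
          * ∏ j ∈ (Finset.range (d + 1)).erase (d - m),
              ((j : R2) * uu + ((d - j : ℕ) : R2) * vv) := by
      have hl : (((d - m : ℕ) : R2) * uu + ((m : ℕ) : R2) * vv) * Polynomial.eval y q
          = -(y * Polynomial.eval y q) := by rw [hy]; ring
      rw [hl, hyq, neg_neg, Cdtop, ← Finset.mul_prod_erase _ _ hj₀, Nat.sub_sub_self hmd]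
    rw [haeval]
    exact mul_left_cancel₀ hc₀ hmain
  -- the finite-difference functional computes the top coefficient
  have key : ∀ G : MvPolynomial (Fin r) R2, (∀ i, G.degreeOf i ≤ e i) →
      ∑ s ∈ S, ((-1 : R2) ^ (∑ i, s i) * (∏ i, ((e i).choose (s i) : R2))) * φ s G
        = (vv - uu) ^ n * (∏ i, ((e i).factorial : R2)) * MvPolynomial.coeff e₀ G := by
    intro G hG
    have hsupp : ∀ a ∈ G.support, ∀ i, a i ≤ e i := by
      intro a ha i
      refine le_trans ?_ (hG i)
      rw [MvPolynomial.degreeOf_eq_sup]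
      exact Finset.le_sup (f := fun m : Fin r →₀ ℕ => m i) ha
    conv_lhs =>
      rw [MvPolynomial.as_sum G]
    have expand : ∀ s ∈ S,
        ((-1 : R2) ^ (∑ i, s i) * (∏ i, ((e i).choose (s i) : R2))) *
          φ s (∑ a ∈ G.support, MvPolynomial.monomial a (MvPolynomial.coeff a G))
        = ∑ a ∈ G.support,
            ((-1 : R2) ^ (∑ i, s i) * (∏ i, ((e i).choose (s i) : R2))) *
              φ s (MvPolynomial.monomial a (MvPolynomial.coeff a G)) := by
      intro s _
      rw [map_sum, Finset.mul_sum]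
    rw [Finset.sum_congr rfl expand, Finset.sum_comm]
    have per_a : ∀ a ∈ G.support,
        ∑ s ∈ S, ((-1 : R2) ^ (∑ i, s i) * (∏ i, ((e i).choose (s i) : R2))) *
            φ s (MvPolynomial.monomial a (MvPolynomial.coeff a G))
          = if a = e₀ then
              MvPolynomial.coeff a G * ((vv - uu) ^ n * ∏ i, ((e i).factorial : R2))
            else 0 := by
      intro a ha
      have hmon : ∀ s ∈ S,
          ((-1 : R2) ^ (∑ i, s i) * (∏ i, ((e i).choose (s i) : R2))) *
              φ s (MvPolynomial.monomial a (MvPolynomial.coeff a G))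
            = MvPolynomial.coeff a G *
                ∏ i, ((-1 : R2) ^ (s i) * ((e i).choose (s i) : R2) * (pt s i) ^ (a i)) := by
        intro s _
        rw [hφ]
        simp only
        rw [MvPolynomial.aeval_monomial,
          Finsupp.prod_fintype _ _ (fun i => pow_zero (pt s i)),
          ← Finset.prod_pow_eq_pow_sum, Algebra.algebraMap_self, RingHom.id_apply]
        rw [show ∏ i, ((-1 : R2) ^ (s i) * ((e i).choose (s i) : R2) * (pt s i) ^ (a i))
            = (∏ i, (-1 : R2) ^ (s i)) * ((∏ i, ((e i).choose (s i) : R2))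
              * ∏ i, (pt s i) ^ (a i)) by
          rw [← Finset.prod_mul_distrib, ← Finset.prod_mul_distrib]
          exact Finset.prod_congr rfl fun i _ => by ring]
        ring
      rw [Finset.sum_congr rfl hmon, ← Finset.mul_sum]
      have hfactored : ∑ s ∈ S,
          ∏ i, ((-1 : R2) ^ (s i) * ((e i).choose (s i) : R2) * (pt s i) ^ (a i))
          = ∑ s ∈ S, ∏ i, ((-1 : R2) ^ (s i) * ((e i).choose (s i) : R2) *
              ((-(e i : R2) * uu) + ((s i : ℕ) : R2) * (uu - vv)) ^ (a i)) := by
        apply Finset.sum_congr rfl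
        intro s hs
        apply Finset.prod_congr rfl
        intro i _
        rw [hpt]
        simp only
        rw [Nat.cast_sub (hmemS s hs i)]
        congr 2
        ring
      have hprodsum := Finset.prod_univ_sum (fun i : Fin r => range (e i + 1))
        (fun (i : Fin r) (t : ℕ) => (-1 : R2) ^ t * ((e i).choose t : R2) *
          ((-(e i : R2) * uu) + ((t : ℕ) : R2) * (uu - vv)) ^ (a i))
      rw [hfactored, hS, ← hprodsum]
      have factor : ∀ i : Fin r,
          (∑ t ∈ range (e i + 1), ((-1 : R2) ^ t * ((e i).choose t : R2) *
              ((-(e i : R2) * uu) + ((t : ℕ) : R2) * (uu - vv)) ^ (a i)))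
            = if a i = e i then ((e i).factorial : R2) * (vv - uu) ^ (e i) else 0 := by
        intro i
        rw [oneD (uu - vv) (e i) (-(e i : R2) * uu) (a i) (hsupp a ha i)]
        split_ifs with hcase
        · have hnp : (-1 : R2) ^ (e i) * (uu - vv) ^ (e i) = (vv - uu) ^ (e i) := by
            rw [← neg_pow, neg_sub]
          linear_combination ((e i).factorial : R2) * hnp
        · rfl
      rw [Finset.prod_congr rfl fun i _ => factor i]
      by_cases hae : a = e₀
      · rw [if_pos hae]
        have hai : ∀ i, a i = e i := fun i => by rw [hae]; exact he₀c i
        rw [Finset.prod_congr rfl fun i (_ : i ∈ Finset.univ) => if_pos (hai i)]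
        rw [Finset.prod_mul_distrib, Finset.prod_pow_eq_pow_sum, ← hn]
        ring
      · rw [if_neg hae]
        obtain ⟨i, hi⟩ : ∃ i, a i ≠ e i := by
          by_contra hcon
          push_neg at hcon
          exact hae (Finsupp.ext fun i => by rw [hcon i, ← he₀c i])
        have hz : (if a i = e i then ((e i).factorial : R2) * (vv - uu) ^ (e i) else 0) = 0 :=
          if_neg hi
        rw [Finset.prod_eq_zero (Finset.mem_univ i) hz, mul_zero]
    rw [Finset.sum_congr rfl per_a]
    by_cases hmem : e₀ ∈ G.support
    · rw [Finset.sum_eq_single_of_mem e₀ hmem (fun b _ hb => if_neg hb), if_pos rfl]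
      ring
    · rw [Finset.sum_eq_zero (fun a ha => if_neg (fun h : a = e₀ => hmem (h ▸ ha))),
        MvPolynomial.notMem_support_iff.mp hmem, mul_zero]
  calc (vv - uu) ^ n * (∏ i, ((e i).factorial : R2)) * MvPolynomial.coeff e₀ F
      = ∑ s ∈ S, ((-1 : R2) ^ (∑ i, s i) * (∏ i, ((e i).choose (s i) : R2))) * φ s F :=
        (key F hred).symm
    _ = ∑ s ∈ S, ((-1 : R2) ^ (∑ i, s i) * (∏ i, ((e i).choose (s i) : R2))) *
          φ s (Polynomial.aeval P q) :=
        Finset.sum_congr rfl fun s hs => by rw [hφF s hs]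
    _ = ∑ s ∈ S, (-1 : R2) ^ (∑ i, s i) * (∏ i, ((e i).choose (s i) : R2)) *
          ∏ j ∈ (Finset.range (d + 1)).erase (d - ∑ i, (i.1 + 1) * s i),
            ((j : R2) * uu + ((d - j : ℕ) : R2) * vv) :=
        Finset.sum_congr rfl fun s hs => by rw [hqeval s hs]
end
end

section
/- Let e ≥ 1 and j ≥ 2 be integers and set d := e + j. Suppose F ∈ R[x,z] satisfies deg_x F ≤ e, deg_z F ≤ 1, and q(x + j·z) − F lies in the ideal generated by Q_e(x) and Q_1(z). Then the coefficient of the monomial x^e·z in F equals ∂(∏_{l=0}^{j−1} (l·v + (d−l)·u)). -/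
noncomputable section

namespace S6
open Polynomial Finset

def gam (d m : ℕ) : R2 := (m : R2) * uu + ((d - m : ℕ) : R2) * vv

lemma ne_zero_of_eval (P : R2) (f : Fin 2 → ℚ) (h : MvPolynomial.eval f P ≠ 0) : P ≠ 0 := by
  intro h0; apply h; rw [h0]; simp

lemma gam_ne_zero {d m : ℕ} (h : m ≠ 0 ∨ d - m ≠ 0) : gam d m ≠ 0 := by
  apply ne_zero_of_eval _ (fun _ => 1)
  simp [gam, uu, vv]
  rcases h with h | h <;> positivity

lemma usubv_ne : uu - vv ≠ 0 := by
  apply ne_zero_of_eval _ (fun i => if i = 0 then 1 else 0)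
  simp [uu, vv]

def phi (w : R2) : MvPolynomial (Fin 2) R2 →ₐ[R2] Polynomial R2 :=
  MvPolynomial.aeval ![Polynomial.X, Polynomial.C w]

lemma phi_monomial (w : R2) (m : Fin 2 →₀ ℕ) (c : R2) :
    phi w (MvPolynomial.monomial m c) = Polynomial.monomial (m 0) (c * w ^ (m 1)) := by
  rw [phi, MvPolynomial.aeval_monomial, Finsupp.prod_fintype _ _ (fun i => pow_zero _),
    Fin.prod_univ_two]
  simp only [Matrix.cons_val_zero, Matrix.cons_val_one, Matrix.head_cons]
  rw [Polynomial.algebraMap_eq, ← map_pow, ← Polynomial.C_mul_X_pow_eq_monomial,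
    Polynomial.C_mul]
  ring

lemma natDegree_phi_le (w : R2) (F : MvPolynomial (Fin 2) R2) :
    (phi w F).natDegree ≤ F.degreeOf 0 := by
  conv_lhs => rw [MvPolynomial.as_sum F]
  rw [map_sum]
  refine Polynomial.natDegree_sum_le_of_forall_le _ _ fun m hm => ?_
  rw [phi_monomial]
  refine (Polynomial.natDegree_monomial_le _).trans ?_
  have : m 0 ≤ F.degreeOf 0 := by
    rw [MvPolynomial.degreeOf_eq_sup]; exact Finset.le_sup (f := fun m => m 0) hm
  exact this

lemma coeff_phi (w : R2) (F : MvPolynomial (Fin 2) R2) (hz : F.degreeOf 1 ≤ 1) (n : ℕ) :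
    (phi w F).coeff n =
      F.coeff (Finsupp.single 0 n) + w * F.coeff (Finsupp.single 0 n + Finsupp.single 1 1) := by
  classical
  set m0 : Fin 2 →₀ ℕ := Finsupp.single 0 n with hm0
  set m1 : Fin 2 →₀ ℕ := Finsupp.single 0 n + Finsupp.single 1 1 with hm1
  have hm00 : m0 0 = n := by simp [hm0]
  have hm01 : m0 1 = 0 := by simp [hm0]
  have hm10 : m1 0 = n := by simp [hm1]
  have hm11 : m1 1 = 1 := by simp [hm1]
  have hne : m0 ≠ m1 := by
    intro h; have := congrArg (fun g => g 1) h; simp [hm01, hm11] at this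
  have key : (phi w F).coeff n
      = ∑ m ∈ F.support, (if m 0 = n then MvPolynomial.coeff m F * w ^ (m 1) else 0) := by
    conv_lhs => rw [MvPolynomial.as_sum F]
    rw [map_sum, Polynomial.finset_sum_coeff]
    exact Finset.sum_congr rfl fun m _ => by rw [phi_monomial, Polynomial.coeff_monomial]
  rw [key]
  have hp : ∀ m ∈ F.support,
      (if m 0 = n then MvPolynomial.coeff m F * w ^ (m 1) else 0) ≠ 0 → (m = m0 ∨ m = m1) := by
    intro m hm hne'
    by_cases h0 : m 0 = n
    · have h1' : m 1 ≤ F.degreeOf 1 := by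
        rw [MvPolynomial.degreeOf_eq_sup]; exact Finset.le_sup (f := fun m => m 1) hm
      have h1 : m 1 ≤ 1 := le_trans h1' hz
      interval_cases h : m 1
      · left; ext i; fin_cases i <;> simp [h0, h, hm00, hm01]
      · right; ext i; fin_cases i <;> simp [h0, h, hm10, hm11]
    · simp [h0] at hne'
  rw [← Finset.sum_filter_of_ne hp]
  have hsub : F.support.filter (fun m => m = m0 ∨ m = m1) ⊆ {m0, m1} := by
    intro m hm; rw [Finset.mem_filter] at hm
    rcases hm.2 with h | h <;> simp [h]
  rw [Finset.sum_subset hsub]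
  · rw [Finset.sum_pair hne]
    simp [hm00, hm01, hm10, hm11, mul_comm]
  · intro m hm hnm
    have : m ∉ F.support := by
      intro hs; exact hnm (Finset.mem_filter.mpr ⟨hs, by simpa using hm⟩)
    rw [MvPolynomial.notMem_support_iff] at this
    split <;> simp [this]

lemma phi_Qm0 (w : R2) (k : ℕ) : phi w (Qm 2 k 0) = Qp k := by
  rw [Qm, Qp, map_prod]
  refine Finset.prod_congr rfl fun i _ => ?_
  rw [map_add]
  simp [phi, Polynomial.algebraMap_eq]

lemma phi_Qm1_u : phi (-uu) (Qm 2 1 1) = 0 := by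
  rw [Qm, Finset.prod_range_succ, map_mul]
  have : phi (-uu) (MvPolynomial.X 1 + MvPolynomial.C ((1 : ℕ) * uu + ((1 - 1 : ℕ) : R2) * vv))
      = 0 := by
    rw [map_add]
    simp [phi, Polynomial.algebraMap_eq, ← Polynomial.C_add]
  rw [this, mul_zero]

lemma phi_Qm1_v : phi (-vv) (Qm 2 1 1) = 0 := by
  rw [Qm, Finset.prod_range_succ, Finset.prod_range_one, map_mul]
  have : phi (-vv) (MvPolynomial.X 1 + MvPolynomial.C ((0 : ℕ) * uu + ((1 - 0 : ℕ) : R2) * vv))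
      = 0 := by
    rw [map_add]
    simp [phi, Polynomial.algebraMap_eq, ← Polynomial.C_add]
  rw [this, zero_mul]

lemma monic_Qp (k : ℕ) : (Qp k).Monic :=
  Polynomial.monic_prod_of_monic _ _ fun i _ => Polynomial.monic_X_add_C _

lemma natDegree_Qp (k : ℕ) : (Qp k).natDegree = k + 1 := by
  rw [Qp, Polynomial.natDegree_prod_of_monic _ _ fun i _ => Polynomial.monic_X_add_C _,
    Finset.sum_congr rfl fun i _ => Polynomial.natDegree_X_add_C _]
  simp

lemma aeval_Qp (s : Polynomial R2) (k : ℕ) :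
    Polynomial.aeval s (Qp k)
      = ∏ i ∈ Finset.range (k + 1), (s + Polynomial.C ((i : R2) * uu + ((k - i : ℕ) : R2) * vv)) := by
  rw [Qp, map_prod]
  refine Finset.prod_congr rfl fun i _ => ?_
  rw [map_add, Polynomial.aeval_X, Polynomial.aeval_C, Polynomial.algebraMap_eq]

lemma eval_Qp (t : R2) (k : ℕ) :
    Polynomial.eval t (Qp k)
      = ∏ i ∈ Finset.range (k + 1), (t + ((i : R2) * uu + ((k - i : ℕ) : R2) * vv)) := by
  rw [Qp, Polynomial.eval_prod]
  simp

section main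
variable {e j d : ℕ} (he : 1 ≤ e) (hj : 2 ≤ j) (hd : d = e + j)
include hd

lemma fac_u :
    Polynomial.aeval (Polynomial.X - Polynomial.C ((j : R2) * uu)) (Qp d)
      = (∏ m ∈ Finset.range j,
          (Polynomial.X - Polynomial.C ((j : R2) * uu) + Polynomial.C (gam d m))) * Qp e := by
  rw [aeval_Qp, show d + 1 = j + (e + 1) by omega, Finset.prod_range_add]
  congr 1
  · rw [Qp]
    refine Finset.prod_congr rfl fun i _ => ?_
    have h1 : d - (j + i) = e - i := by omega
    have h2 : Polynomial.C (((j + i : ℕ) : R2) * uu + ((d - (j + i) : ℕ) : R2) * vv)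
        - Polynomial.C ((j : R2) * uu)
        = Polynomial.C ((i : R2) * uu + ((e - i : ℕ) : R2) * vv) := by
      rw [← Polynomial.C_sub]
      congr 1
      rw [h1]
      push_cast
      ring
    rw [← h2]
    ring

lemma fac_v :
    Polynomial.aeval (Polynomial.X - Polynomial.C ((j : R2) * vv)) (Qp d)
      = Qp e * ∏ i ∈ Finset.range j,
          (Polynomial.X - Polynomial.C ((j : R2) * vv) + Polynomial.C (gam d (e + 1 + i))) := by
  rw [aeval_Qp, show d + 1 = (e + 1) + j by omega, Finset.prod_range_add]
  congr 1
  · rw [Qp]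
    refine Finset.prod_congr rfl fun i hi => ?_
    have hi' : i ≤ e := by simpa [Nat.lt_succ_iff] using hi
    have h1 : d - i = (e - i) + j := by omega
    have h2 : Polynomial.C ((i : R2) * uu + ((d - i : ℕ) : R2) * vv)
        - Polynomial.C ((j : R2) * vv)
        = Polynomial.C ((i : R2) * uu + ((e - i : ℕ) : R2) * vv) := by
      rw [← Polynomial.C_sub]
      congr 1
      rw [h1]
      push_cast
      ring
    rw [← h2]
    ring

lemma evQu : Polynomial.eval ((j : R2) * uu) (Qp e) = ∏ i ∈ Finset.range (e + 1), gam d (j + i) := by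
  rw [eval_Qp]
  refine Finset.prod_congr rfl fun i _ => ?_
  rw [gam, show d - (j + i) = e - i by omega]
  push_cast
  ring

lemma evQv : Polynomial.eval ((j : R2) * vv) (Qp e) = ∏ i ∈ Finset.range (e + 1), gam d i := by
  rw [eval_Qp]
  refine Finset.prod_congr rfl fun i hi => ?_
  have hi' : i ≤ e := by simpa [Nat.lt_succ_iff] using hi
  rw [gam, show d - i = (e - i) + j by omega]
  push_cast
  ring

lemma CdL : Cdtop d = (∏ m ∈ Finset.range j, gam d m) * ∏ i ∈ Finset.range (e + 1), gam d (j + i) := by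
  rw [Cdtop, show d + 1 = j + (e + 1) by omega, Finset.prod_range_add]
  rfl

lemma CdR : Cdtop d = (∏ i ∈ Finset.range (e + 1), gam d i) * ∏ i ∈ Finset.range j, gam d (e + 1 + i) := by
  rw [Cdtop, show d + 1 = (e + 1) + j by omega, Finset.prod_range_add]
  rfl

omit hd in
lemma swap_gam {m : ℕ} (hm : m ≤ d) :
    swapUV (gam d m) = (m : R2) * vv + ((d - m : ℕ) : R2) * uu := by
  simp [swapUV, gam, uu, vv, Equiv.swap_apply_left, Equiv.swap_apply_right]

lemma swapPl (hj2 : j ≤ d) :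
    swapUV (∏ m ∈ Finset.range j, gam d m) = ∏ i ∈ Finset.range j, gam d (e + 1 + i) := by
  rw [show swapUV = ⇑(MvPolynomial.rename (Equiv.swap (0 : Fin 2) 1)) from rfl, map_prod]
  have step1 : ∀ m ∈ Finset.range j,
      MvPolynomial.rename (Equiv.swap (0 : Fin 2) 1) (gam d m) = gam d (d - m) := by
    intro m hm
    have hm' : m < j := Finset.mem_range.mp hm
    rw [show MvPolynomial.rename (Equiv.swap (0 : Fin 2) 1) (gam d m) = swapUV (gam d m) from rfl,
      swap_gam (by omega), gam, show d - (d - m) = m by omega]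
    ring
  rw [Finset.prod_congr rfl step1]
  have : ∀ m ∈ Finset.range j, gam d (d - m) = gam d (e + 1 + (j - 1 - m)) := by
    intro m hm
    have hm' : m < j := Finset.mem_range.mp hm
    congr 1
    omega
  rw [Finset.prod_congr rfl this]
  exact Finset.prod_range_reflect (fun i => gam d (e + 1 + i)) j

omit hd in
lemma swap_swapUV (P : R2) : swapUV (swapUV P) = P := by
  rw [swapUV, swapUV, MvPolynomial.rename_rename]
  have : (⇑(Equiv.swap (0 : Fin 2) 1) ∘ ⇑(Equiv.swap (0 : Fin 2) 1)) = id :=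
    funext fun x => Equiv.swap_apply_self _ _ _
  rw [this, MvPolynomial.rename_id, AlgHom.id_apply]

end main
end S6

open Polynomial Finset in
set_option maxHeartbeats 1000000 in
/-- Example 3.7(1) (Kirwan's formula): the Thom polynomial of `λ = (1^e, j)`, `d = e + j`,
is the divided difference `∂(∏_{l=0}^{j−1} (l·v + (d−l)·u))`.
Variables: `x = X 0`, `z = X 1` in `R[x,z]`. -/
theorem stmt6 (e j : ℕ) (he : 1 ≤ e) (hj : 2 ≤ j) (d : ℕ) (hd : d = e + j)
    (q : Polynomial R2) (hq : Polynomial.X * q = Qp d - Polynomial.C (Cdtop d))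
    (F : MvPolynomial (Fin 2) R2)
    (hx : F.degreeOf 0 ≤ e) (hz : F.degreeOf 1 ≤ 1)
    (hrep : Polynomial.aeval
          (MvPolynomial.X 0 + ((j : ℕ) : MvPolynomial (Fin 2) R2) * MvPolynomial.X 1) q - F
        ∈ Ideal.span {Qm 2 e 0, Qm 2 1 1})
    (D : R2)
    (hD : (uu - vv) * D =
        (∏ l ∈ Finset.range j, ((l : R2) * vv + ((d - l : ℕ) : R2) * uu)) -
          swapUV (∏ l ∈ Finset.range j, ((l : R2) * vv + ((d - l : ℕ) : R2) * uu))) :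
    MvPolynomial.coeff (Finsupp.single (0 : Fin 2) e + Finsupp.single 1 1) F = D := by
  classical
  obtain ⟨a, b, hab⟩ := Ideal.mem_span_pair.mp hrep
  -- abbreviations (definitional, so `ring` can see through nothing: we write terms fully)
  have hXzu : S6.phi (-uu) (MvPolynomial.X 0
        + ((j : ℕ) : MvPolynomial (Fin 2) R2) * MvPolynomial.X 1)
      = Polynomial.X - Polynomial.C ((j : R2) * uu) := by
    rw [map_add, map_mul, map_natCast]
    simp only [S6.phi, MvPolynomial.aeval_X, Matrix.cons_val_zero, Matrix.cons_val_one,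
      Matrix.head_cons]
    rw [← Polynomial.C_eq_natCast, ← Polynomial.C_mul, sub_eq_add_neg, ← Polynomial.C_neg]
    ring_nf
  have hXzv : S6.phi (-vv) (MvPolynomial.X 0
        + ((j : ℕ) : MvPolynomial (Fin 2) R2) * MvPolynomial.X 1)
      = Polynomial.X - Polynomial.C ((j : R2) * vv) := by
    rw [map_add, map_mul, map_natCast]
    simp only [S6.phi, MvPolynomial.aeval_X, Matrix.cons_val_zero, Matrix.cons_val_one,
      Matrix.head_cons]
    rw [← Polynomial.C_eq_natCast, ← Polynomial.C_mul, sub_eq_add_neg, ← Polynomial.C_neg]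
    ring_nf
  -- divisibility after evaluation z ↦ -u
  have hu : Qp e ∣ Polynomial.aeval (Polynomial.X - Polynomial.C ((j : R2) * uu)) q
      - S6.phi (-uu) F := by
    have habu := congrArg (S6.phi (-uu)) hab
    rw [map_add, map_mul, map_mul, map_sub, S6.phi_Qm0, S6.phi_Qm1_u, mul_zero, add_zero,
      ← Polynomial.aeval_algHom_apply, hXzu] at habu
    exact ⟨S6.phi (-uu) a, habu.symm.trans (mul_comm _ _)⟩
  have hv : Qp e ∣ Polynomial.aeval (Polynomial.X - Polynomial.C ((j : R2) * vv)) q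
      - S6.phi (-vv) F := by
    have habv := congrArg (S6.phi (-vv)) hab
    rw [map_add, map_mul, map_mul, map_sub, S6.phi_Qm0, S6.phi_Qm1_v, mul_zero, add_zero,
      ← Polynomial.aeval_algHom_apply, hXzv] at habv
    exact ⟨S6.phi (-vv) a, habv.symm.trans (mul_comm _ _)⟩
  -- key congruences
  have key_u : Qp e ∣ (Polynomial.X - Polynomial.C ((j : R2) * uu)) * S6.phi (-uu) F
      + Polynomial.C (Cdtop d) := by
    have e1 : (Polynomial.X - Polynomial.C ((j : R2) * uu))
          * Polynomial.aeval (Polynomial.X - Polynomial.C ((j : R2) * uu)) q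
        = Polynomial.aeval (Polynomial.X - Polynomial.C ((j : R2) * uu)) (Qp d)
          - Polynomial.C (Cdtop d) := by
      have := congrArg (Polynomial.aeval (Polynomial.X - Polynomial.C ((j : R2) * uu))) hq
      rwa [map_mul, map_sub, Polynomial.aeval_X, Polynomial.aeval_C,
        Polynomial.algebraMap_eq] at this
    have e2 : Qp e ∣ Polynomial.aeval (Polynomial.X - Polynomial.C ((j : R2) * uu)) (Qp d) :=
      ⟨∏ m ∈ Finset.range j,
        (Polynomial.X - Polynomial.C ((j : R2) * uu) + Polynomial.C (S6.gam d m)),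
        by rw [S6.fac_u hd]; ring⟩
    have e3 : Qp e ∣ (Polynomial.X - Polynomial.C ((j : R2) * uu))
        * (Polynomial.aeval (Polynomial.X - Polynomial.C ((j : R2) * uu)) q - S6.phi (-uu) F) :=
      hu.mul_left _
    have e4 : (Polynomial.X - Polynomial.C ((j : R2) * uu)) * S6.phi (-uu) F
        + Polynomial.C (Cdtop d)
        = Polynomial.aeval (Polynomial.X - Polynomial.C ((j : R2) * uu)) (Qp d)
          - (Polynomial.X - Polynomial.C ((j : R2) * uu))
            * (Polynomial.aeval (Polynomial.X - Polynomial.C ((j : R2) * uu)) q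
              - S6.phi (-uu) F) := by
      linear_combination e1
    rw [e4]
    exact dvd_sub e2 e3
  have key_v : Qp e ∣ (Polynomial.X - Polynomial.C ((j : R2) * vv)) * S6.phi (-vv) F
      + Polynomial.C (Cdtop d) := by
    have e1 : (Polynomial.X - Polynomial.C ((j : R2) * vv))
          * Polynomial.aeval (Polynomial.X - Polynomial.C ((j : R2) * vv)) q
        = Polynomial.aeval (Polynomial.X - Polynomial.C ((j : R2) * vv)) (Qp d)
          - Polynomial.C (Cdtop d) := by
      have := congrArg (Polynomial.aeval (Polynomial.X - Polynomial.C ((j : R2) * vv))) hq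
      rwa [map_mul, map_sub, Polynomial.aeval_X, Polynomial.aeval_C,
        Polynomial.algebraMap_eq] at this
    have e2 : Qp e ∣ Polynomial.aeval (Polynomial.X - Polynomial.C ((j : R2) * vv)) (Qp d) :=
      ⟨∏ i ∈ Finset.range j,
        (Polynomial.X - Polynomial.C ((j : R2) * vv) + Polynomial.C (S6.gam d (e + 1 + i))),
        by rw [S6.fac_v hd]⟩
    have e3 : Qp e ∣ (Polynomial.X - Polynomial.C ((j : R2) * vv))
        * (Polynomial.aeval (Polynomial.X - Polynomial.C ((j : R2) * vv)) q - S6.phi (-vv) F) :=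
      hv.mul_left _
    have e4 : (Polynomial.X - Polynomial.C ((j : R2) * vv)) * S6.phi (-vv) F
        + Polynomial.C (Cdtop d)
        = Polynomial.aeval (Polynomial.X - Polynomial.C ((j : R2) * vv)) (Qp d)
          - (Polynomial.X - Polynomial.C ((j : R2) * vv))
            * (Polynomial.aeval (Polynomial.X - Polynomial.C ((j : R2) * vv)) q
              - S6.phi (-vv) F) := by
      linear_combination e1
    rw [e4]
    exact dvd_sub e2 e3
  -- the combined polynomial L
  have keyL : Qp e ∣ (Polynomial.X - Polynomial.C ((j : R2) * uu))
        * (Polynomial.X - Polynomial.C ((j : R2) * vv))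
        * (S6.phi (-uu) F - S6.phi (-vv) F)
      + Polynomial.C (Cdtop d * ((j : R2) * (uu - vv))) := by
    have hsvsu : Polynomial.C ((j : R2) * (uu - vv))
        = (Polynomial.X - Polynomial.C ((j : R2) * vv))
          - (Polynomial.X - Polynomial.C ((j : R2) * uu)) := by
      rw [show ((j : R2) * (uu - vv)) = (j : R2) * uu - (j : R2) * vv by ring, Polynomial.C_sub]
      ring
    have hL : (Polynomial.X - Polynomial.C ((j : R2) * uu))
          * (Polynomial.X - Polynomial.C ((j : R2) * vv))
          * (S6.phi (-uu) F - S6.phi (-vv) F)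
        + Polynomial.C (Cdtop d * ((j : R2) * (uu - vv)))
        = (Polynomial.X - Polynomial.C ((j : R2) * vv))
            * ((Polynomial.X - Polynomial.C ((j : R2) * uu)) * S6.phi (-uu) F
              + Polynomial.C (Cdtop d))
          - (Polynomial.X - Polynomial.C ((j : R2) * uu))
            * ((Polynomial.X - Polynomial.C ((j : R2) * vv)) * S6.phi (-vv) F
              + Polynomial.C (Cdtop d)) := by
      have hCc : Polynomial.C (Cdtop d * ((j : R2) * (uu - vv)))
          = Polynomial.C (Cdtop d) * Polynomial.C ((j : R2) * (uu - vv)) := map_mul _ _ _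
      linear_combination hCc + Polynomial.C (Cdtop d) * hsvsu
    rw [hL]
    exact dvd_sub (key_u.mul_left _) (key_v.mul_left _)
  obtain ⟨h, hh⟩ := keyL
  -- degree bounds
  have hQe0 : Qp e ≠ 0 := (S6.monic_Qp e).ne_zero
  have hAu : (S6.phi (-uu) F).natDegree ≤ e := le_trans (S6.natDegree_phi_le _ _) hx
  have hAv : (S6.phi (-vv) F).natDegree ≤ e := le_trans (S6.natDegree_phi_le _ _) hx
  have hBp : (S6.phi (-uu) F - S6.phi (-vv) F).natDegree ≤ e :=
    le_trans (Polynomial.natDegree_sub_le _ _) (max_le hAu hAv)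
  have hsu1 : (Polynomial.X - Polynomial.C ((j : R2) * uu)).natDegree = 1 :=
    Polynomial.natDegree_X_sub_C _
  have hsv1 : (Polynomial.X - Polynomial.C ((j : R2) * vv)).natDegree = 1 :=
    Polynomial.natDegree_X_sub_C _
  have hLdeg : ((Polynomial.X - Polynomial.C ((j : R2) * uu))
        * (Polynomial.X - Polynomial.C ((j : R2) * vv))
        * (S6.phi (-uu) F - S6.phi (-vv) F)
      + Polynomial.C (Cdtop d * ((j : R2) * (uu - vv)))).natDegree ≤ e + 2 := by
    refine le_trans (Polynomial.natDegree_add_le _ _) (max_le ?_ ?_)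
    · refine le_trans Polynomial.natDegree_mul_le ?_
      have h12 : ((Polynomial.X - Polynomial.C ((j : R2) * uu))
          * (Polynomial.X - Polynomial.C ((j : R2) * vv))).natDegree ≤ 2 := by
        refine le_trans Polynomial.natDegree_mul_le ?_
        rw [hsu1, hsv1]
      omega
    · rw [Polynomial.natDegree_C]
      omega
  have hhdeg : h.natDegree ≤ 1 := by
    by_cases h0 : h = 0
    · simp [h0]
    · have hmul : (Qp e * h).natDegree = (e + 1) + h.natDegree := by
        rw [Polynomial.natDegree_mul hQe0 h0, S6.natDegree_Qp]
      rw [← hh] at hmul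
      omega
  -- coefficient at e+2
  have hBp1 : (S6.phi (-uu) F - S6.phi (-vv) F).coeff (e + 1) = 0 :=
    Polynomial.coeff_eq_zero_of_natDegree_lt (lt_of_le_of_lt hBp (by omega))
  have hBp2 : (S6.phi (-uu) F - S6.phi (-vv) F).coeff (e + 2) = 0 :=
    Polynomial.coeff_eq_zero_of_natDegree_lt (lt_of_le_of_lt hBp (by omega))
  have hcL : ((Polynomial.X - Polynomial.C ((j : R2) * uu))
        * (Polynomial.X - Polynomial.C ((j : R2) * vv))
        * (S6.phi (-uu) F - S6.phi (-vv) F)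
      + Polynomial.C (Cdtop d * ((j : R2) * (uu - vv)))).coeff (e + 2)
      = (S6.phi (-uu) F - S6.phi (-vv) F).coeff e := by
    have expand : (Polynomial.X - Polynomial.C ((j : R2) * uu))
          * (Polynomial.X - Polynomial.C ((j : R2) * vv))
          * (S6.phi (-uu) F - S6.phi (-vv) F)
        = (S6.phi (-uu) F - S6.phi (-vv) F) * Polynomial.X ^ 2
          - Polynomial.C ((j : R2) * uu + (j : R2) * vv)
            * ((S6.phi (-uu) F - S6.phi (-vv) F) * Polynomial.X)
          + Polynomial.C ((j : R2) * uu * ((j : R2) * vv))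
            * (S6.phi (-uu) F - S6.phi (-vv) F) := by
      simp only [Polynomial.C_add, Polynomial.C_mul]
      ring
    have c1 : ((S6.phi (-uu) F - S6.phi (-vv) F) * Polynomial.X ^ 2).coeff (e + 2)
        = (S6.phi (-uu) F - S6.phi (-vv) F).coeff e := Polynomial.coeff_mul_X_pow _ 2 e
    have c2 : ((S6.phi (-uu) F - S6.phi (-vv) F) * Polynomial.X).coeff (e + 2)
        = (S6.phi (-uu) F - S6.phi (-vv) F).coeff (e + 1) := by
      rw [show e + 2 = (e + 1) + 1 from rfl, Polynomial.coeff_mul_X]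
    rw [Polynomial.coeff_add, expand, Polynomial.coeff_add, Polynomial.coeff_sub, c1,
      Polynomial.coeff_C_mul, c2, hBp1, Polynomial.coeff_C_mul, hBp2, Polynomial.coeff_C]
    simp
  have hcR : (Qp e * h).coeff (e + 2) = h.coeff 1 := by
    conv_lhs => rw [Polynomial.eq_X_add_C_of_natDegree_le_one hhdeg]
    have expand : Qp e * (Polynomial.C (h.coeff 1) * Polynomial.X + Polynomial.C (h.coeff 0))
        = Polynomial.C (h.coeff 1) * (Qp e * Polynomial.X) + Polynomial.C (h.coeff 0) * Qp e := by
      ring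
    have cQ1 : (Qp e * Polynomial.X).coeff (e + 2) = 1 := by
      rw [show e + 2 = (e + 1) + 1 from rfl, Polynomial.coeff_mul_X]
      have := (S6.monic_Qp e).coeff_natDegree
      rwa [S6.natDegree_Qp] at this
    have cQ2 : (Qp e).coeff (e + 2) = 0 :=
      Polynomial.coeff_eq_zero_of_natDegree_lt (by rw [S6.natDegree_Qp]; omega)
    rw [expand, Polynomial.coeff_add, Polynomial.coeff_C_mul, cQ1, Polynomial.coeff_C_mul, cQ2]
    ring
  have hve : (vv - uu) * MvPolynomial.coeff
        (Finsupp.single (0 : Fin 2) e + Finsupp.single 1 1) F = h.coeff 1 := by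
    have hBpe : (S6.phi (-uu) F - S6.phi (-vv) F).coeff e
        = (vv - uu) * MvPolynomial.coeff
            (Finsupp.single (0 : Fin 2) e + Finsupp.single 1 1) F := by
      rw [Polynomial.coeff_sub, S6.coeff_phi _ _ hz, S6.coeff_phi _ _ hz]
      ring
    rw [← hBpe, ← hcL, hh, hcR]
  -- evaluation of h
  have hev_h : ∀ t : R2, Polynomial.eval t h = h.coeff 1 * t + h.coeff 0 := by
    intro t
    conv_lhs => rw [Polynomial.eq_X_add_C_of_natDegree_le_one hhdeg]
    simp
  -- evaluation at j*u
  have equ : Cdtop d * ((j : R2) * (uu - vv))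
      = (∏ i ∈ Finset.range (e + 1), S6.gam d (j + i))
        * (h.coeff 1 * ((j : R2) * uu) + h.coeff 0) := by
    have := congrArg (Polynomial.eval ((j : R2) * uu)) hh
    simp only [Polynomial.eval_add, Polynomial.eval_mul, Polynomial.eval_sub,
      Polynomial.eval_X, Polynomial.eval_C, sub_self, zero_mul, mul_zero, zero_add] at this
    rwa [S6.evQu hd, hev_h] at this
  have eqv : Cdtop d * ((j : R2) * (uu - vv))
      = (∏ i ∈ Finset.range (e + 1), S6.gam d i)
        * (h.coeff 1 * ((j : R2) * vv) + h.coeff 0) := by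
    have := congrArg (Polynomial.eval ((j : R2) * vv)) hh
    simp only [Polynomial.eval_add, Polynomial.eval_mul, Polynomial.eval_sub,
      Polynomial.eval_X, Polynomial.eval_C, sub_self, zero_mul, mul_zero, zero_add] at this
    rwa [S6.evQv hd, hev_h] at this
  -- cancel the nonzero products
  have hQu_ne : (∏ i ∈ Finset.range (e + 1), S6.gam d (j + i)) ≠ 0 :=
    Finset.prod_ne_zero_iff.mpr fun i _ => S6.gam_ne_zero (Or.inl (by omega))
  have hQv_ne : (∏ i ∈ Finset.range (e + 1), S6.gam d i) ≠ 0 :=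
    Finset.prod_ne_zero_iff.mpr fun i _ => S6.gam_ne_zero (by
      rcases eq_or_ne i 0 with h0 | h0
      · right; omega
      · left; exact h0)
  have hPl : (∏ m ∈ Finset.range j, S6.gam d m) * ((j : R2) * (uu - vv))
      = h.coeff 1 * ((j : R2) * uu) + h.coeff 0 := by
    apply mul_left_cancel₀ hQu_ne
    linear_combination equ - ((j : R2) * (uu - vv)) * S6.CdL hd
  have hPr : (∏ i ∈ Finset.range j, S6.gam d (e + 1 + i)) * ((j : R2) * (uu - vv))
      = h.coeff 1 * ((j : R2) * vv) + h.coeff 0 := by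
    apply mul_left_cancel₀ hQv_ne
    linear_combination eqv - ((j : R2) * (uu - vv)) * S6.CdR hd
  have hj0 : ((j : ℕ) : R2) ≠ 0 := by
    apply S6.ne_zero_of_eval _ (fun _ => 0)
    simp
    omega
  have hw_ne : ((j : R2) * (uu - vv)) ≠ 0 := mul_ne_zero hj0 S6.usubv_ne
  have hh1 : h.coeff 1 = (∏ m ∈ Finset.range j, S6.gam d m)
      - (∏ i ∈ Finset.range j, S6.gam d (e + 1 + i)) := by
    apply mul_right_cancel₀ hw_ne
    linear_combination hPr - hPl
  -- rewrite hD
  have hswap : (∏ l ∈ Finset.range j, ((l : R2) * vv + ((d - l : ℕ) : R2) * uu))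
      = swapUV (∏ m ∈ Finset.range j, S6.gam d m) := by
    rw [show swapUV = ⇑(MvPolynomial.rename (Equiv.swap (0 : Fin 2) 1)) from rfl, map_prod]
    refine Finset.prod_congr rfl fun l hl => ?_
    have hl' : l < j := Finset.mem_range.mp hl
    rw [show MvPolynomial.rename (Equiv.swap (0 : Fin 2) 1) (S6.gam d l)
      = swapUV (S6.gam d l) from rfl, S6.swap_gam (by omega)]
  rw [hswap, S6.swap_swapUV, S6.swapPl hd (by omega)] at hD
  -- conclude
  apply mul_left_cancel₀ S6.usubv_ne
  rw [hD]
  linear_combination -hve - hh1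
end
end

section
/- Let d = 2h with h > 2 and set Π := ∏_{l=0}^{h−1} (l·v + (d−l)·u). Suppose F ∈ R[x,y,z] satisfies deg_x F ≤ h−2, deg_y F ≤ 1, deg_z F ≤ 1, and q(x + 2·y + h·z) − F lies in the ideal generated by Q_{h−2}(x), Q_1(y) and Q_1(z). Then the coefficient of the monomial x^{h−2}·y·z in F equals h·(h−1)·∂((u+3v)·Π). -/
noncomputable section

/-! ### Auxiliary definitions -/

def ww : R2 := uu - vv

/-- The linear form `m·u + (d−m)·v`, written in the normal form `d·v + m·(u−v)`. -/
def Lf (d m : ℕ) : R2 := (d : R2) * vv + (m : R2) * ww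

/-- `C_{d+1} / L_m`. -/
def Pf (d m : ℕ) : R2 := ∏ i ∈ (Finset.range (d+1)).erase m, Lf d i

/-- `E_{m₀}`, the product of all `L_i`, `i ∈ [0,d] \ [m₀, m₀+h−2]`. -/
def Ef (d h m₀ : ℕ) : R2 :=
  ∏ i ∈ Finset.range (d+1) \ Finset.Ico m₀ (m₀ + (h-1)), Lf d i

open Finset

lemma Lf_eq (d m : ℕ) (h : m ≤ d) : (m : R2) * uu + ((d - m : ℕ) : R2) * vv = Lf d m := by
  rw [Nat.cast_sub h]; unfold Lf ww; ring

lemma Lf_add (d m i : ℕ) : Lf d (m + i) = Lf d m + (i : R2) * ww := by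
  unfold Lf; push_cast; ring

lemma Lf_ne (d m : ℕ) (hd : 0 < d) : Lf d m ≠ 0 := by
  intro hc
  have h2 := congrArg (MvPolynomial.eval (fun i : Fin 2 => if i = 0 then (2:ℚ) else 1)) hc
  simp [Lf, ww, uu, vv] at h2
  norm_num at h2
  norm_cast at h2
  omega

lemma ww_ne : ww ≠ 0 := by
  intro hc
  have h2 := congrArg (MvPolynomial.eval (fun i : Fin 2 => if i = 0 then (2:ℚ) else 1)) hc
  simp [ww, uu, vv] at h2
  norm_num at h2

lemma fd {R : Type*} [CommRing R] (n : ℕ) : ∀ (A w : R) (e : ℕ), e ≤ n →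
    (∑ j ∈ Finset.range (n+1), (-1:R)^j * (n.choose j : R) * (A + j*w)^e)
      = if e = n then (-1:R)^n * (n.factorial : R) * w^n else 0 := by
  induction n with
  | zero =>
    intro A w e he
    interval_cases e
    simp
  | succ n ih =>
    intro A w e he
    have key : (∑ j ∈ Finset.range (n+2), (-1:R)^j * ((n+1).choose j : R) * (A + j*w)^e)
        = (∑ j ∈ Finset.range (n+1), (-1:R)^j * (n.choose j : R) * (A + j*w)^e)
          - (∑ j ∈ Finset.range (n+1), (-1:R)^j * (n.choose j : R) * ((A+w) + j*w)^e) := by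
      rw [Finset.sum_range_succ' (fun j => (-1:R)^j * ((n+1).choose j : R) * (A + j*w)^e)]
      have split : ∀ k ∈ Finset.range (n+1),
          (-1:R)^(k+1) * ((n+1).choose (k+1) : R) * (A + ((k+1:ℕ):R)*w)^e
          = (-1:R)^(k+1) * ((n).choose (k+1) : R) * (A + ((k+1:ℕ):R)*w)^e
            - (-1:R)^k * ((n).choose k : R) * ((A+w) + k*w)^e := by
        intro k _
        rw [Nat.choose_succ_succ]
        push_cast
        ring
      rw [Finset.sum_congr rfl split, Finset.sum_sub_distrib]
      have h0 : (((n+1).choose 0 : ℕ) : R) = ((n.choose 0 : ℕ) : R) := by norm_num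
      rw [h0, sub_add_eq_add_sub]
      rw [← Finset.sum_range_succ' (fun j => (-1:R)^j * ((n).choose j : R) * (A + j*w)^e)]
      rw [Finset.sum_range_succ]
      simp [Nat.choose_succ_self]
    rw [key]
    set S : ℕ → R := fun i => ∑ j ∈ Finset.range (n+1), (-1:R)^j * (n.choose j : R) * (A + j*w)^i with hS
    have binom : ∀ j : ℕ, ((A+w) + (j:ℕ)*w)^e
        = ∑ i ∈ Finset.range (e+1), (A + (j:ℕ)*w)^i * w^(e-i) * (e.choose i : R) := by
      intro j
      have h1 : (A+w) + (j:ℕ)*w = (A + (j:ℕ)*w) + w := by ring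
      rw [h1, add_pow]
    have expand : (∑ j ∈ Finset.range (n+1), (-1:R)^j * (n.choose j : R) * ((A+w) + j*w)^e)
        = ∑ i ∈ Finset.range (e+1), w^(e-i) * (e.choose i : R) * S i := by
      have step1 : ∀ j ∈ Finset.range (n+1),
          (-1:R)^j * (n.choose j : R) * ((A+w) + j*w)^e
          = ∑ i ∈ Finset.range (e+1),
              (-1:R)^j * (n.choose j : R) * ((A + (j:ℕ)*w)^i * w^(e-i) * (e.choose i : R)) := by
        intro j _
        rw [binom j, Finset.mul_sum]
      rw [Finset.sum_congr rfl step1, Finset.sum_comm]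
      refine Finset.sum_congr rfl fun i _ => ?_
      rw [hS]
      simp only []
      rw [Finset.mul_sum]
      exact Finset.sum_congr rfl fun j _ => by ring
    rw [expand, Finset.sum_range_succ (fun i => w^(e-i) * ((e.choose i : ℕ) : R) * S i) e]
    have hSe : (S e : R) = ∑ j ∈ Finset.range (n+1), (-1:R)^j * (n.choose j : R) * (A + j*w)^e := rfl
    have hcancel : S e - (∑ i ∈ Finset.range e, w^(e-i) * (e.choose i : R) * S i + w^(e-e) * (e.choose e : R) * S e)
        = - ∑ i ∈ Finset.range e, w^(e-i) * (e.choose i : R) * S i := by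
      simp [Nat.sub_self]
    rw [← hSe, hcancel]
    have hSi : ∀ i ∈ Finset.range e, w^(e-i) * (e.choose i : R) * S i
        = w^(e-i) * (e.choose i : R) * (if i = n then (-1:R)^n * (n.factorial : R) * w^n else 0) := by
      intro i hi
      have hin : i ≤ n := by have := Finset.mem_range.mp hi; omega
      exact congrArg _ (ih A w i hin)
    rw [Finset.sum_congr rfl hSi]
    simp only [mul_ite, mul_zero]
    rw [Finset.sum_ite_eq' (Finset.range e) n]
    by_cases he' : e = n + 1
    · subst he'
      simp only [Finset.mem_range, Nat.lt_succ_self, if_true, Nat.choose_succ_self_right,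
        Nat.add_sub_cancel_left, if_pos rfl]
      push_cast [Nat.factorial_succ]
      ring
    · have : ¬ (n ∈ Finset.range e) := by
        simp only [Finset.mem_range]; omega
      rw [if_neg this, if_neg he', neg_zero]

lemma erase_top (n j : ℕ) (hj : j ≤ n) :
    (Finset.range (n+2)).erase j = insert (n+1) ((Finset.range (n+1)).erase j) := by
  ext i
  simp only [Finset.mem_erase, Finset.mem_range, Finset.mem_insert]
  omega

lemma erase_bot (n k : ℕ) :
    (Finset.range (n+2)).erase (k+1)
      = insert 0 (Finset.image (· + 1) ((Finset.range (n+1)).erase k)) := by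
  ext i
  simp only [Finset.mem_erase, Finset.mem_range, Finset.mem_insert, Finset.mem_image]
  constructor
  · rintro ⟨h1, h2⟩
    rcases i with _ | i'
    · exact Or.inl rfl
    · exact Or.inr ⟨i', ⟨by omega, by omega⟩, rfl⟩
  · rintro (rfl | ⟨a, ⟨ha1, ha2⟩, rfl⟩) <;> omega

lemma s1 {R : Type*} [CommRing R] (n : ℕ) : ∀ A w : R,
    (∑ m ∈ Finset.range (n+1), (-1:R)^m * (n.choose m : R) *
      ∏ i ∈ (Finset.range (n+1)).erase m, (A + i*w))
      = (n.factorial : R) * w^n := by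
  induction n with
  | zero => intro A w; simp
  | succ n ih =>
    intro A w
    rw [Finset.sum_range_succ'
      (fun m => (-1:R)^m * ((n+1).choose m : R) * ∏ i ∈ (Finset.range (n+2)).erase m, (A + i*w))]
    have split : ∀ k ∈ Finset.range (n+1),
        (-1:R)^(k+1) * ((n+1).choose (k+1) : R) * ∏ i ∈ (Finset.range (n+2)).erase (k+1), (A + i*w)
        = (-1:R)^(k+1) * ((n).choose (k+1) : R) * (∏ i ∈ (Finset.range (n+2)).erase (k+1), (A + i*w))
          + (-1:R)^(k+1) * ((n).choose k : R) * (∏ i ∈ (Finset.range (n+2)).erase (k+1), (A + i*w)) := by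
      intro k _
      rw [Nat.choose_succ_succ']
      push_cast
      ring
    rw [Finset.sum_congr rfl split, Finset.sum_add_distrib, add_right_comm]
    have part1 : (∑ k ∈ Finset.range (n+1),
          (-1:R)^(k+1) * ((n).choose (k+1) : R) * ∏ i ∈ (Finset.range (n+2)).erase (k+1), (A + i*w))
          + (-1:R)^0 * ((n+1).choose 0 : R) * ∏ i ∈ (Finset.range (n+2)).erase 0, (A + i*w)
        = (A + ((n+1:ℕ):R)*w) * ((n.factorial : R) * w^n) := by
      have h0 : (((n+1).choose 0 : ℕ) : R) = ((n.choose 0 : ℕ) : R) := by norm_num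
      rw [h0,
        ← Finset.sum_range_succ'
          (fun m => (-1:R)^m * ((n).choose m : R) * ∏ i ∈ (Finset.range (n+2)).erase m, (A + i*w)),
        Finset.sum_range_succ]
      simp only [Nat.choose_succ_self, Nat.cast_zero, mul_zero, zero_mul, add_zero]
      have peel : ∀ j ∈ Finset.range (n+1),
          (-1:R)^j * ((n).choose j : R) * ∏ i ∈ (Finset.range (n+2)).erase j, (A + i*w)
          = (A + ((n+1:ℕ):R)*w) * ((-1:R)^j * ((n).choose j : R) * ∏ i ∈ (Finset.range (n+1)).erase j, (A + i*w)) := by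
        intro j hj
        rw [erase_top n j (by have := Finset.mem_range.mp hj; omega), Finset.prod_insert (by simp)]
        ring
      rw [Finset.sum_congr rfl peel, ← Finset.mul_sum, ih A w]
    have part2 : (∑ k ∈ Finset.range (n+1),
          (-1:R)^(k+1) * ((n).choose k : R) * ∏ i ∈ (Finset.range (n+2)).erase (k+1), (A + i*w))
        = - (A * ((n.factorial : R) * w^n)) := by
      have peel : ∀ k ∈ Finset.range (n+1),
          (-1:R)^(k+1) * ((n).choose k : R) * ∏ i ∈ (Finset.range (n+2)).erase (k+1), (A + i*w)
          = - (A * ((-1:R)^k * ((n).choose k : R) * ∏ i ∈ (Finset.range (n+1)).erase k, ((A+w) + i*w))) := by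
        intro k _
        rw [erase_bot n k, Finset.prod_insert (by simp), Finset.prod_image (by intro a _ b _ hab; simp only at hab; omega)]
        have : ∀ i ∈ (Finset.range (n+1)).erase k, (A + ((i+1:ℕ):R)*w) = ((A+w) + (i:ℕ)*w) := by
          intro i _; push_cast; ring
        rw [Finset.prod_congr rfl this]
        push_cast
        ring
      rw [Finset.sum_congr rfl peel, Finset.sum_neg_distrib, ← Finset.mul_sum, ih (A+w) w]
    rw [part1, part2]
    push_cast [Nat.factorial_succ]
    ring


lemma triple_factor {R : Type*} [CommRing R] (n1 n2 n3 : Finset ℕ) (f g k : ℕ → R) (c : R) :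
    (∑ j ∈ n1, ∑ s ∈ n2, ∑ t ∈ n3, f j * g s * k t * c)
      = c * ((∑ j ∈ n1, f j) * (∑ s ∈ n2, g s) * (∑ t ∈ n3, k t)) := by
  have h3 : ∀ j s, (∑ t ∈ n3, f j * g s * k t * c) = f j * g s * c * (∑ t ∈ n3, k t) := by
    intro j s; rw [Finset.mul_sum]; exact Finset.sum_congr rfl fun t _ => by ring
  have h2 : ∀ j, (∑ s ∈ n2, f j * g s * c * (∑ t ∈ n3, k t))
      = (f j * c * (∑ t ∈ n3, k t)) * (∑ s ∈ n2, g s) := by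
    intro j
    rw [Finset.mul_sum]
    exact Finset.sum_congr rfl fun s _ => by ring
  calc (∑ j ∈ n1, ∑ s ∈ n2, ∑ t ∈ n3, f j * g s * k t * c)
      = ∑ j ∈ n1, ∑ s ∈ n2, f j * g s * c * (∑ t ∈ n3, k t) :=
        Finset.sum_congr rfl fun j _ => Finset.sum_congr rfl fun s _ => h3 j s
    _ = ∑ j ∈ n1, (f j * c * (∑ t ∈ n3, k t)) * (∑ s ∈ n2, g s) :=
        Finset.sum_congr rfl fun j _ => h2 j
    _ = c * ((∑ j ∈ n1, f j) * (∑ s ∈ n2, g s) * (∑ t ∈ n3, k t)) := by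
        have step : ∀ j ∈ n1, (f j * c * (∑ t ∈ n3, k t)) * (∑ s ∈ n2, g s)
            = f j * (c * ((∑ t ∈ n3, k t) * (∑ s ∈ n2, g s))) := fun j _ => by ring
        rw [Finset.sum_congr rfl step, ← Finset.sum_mul]
        ring

lemma sumX (h : ℕ) (hh : 2 < h) (e : ℕ) (he : e ≤ h-2) :
    (∑ j ∈ Finset.range (h-1), (-1:R2)^j * ((h-2).choose j : R2) * (-(Lf (h-2) j))^e)
      = if e = h-2 then ((h-2).factorial : R2) * ww^(h-2) else 0 := by
  have hn1 : h-2+1 = h-1 := by omega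
  rw [← hn1]
  have step : ∀ j ∈ Finset.range (h-2+1),
      (-1:R2)^j * ((h-2).choose j : R2) * (-(Lf (h-2) j))^e
      = (-1:R2)^e * ((-1:R2)^j * ((h-2).choose j : R2) * ((((h-2:ℕ):R2))*vv + (j:R2)*ww)^e) := by
    intro j _
    rw [neg_pow (Lf (h-2) j) e]
    unfold Lf
    ring
  rw [Finset.sum_congr rfl step, ← Finset.mul_sum]
  rw [fd (h-2) (((h-2:ℕ):R2)*vv) ww e he]
  by_cases hcase : e = h-2
  · subst hcase
    rw [if_pos rfl, if_pos rfl]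
    have heven : Even ((h-2) + (h-2)) := ⟨h-2, rfl⟩
    calc (-1:R2)^(h-2) * ((-1:R2)^(h-2) * ((h-2).factorial : R2) * ww^(h-2))
        = ((-1:R2)^((h-2)+(h-2))) * (((h-2).factorial : R2) * ww^(h-2)) := by
          rw [pow_add]; ring
      _ = ((h-2).factorial : R2) * ww^(h-2) := by rw [heven.neg_one_pow, one_mul]
  · rw [if_neg hcase, if_neg hcase, mul_zero]

lemma sumY (e : ℕ) (he : e ≤ 1) :
    (∑ s ∈ Finset.range 2, (-1:R2)^s * (-(Lf 1 s))^e) = if e = 1 then ww else 0 := by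
  have l0 : Lf 1 0 = vv := by unfold Lf ww; push_cast; ring
  have l1 : Lf 1 1 = uu := by unfold Lf ww; push_cast; ring
  rw [Finset.sum_range_succ, Finset.sum_range_one, l0, l1]
  interval_cases e
  · norm_num
  · rw [if_pos rfl]
    unfold ww
    ring

lemma tgt_iff (h : ℕ) (m : Fin 3 →₀ ℕ) :
    m = (Finsupp.single (0 : Fin 3) (h - 2) + Finsupp.single 1 1 + Finsupp.single 2 1)
      ↔ (m 0 = h-2 ∧ m 1 = 1 ∧ m 2 = 1) := by
  constructor
  · rintro rfl
    refine ⟨?_, ?_, ?_⟩ <;> simp [Finsupp.single_apply]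
  · rintro ⟨h0, h1, h2⟩
    ext i
    fin_cases i <;> simp [Finsupp.single_apply, h0, h1, h2]

/-- The inner `j`-sum in closed form. -/
lemma claimD (d h : ℕ) (hh : 2 < h) (hd : d = 2*h) (m₀ : ℕ) (hm : m₀ + h ≤ d + 2) :
    ∑ j ∈ Finset.range (h-1), (-1:R2)^j * ((h-2).choose j : R2) * Pf d (m₀ + j)
      = Ef d h m₀ * (((h-2).factorial : R2) * ww^(h-2)) := by
  have hn1 : h - 2 + 1 = h - 1 := by omega
  have step : ∀ j ∈ Finset.range (h-1),
      (-1:R2)^j * ((h-2).choose j : R2) * Pf d (m₀ + j)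
      = Ef d h m₀ * ((-1:R2)^j * ((h-2).choose j : R2) *
          ∏ i ∈ (Finset.range (h-1)).erase j, (Lf d m₀ + (i:R2) * ww)) := by
    intro j hj
    have hj' : j < h - 1 := Finset.mem_range.mp hj
    have hsplit : (Finset.range (d+1)).erase (m₀+j)
        = (Finset.range (d+1) \ Finset.Ico m₀ (m₀ + (h-1)))
          ∪ ((Finset.Ico m₀ (m₀ + (h-1))).erase (m₀+j)) := by
      ext i
      simp only [Finset.mem_erase, Finset.mem_range, Finset.mem_union, Finset.mem_sdiff,
        Finset.mem_Ico]
      omega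
    have hdisj : Disjoint (Finset.range (d+1) \ Finset.Ico m₀ (m₀ + (h-1)))
        ((Finset.Ico m₀ (m₀ + (h-1))).erase (m₀+j)) := by
      rw [Finset.disjoint_left]
      intro i hi1 hi2
      simp only [Finset.mem_sdiff, Finset.mem_Ico, Finset.mem_erase] at hi1 hi2
      omega
    have himg : (Finset.Ico m₀ (m₀ + (h-1))).erase (m₀+j)
        = Finset.image (m₀ + ·) ((Finset.range (h-1)).erase j) := by
      rw [Finset.image_erase (add_right_injective m₀), Finset.range_eq_Ico,
        Finset.image_add_left_Ico, add_zero]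
    show (-1:R2)^j * ((h-2).choose j : R2) * Pf d (m₀ + j) = _
    rw [Pf, hsplit, Finset.prod_union hdisj, himg,
      Finset.prod_image (by intro a _ b _ hab; simp only at hab; omega)]
    have : ∀ i ∈ (Finset.range (h-1)).erase j, Lf d (m₀ + i) = Lf d m₀ + (i:R2) * ww :=
      fun i _ => Lf_add d m₀ i
    rw [Finset.prod_congr rfl this]
    show _ * _ * ((Ef d h m₀) * _) = _
    ring
  rw [Finset.sum_congr rfl step, ← Finset.mul_sum]
  congr 1
  rw [← hn1]
  exact s1 (h-2) (Lf d m₀) ww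

set_option maxHeartbeats 2000000 in
/-- Example 3.8, case `j = 2`: the Thom polynomial of `λ = (1^{h−2}, 2, h)`, `d = 2h`,
equals `h(h−1)·∂((u+3v)·Π)`.  Variables: `x = X 0`, `y = X 1`, `z = X 2` in `R[x,y,z]`. -/
theorem stmt8 (h : ℕ) (hh : 2 < h) (d : ℕ) (hd : d = 2 * h)
    (q : Polynomial R2) (hq : Polynomial.X * q = Qp d - Polynomial.C (Cdtop d))
    (F : MvPolynomial (Fin 3) R2)
    (hx : F.degreeOf 0 ≤ h - 2) (hy : F.degreeOf 1 ≤ 1) (hz : F.degreeOf 2 ≤ 1)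
    (hrep : Polynomial.aeval
          (MvPolynomial.X 0 + (2 : MvPolynomial (Fin 3) R2) * MvPolynomial.X 1
            + ((h : ℕ) : MvPolynomial (Fin 3) R2) * MvPolynomial.X 2) q - F
        ∈ Ideal.span {Qm 3 (h - 2) 0, Qm 3 1 1, Qm 3 1 2})
    (D : R2)
    (hD : (uu - vv) * D =
        (uu + 3 * vv) * (∏ l ∈ Finset.range h, ((l : R2) * vv + ((d - l : ℕ) : R2) * uu)) -
          swapUV ((uu + 3 * vv) *
            ∏ l ∈ Finset.range h, ((l : R2) * vv + ((d - l : ℕ) : R2) * uu))) :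
    MvPolynomial.coeff
        (Finsupp.single (0 : Fin 3) (h - 2) + Finsupp.single 1 1 + Finsupp.single 2 1) F
      = (h : R2) * ((h : R2) - 1) * D := by
  classical
  have hd0 : 0 < d := by omega
  -- Step 1: evaluations of F at the grid nodes
  have evF : ∀ j s t : ℕ, j < h - 1 → s < 2 → t < 2 →
      MvPolynomial.aeval ![-(Lf (h-2) j), -(Lf 1 s), -(Lf 1 t)] F = Pf d (j + 2*s + h*t) := by
    intro j s t hj hs ht
    set nodes : Fin 3 → R2 := ![-(Lf (h-2) j), -(Lf 1 s), -(Lf 1 t)] with hnodes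
    set m : ℕ := j + 2*s + h*t with hm
    have hht : h*t ≤ h*1 := Nat.mul_le_mul_left h (by omega)
    have hmd : m ≤ d := by omega
    -- the three generators vanish under evaluation
    have hg1 : MvPolynomial.aeval nodes (Qm 3 (h-2) 0) = 0 := by
      unfold Qm
      rw [map_prod]
      apply Finset.prod_eq_zero (Finset.mem_range.mpr (show j < h-2+1 by omega))
      simp only [map_add, MvPolynomial.aeval_X, MvPolynomial.aeval_C, Algebra.algebraMap_self_apply]
      rw [show ((j:R2)*uu + ((h-2-j:ℕ):R2)*vv) = Lf (h-2) j from Lf_eq (h-2) j (by omega)]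
      simp [hnodes]
    have hg2 : MvPolynomial.aeval nodes (Qm 3 1 1) = 0 := by
      unfold Qm
      rw [map_prod]
      apply Finset.prod_eq_zero (Finset.mem_range.mpr (show s < 1+1 by omega))
      simp only [map_add, MvPolynomial.aeval_X, MvPolynomial.aeval_C, Algebra.algebraMap_self_apply]
      rw [show ((s:R2)*uu + ((1-s:ℕ):R2)*vv) = Lf 1 s from Lf_eq 1 s (by omega)]
      simp [hnodes]
    have hg3 : MvPolynomial.aeval nodes (Qm 3 1 2) = 0 := by
      unfold Qm
      rw [map_prod]
      apply Finset.prod_eq_zero (Finset.mem_range.mpr (show t < 1+1 by omega))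
      simp only [map_add, MvPolynomial.aeval_X, MvPolynomial.aeval_C, Algebra.algebraMap_self_apply]
      rw [show ((t:R2)*uu + ((1-t:ℕ):R2)*vv) = Lf 1 t from Lf_eq 1 t (by omega)]
      simp [hnodes]
    -- the representative difference vanishes
    have hspan : Ideal.span {Qm 3 (h - 2) 0, Qm 3 1 1, Qm 3 1 2}
        ≤ RingHom.ker (MvPolynomial.aeval (R := R2) nodes).toRingHom := by
      rw [Ideal.span_le]
      intro g hg
      simp only [Set.mem_insert_iff, Set.mem_singleton_iff] at hg
      rcases hg with rfl | rfl | rfl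
      · exact hg1
      · exact hg2
      · exact hg3
    have hvanish := hspan hrep
    rw [RingHom.mem_ker] at hvanish
    have hFq : MvPolynomial.aeval nodes F
        = MvPolynomial.aeval nodes (Polynomial.aeval
            (MvPolynomial.X 0 + (2 : MvPolynomial (Fin 3) R2) * MvPolynomial.X 1
              + ((h : ℕ) : MvPolynomial (Fin 3) R2) * MvPolynomial.X 2) q) := by
      have : MvPolynomial.aeval nodes (Polynomial.aeval
            (MvPolynomial.X 0 + (2 : MvPolynomial (Fin 3) R2) * MvPolynomial.X 1
              + ((h : ℕ) : MvPolynomial (Fin 3) R2) * MvPolynomial.X 2) q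
          - F) = 0 := hvanish
      rw [map_sub, sub_eq_zero] at this
      exact this.symm
    -- compute the evaluation of the linear form
    have harg : MvPolynomial.aeval nodes
        (MvPolynomial.X 0 + (2 : MvPolynomial (Fin 3) R2) * MvPolynomial.X 1
          + ((h : ℕ) : MvPolynomial (Fin 3) R2) * MvPolynomial.X 2) = -(Lf d m) := by
      simp [hnodes]
      rw [hm]
      unfold Lf
      rw [Nat.cast_sub (show 2 ≤ h by omega)]
      subst hd
      push_cast
      ring
    have hcomp : MvPolynomial.aeval nodes (Polynomial.aeval
            (MvPolynomial.X 0 + (2 : MvPolynomial (Fin 3) R2) * MvPolynomial.X 1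
              + ((h : ℕ) : MvPolynomial (Fin 3) R2) * MvPolynomial.X 2) q)
        = Polynomial.aeval (-(Lf d m)) q := by
      rw [← Polynomial.aeval_algHom_apply (MvPolynomial.aeval nodes), harg]
    -- evaluate the defining equation of q
    have happ := congrArg (Polynomial.aeval (R := R2) (-(Lf d m))) hq
    rw [map_mul, Polynomial.aeval_X, map_sub, Polynomial.aeval_C] at happ
    have hQp : Polynomial.aeval (R := R2) (-(Lf d m)) (Qp d) = 0 := by
      unfold Qp
      rw [map_prod]
      apply Finset.prod_eq_zero (Finset.mem_range.mpr (show m < d+1 by omega))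
      simp only [map_add, Polynomial.aeval_X, Polynomial.aeval_C, Algebra.algebraMap_self_apply]
      rw [show ((m:R2)*uu + ((d-m:ℕ):R2)*vv) = Lf d m from Lf_eq d m hmd]
      simp
    rw [hQp, zero_sub] at happ
    have hCd : Cdtop d = Lf d m * Pf d m := by
      unfold Cdtop Pf
      rw [Finset.prod_congr rfl (fun i hi => Lf_eq d i (by
        have := Finset.mem_range.mp hi; omega))]
      rw [← Finset.mul_prod_erase _ _ (Finset.mem_range.mpr (show m < d+1 by omega))]
    have halg : (algebraMap R2 R2) (Cdtop d) = Cdtop d := rfl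
    rw [halg] at happ
    have hqval : Polynomial.aeval (-(Lf d m)) q = Pf d m := by
      apply mul_left_cancel₀ (Lf_ne d m hd0)
      have : Lf d m * Polynomial.aeval (-(Lf d m)) q = Cdtop d := by
        linear_combination -happ
      rw [this, hCd]
    rw [hFq, hcomp, hqval]
  -- Step 2: the extraction functional applied to F, via its support
  have claimA : (∑ j ∈ Finset.range (h-1), ∑ s ∈ Finset.range 2, ∑ t ∈ Finset.range 2,
        (-1:R2)^(j+s+t) * ((h-2).choose j : R2) *
          MvPolynomial.aeval ![-(Lf (h-2) j), -(Lf 1 s), -(Lf 1 t)] F)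
      = (((h-2).factorial : R2) * ww^h) *
          MvPolynomial.coeff
            (Finsupp.single (0 : Fin 3) (h - 2) + Finsupp.single 1 1 + Finsupp.single 2 1) F := by
    have evsum : ∀ j s t : ℕ,
        MvPolynomial.aeval ![-(Lf (h-2) j), -(Lf 1 s), -(Lf 1 t)] F
        = ∑ m ∈ F.support, MvPolynomial.coeff m F *
            ((-(Lf (h-2) j))^(m 0) * (-(Lf 1 s))^(m 1) * (-(Lf 1 t))^(m 2)) := by
      intro j s t
      conv_lhs => rw [MvPolynomial.as_sum F]
      rw [map_sum]
      refine Finset.sum_congr rfl fun m _ => ?_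
      rw [MvPolynomial.aeval_monomial, Finsupp.prod_fintype _ _ (fun i => pow_zero _),
        Fin.prod_univ_three]
      simp only [Algebra.algebraMap_self_apply, Matrix.cons_val_zero, Matrix.cons_val_one,
        Matrix.head_cons]
      simp
    have step1 : (∑ j ∈ Finset.range (h-1), ∑ s ∈ Finset.range 2, ∑ t ∈ Finset.range 2,
          (-1:R2)^(j+s+t) * ((h-2).choose j : R2) *
            MvPolynomial.aeval ![-(Lf (h-2) j), -(Lf 1 s), -(Lf 1 t)] F)
        = ∑ m ∈ F.support, MvPolynomial.coeff m F *
            ((∑ j ∈ Finset.range (h-1), (-1:R2)^j * ((h-2).choose j : R2) * (-(Lf (h-2) j))^(m 0))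
              * (∑ s ∈ Finset.range 2, (-1:R2)^s * (-(Lf 1 s))^(m 1))
              * (∑ t ∈ Finset.range 2, (-1:R2)^t * (-(Lf 1 t))^(m 2))) := by
      calc (∑ j ∈ Finset.range (h-1), ∑ s ∈ Finset.range 2, ∑ t ∈ Finset.range 2,
            (-1:R2)^(j+s+t) * ((h-2).choose j : R2) *
              MvPolynomial.aeval ![-(Lf (h-2) j), -(Lf 1 s), -(Lf 1 t)] F)
          = ∑ j ∈ Finset.range (h-1), ∑ s ∈ Finset.range 2, ∑ t ∈ Finset.range 2,
              ∑ m ∈ F.support,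
                ((-1:R2)^j * ((h-2).choose j : R2) * (-(Lf (h-2) j))^(m 0))
                * ((-1:R2)^s * (-(Lf 1 s))^(m 1)) * ((-1:R2)^t * (-(Lf 1 t))^(m 2))
                * MvPolynomial.coeff m F := by
            refine Finset.sum_congr rfl fun j _ => Finset.sum_congr rfl fun s _ =>
              Finset.sum_congr rfl fun t _ => ?_
            rw [evsum j s t, Finset.mul_sum]
            refine Finset.sum_congr rfl fun m _ => ?_
            rw [pow_add, pow_add]
            ring
        _ = ∑ j ∈ Finset.range (h-1), ∑ s ∈ Finset.range 2, ∑ m ∈ F.support,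
              ∑ t ∈ Finset.range 2,
                ((-1:R2)^j * ((h-2).choose j : R2) * (-(Lf (h-2) j))^(m 0))
                * ((-1:R2)^s * (-(Lf 1 s))^(m 1)) * ((-1:R2)^t * (-(Lf 1 t))^(m 2))
                * MvPolynomial.coeff m F :=
            Finset.sum_congr rfl fun j _ => Finset.sum_congr rfl fun s _ =>
              Finset.sum_comm
        _ = ∑ j ∈ Finset.range (h-1), ∑ m ∈ F.support, ∑ s ∈ Finset.range 2,
              ∑ t ∈ Finset.range 2,
                ((-1:R2)^j * ((h-2).choose j : R2) * (-(Lf (h-2) j))^(m 0))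
                * ((-1:R2)^s * (-(Lf 1 s))^(m 1)) * ((-1:R2)^t * (-(Lf 1 t))^(m 2))
                * MvPolynomial.coeff m F :=
            Finset.sum_congr rfl fun j _ => Finset.sum_comm
        _ = ∑ m ∈ F.support, ∑ j ∈ Finset.range (h-1), ∑ s ∈ Finset.range 2,
              ∑ t ∈ Finset.range 2,
                ((-1:R2)^j * ((h-2).choose j : R2) * (-(Lf (h-2) j))^(m 0))
                * ((-1:R2)^s * (-(Lf 1 s))^(m 1)) * ((-1:R2)^t * (-(Lf 1 t))^(m 2))
                * MvPolynomial.coeff m F := Finset.sum_comm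
        _ = ∑ m ∈ F.support, MvPolynomial.coeff m F *
            ((∑ j ∈ Finset.range (h-1), (-1:R2)^j * ((h-2).choose j : R2) * (-(Lf (h-2) j))^(m 0))
              * (∑ s ∈ Finset.range 2, (-1:R2)^s * (-(Lf 1 s))^(m 1))
              * (∑ t ∈ Finset.range 2, (-1:R2)^t * (-(Lf 1 t))^(m 2))) :=
            Finset.sum_congr rfl fun m _ => triple_factor _ _ _ _ _ _ _
    rw [step1]
    have hpow2 : ((h-2).factorial : R2) * ww^(h-2) * ww * ww
        = ((h-2).factorial : R2) * ww^h := by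
      rw [show ww^h = ww^(h-2) * ww * ww from by
        rw [← pow_succ, ← pow_succ]
        congr 1
        omega]
      ring
    have term : ∀ m ∈ F.support,
        MvPolynomial.coeff m F *
            ((∑ j ∈ Finset.range (h-1), (-1:R2)^j * ((h-2).choose j : R2) * (-(Lf (h-2) j))^(m 0))
              * (∑ s ∈ Finset.range 2, (-1:R2)^s * (-(Lf 1 s))^(m 1))
              * (∑ t ∈ Finset.range 2, (-1:R2)^t * (-(Lf 1 t))^(m 2)))
        = if m = (Finsupp.single (0 : Fin 3) (h - 2) + Finsupp.single 1 1 + Finsupp.single 2 1)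
            then MvPolynomial.coeff m F * (((h-2).factorial : R2) * ww^h) else 0 := by
      intro m hm
      have hb0 : m 0 ≤ h - 2 := MvPolynomial.degreeOf_le_iff.mp hx m hm
      have hb1 : m 1 ≤ 1 := MvPolynomial.degreeOf_le_iff.mp hy m hm
      have hb2 : m 2 ≤ 1 := MvPolynomial.degreeOf_le_iff.mp hz m hm
      rw [sumX h hh (m 0) hb0, sumY (m 1) hb1, sumY (m 2) hb2]
      by_cases e0 : m 0 = h - 2
      · by_cases e1 : m 1 = 1
        · by_cases e2 : m 2 = 1
          · rw [if_pos e0, if_pos e1, if_pos e2, if_pos ((tgt_iff h m).mpr ⟨e0, e1, e2⟩), hpow2]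
          · rw [if_neg e2, mul_zero, mul_zero, if_neg (fun hc => e2 ((tgt_iff h m).mp hc).2.2)]
        · rw [if_neg e1, mul_zero, zero_mul, mul_zero,
            if_neg (fun hc => e1 ((tgt_iff h m).mp hc).2.1)]
      · rw [if_neg e0, zero_mul, zero_mul, mul_zero,
          if_neg (fun hc => e0 ((tgt_iff h m).mp hc).1)]
    rw [Finset.sum_congr rfl term,
      Finset.sum_ite_eq' F.support
        (Finsupp.single (0 : Fin 3) (h - 2) + Finsupp.single 1 1 + Finsupp.single 2 1)
        (fun m => MvPolynomial.coeff m F * (((h-2).factorial : R2) * ww^h))]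
    by_cases hmem : (Finsupp.single (0 : Fin 3) (h - 2) + Finsupp.single 1 1
        + Finsupp.single 2 1) ∈ F.support
    · rw [if_pos hmem]
      ring
    · rw [if_neg hmem, MvPolynomial.notMem_support_iff.mp hmem, mul_zero]
  -- Step 3: the same sum computed in closed form
  have claimB : (∑ j ∈ Finset.range (h-1), ∑ s ∈ Finset.range 2, ∑ t ∈ Finset.range 2,
        (-1:R2)^(j+s+t) * ((h-2).choose j : R2) *
          MvPolynomial.aeval ![-(Lf (h-2) j), -(Lf 1 s), -(Lf 1 t)] F)
      = (((h-2).factorial : R2) * ww^(h-2)) *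
          (Ef d h 0 - Ef d h 2 - Ef d h h + Ef d h (h+2)) := by
    have expand : ∀ j ∈ Finset.range (h-1),
        (∑ s ∈ Finset.range 2, ∑ t ∈ Finset.range 2,
          (-1:R2)^(j+s+t) * ((h-2).choose j : R2) *
            MvPolynomial.aeval ![-(Lf (h-2) j), -(Lf 1 s), -(Lf 1 t)] F)
        = ((-1:R2)^j * ((h-2).choose j : R2) * Pf d (0 + j)
            - (-1:R2)^j * ((h-2).choose j : R2) * Pf d (2 + j))
          - ((-1:R2)^j * ((h-2).choose j : R2) * Pf d (h + j)
            - (-1:R2)^j * ((h-2).choose j : R2) * Pf d ((h+2) + j)) := by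
      intro j hj
      have hj' : j < h - 1 := Finset.mem_range.mp hj
      simp only [Finset.sum_range_succ, Finset.sum_range_one]
      rw [evF j 0 0 hj' (by norm_num) (by norm_num),
        evF j 0 1 hj' (by norm_num) (by norm_num),
        evF j 1 0 hj' (by norm_num) (by norm_num),
        evF j 1 1 hj' (by norm_num) (by norm_num)]
      rw [show j + 2*0 + h*0 = 0 + j by ring, show j + 2*1 + h*0 = 2 + j by ring,
        show j + 2*0 + h*1 = h + j by ring, show j + 2*1 + h*1 = (h+2) + j by ring]
      ring
    rw [Finset.sum_congr rfl expand, Finset.sum_sub_distrib, Finset.sum_sub_distrib,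
      Finset.sum_sub_distrib]
    rw [claimD d h hh hd 0 (by omega), claimD d h hh hd 2 (by omega),
      claimD d h hh hd h (by omega), claimD d h hh hd (h+2) (by omega)]
    ring
  -- Step 4: the E-identity
  have hPi : (∏ i ∈ Finset.Ico (h+1) (d+1), Lf d i)
      = ∏ l ∈ Finset.range h, ((l : R2) * vv + ((d - l : ℕ) : R2) * uu) := by
    have himg : Finset.Ico (h+1) (d+1) = Finset.image (fun l => d - l) (Finset.range h) := by
      ext i
      simp only [Finset.mem_Ico, Finset.mem_image, Finset.mem_range]
      constructor
      · intro hi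
        exact ⟨d - i, by omega, by omega⟩
      · rintro ⟨l, hl, rfl⟩
        omega
    rw [himg, Finset.prod_image (by intro a ha b hb hab; simp only [Finset.mem_coe, Finset.mem_range] at ha hb hab; omega)]
    refine Finset.prod_congr rfl fun l hl => ?_
    have hl' : l < h := Finset.mem_range.mp hl
    unfold Lf ww
    rw [Nat.cast_sub (show l ≤ d by omega)]
    ring
  have hswap : swapUV ((uu + 3 * vv) *
        ∏ l ∈ Finset.range h, ((l : R2) * vv + ((d - l : ℕ) : R2) * uu))
      = (vv + 3 * uu) * ∏ i ∈ Finset.range h, Lf d i := by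
    unfold swapUV
    rw [map_mul, map_prod]
    congr 1
    · simp [uu, vv, MvPolynomial.rename_X, map_ofNat, map_add, map_mul,
        Equiv.swap_apply_left, Equiv.swap_apply_right]
    · refine Finset.prod_congr rfl fun l hl => ?_
      have hl' : l < h := Finset.mem_range.mp hl
      rw [map_add, map_mul, map_mul]
      simp only [map_natCast, uu, vv, MvPolynomial.rename_X, Equiv.swap_apply_left,
        Equiv.swap_apply_right]
      exact Lf_eq d l (by omega)
  have hE0 : Ef d h 0 = Lf d (h-1) * (Lf d h * ∏ i ∈ Finset.Ico (h+1) (d+1), Lf d i) := by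
    unfold Ef
    rw [show Finset.range (d+1) \ Finset.Ico 0 (0 + (h-1))
        = insert (h-1) (insert h (Finset.Ico (h+1) (d+1))) from by
      ext i
      simp only [Finset.mem_sdiff, Finset.mem_range, Finset.mem_Ico, Finset.mem_insert]
      omega]
    rw [Finset.prod_insert (by
        simp only [Finset.mem_insert, Finset.mem_Ico]
        omega),
      Finset.prod_insert (by
        simp only [Finset.mem_Ico]
        omega)]
  have hE2 : Ef d h 2 = Lf d 0 * (Lf d 1 * ∏ i ∈ Finset.Ico (h+1) (d+1), Lf d i) := by
    unfold Ef
    rw [show Finset.range (d+1) \ Finset.Ico 2 (2 + (h-1))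
        = insert 0 (insert 1 (Finset.Ico (h+1) (d+1))) from by
      ext i
      simp only [Finset.mem_sdiff, Finset.mem_range, Finset.mem_Ico, Finset.mem_insert]
      omega]
    rw [Finset.prod_insert (by
        simp only [Finset.mem_insert, Finset.mem_Ico]
        omega),
      Finset.prod_insert (by
        simp only [Finset.mem_Ico]
        omega)]
  have hEh : Ef d h h = Lf d (d-1) * (Lf d d * ∏ i ∈ Finset.range h, Lf d i) := by
    unfold Ef
    rw [show Finset.range (d+1) \ Finset.Ico h (h + (h-1))
        = insert (d-1) (insert d (Finset.range h)) from by
      ext i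
      simp only [Finset.mem_sdiff, Finset.mem_range, Finset.mem_Ico, Finset.mem_insert]
      omega]
    rw [Finset.prod_insert (by
        simp only [Finset.mem_insert, Finset.mem_range]
        omega),
      Finset.prod_insert (by
        simp only [Finset.mem_range]
        omega)]
  have hEh2 : Ef d h (h+2) = Lf d h * (Lf d (h+1) * ∏ i ∈ Finset.range h, Lf d i) := by
    unfold Ef
    rw [show Finset.range (d+1) \ Finset.Ico (h+2) ((h+2) + (h-1))
        = insert h (insert (h+1) (Finset.range h)) from by
      ext i
      simp only [Finset.mem_sdiff, Finset.mem_range, Finset.mem_Ico, Finset.mem_insert]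
      omega]
    rw [Finset.prod_insert (by
        simp only [Finset.mem_insert, Finset.mem_range]
        omega),
      Finset.prod_insert (by
        simp only [Finset.mem_range]
        omega)]
  have lin1 : Lf d (h-1) * Lf d h - Lf d 0 * Lf d 1
      = (h : R2) * ((h : R2) - 1) * ww * (uu + 3*vv) := by
    unfold Lf ww
    rw [Nat.cast_sub (show 1 ≤ h by omega), hd]
    push_cast
    ring
  have lin2 : Lf d (d-1) * Lf d d - Lf d h * Lf d (h+1)
      = (h : R2) * ((h : R2) - 1) * ww * (3*uu + vv) := by
    unfold Lf ww
    rw [hd, Nat.cast_sub (show 1 ≤ 2*h by omega)]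
    push_cast
    ring
  have hwD : ww * D = (uu + 3*vv) * (∏ i ∈ Finset.Ico (h+1) (d+1), Lf d i)
      - (vv + 3*uu) * (∏ i ∈ Finset.range h, Lf d i) := by
    show (uu - vv) * D = _
    rw [hD, hswap, hPi]
  have claimE : Ef d h 0 - Ef d h 2 - Ef d h h + Ef d h (h+2)
      = (h : R2) * ((h : R2) - 1) * ww * (ww * D) := by
    rw [hE0, hE2, hEh, hEh2, hwD]
    linear_combination (∏ i ∈ Finset.Ico (h+1) (d+1), Lf d i) * lin1
      - (∏ i ∈ Finset.range h, Lf d i) * lin2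
  -- Conclusion
  have hkey : (((h-2).factorial : R2) * ww^h) *
        MvPolynomial.coeff
          (Finsupp.single (0 : Fin 3) (h - 2) + Finsupp.single 1 1 + Finsupp.single 2 1) F
      = (((h-2).factorial : R2) * ww^h) * ((h : R2) * ((h : R2) - 1) * D) := by
    rw [← claimA, claimB, claimE]
    have hpow : ww^h = ww^(h-2) * ww * ww := by
      rw [← pow_succ, ← pow_succ]
      congr 1
      omega
    rw [hpow]
    ring
  have hne : (((h-2).factorial : R2) * ww^h) ≠ 0 := by
    apply mul_ne_zero
    · exact_mod_cast Nat.cast_ne_zero.mpr (Nat.factorial_ne_zero (h-2))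
    · exact pow_ne_zero h ww_ne
  exact mul_left_cancel₀ hne hkey
end
end

section
/- Let d = 2h with h ≥ 1. Then ∂(∏_{l=0}^{h} (l·v + (d−l)·u)) = h·(u+v)·∂(∏_{l=0}^{h−1} (l·v + (d−l)·u)) in R. -/
noncomputable section

/-- Remark 3.9(1), first relation: `∂(∏_{l=0}^{h}(lv+(d−l)u)) = h(u+v)·∂(∏_{l=0}^{h−1}(lv+(d−l)u))`
for `d = 2h` (i.e. `Tp_{λ_1} = h·c_1·Tp_{λ_0}`). -/
theorem stmt9 (h : ℕ) (hh : 1 ≤ h) (d : ℕ) (hd : d = 2 * h)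
    (D1 D0 : R2)
    (hD1 : (uu - vv) * D1 =
        (∏ l ∈ Finset.range (h + 1), ((l : R2) * vv + ((d - l : ℕ) : R2) * uu)) -
          swapUV (∏ l ∈ Finset.range (h + 1), ((l : R2) * vv + ((d - l : ℕ) : R2) * uu)))
    (hD0 : (uu - vv) * D0 =
        (∏ l ∈ Finset.range h, ((l : R2) * vv + ((d - l : ℕ) : R2) * uu)) -
          swapUV (∏ l ∈ Finset.range h, ((l : R2) * vv + ((d - l : ℕ) : R2) * uu))) :
    D1 = (h : R2) * (uu + vv) * D0 := by
  have huv : uu - vv ≠ 0 := by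
    intro hcon
    have := congrArg (MvPolynomial.eval (fun i : Fin 2 => if i = 0 then (1 : ℚ) else 0)) hcon
    simp [uu, vv] at this
  apply mul_left_cancel₀ huv
  rw [hD1, Finset.prod_range_succ]
  subst hd
  have hfac : ((h : R2) * vv + ((2 * h - h : ℕ) : R2) * uu) = (h : R2) * (uu + vv) := by
    have : 2 * h - h = h := by omega
    rw [this]; ring
  rw [hfac]
  have hmul : swapUV ((∏ l ∈ Finset.range h,
      ((l : R2) * vv + ((2 * h - l : ℕ) : R2) * uu)) * ((h : R2) * (uu + vv)))
      = swapUV (∏ l ∈ Finset.range h, ((l : R2) * vv + ((2 * h - l : ℕ) : R2) * uu))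
        * ((h : R2) * (uu + vv)) := by
    rw [swapUV, map_mul, map_mul, map_natCast, map_add]
    rw [show swapUV = MvPolynomial.rename (Equiv.swap (0 : Fin 2) 1) from rfl] at *
    unfold uu vv
    rw [MvPolynomial.rename_X, MvPolynomial.rename_X, Equiv.swap_apply_left,
      Equiv.swap_apply_right, add_comm (MvPolynomial.X 1 : R2)]
  rw [hmul]
  linear_combination -((h : R2) * (uu + vv)) * hD0
end
end

section
/- Let d = 2h with h > 2. Then (h−1)·∂(∏_{l=0}^{h+1} (l·v + (d−l)·u)) = (h−1)·(h−2)·(u+v)·∂(∏_{l=0}^{h} (l·v + (d−l)·u)) + (u+v)·h·(h−1)·∂((u+3v)·∏_{l=0}^{h−1} (l·v + (d−l)·u)) in R. -/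
noncomputable section

/-- Remark 3.9(1), second relation:
`(h−1)·∂(∏_{l=0}^{h+1}) = (h−1)(h−2)·(u+v)·∂(∏_{l=0}^{h}) + (u+v)·h(h−1)·∂((u+3v)·∏_{l=0}^{h−1})`
for `d = 2h` (i.e. `(h−1)·Tp_{λ_2} = (h−1)(h−2)·c_1·Tp_{λ_1} + c_1·Tp_{λ_0'}`). -/
theorem stmt10 (h : ℕ) (hh : 2 < h) (d : ℕ) (hd : d = 2 * h)
    (D2 D1 D0' : R2)
    (hD2 : (uu - vv) * D2 =
        (∏ l ∈ Finset.range (h + 2), ((l : R2) * vv + ((d - l : ℕ) : R2) * uu)) -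
          swapUV (∏ l ∈ Finset.range (h + 2), ((l : R2) * vv + ((d - l : ℕ) : R2) * uu)))
    (hD1 : (uu - vv) * D1 =
        (∏ l ∈ Finset.range (h + 1), ((l : R2) * vv + ((d - l : ℕ) : R2) * uu)) -
          swapUV (∏ l ∈ Finset.range (h + 1), ((l : R2) * vv + ((d - l : ℕ) : R2) * uu)))
    (hD0' : (uu - vv) * D0' =
        (uu + 3 * vv) * (∏ l ∈ Finset.range h, ((l : R2) * vv + ((d - l : ℕ) : R2) * uu)) -
          swapUV ((uu + 3 * vv) *
            ∏ l ∈ Finset.range h, ((l : R2) * vv + ((d - l : ℕ) : R2) * uu))) :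
    ((h : R2) - 1) * D2 =
      ((h : R2) - 1) * ((h : R2) - 2) * (uu + vv) * D1 +
        (uu + vv) * ((h : R2) * ((h : R2) - 1) * D0') := by

  subst hd
  have huv : (uu - vv) ≠ 0 := by
    intro hcon
    have := congrArg (MvPolynomial.eval (fun i : Fin 2 => if i = 0 then (1:ℚ) else 0)) hcon
    simp [uu, vv] at this
  -- swap lemmas
  have swap_uu : swapUV uu = vv := by
    simp [swapUV, uu, vv]
  have swap_vv : swapUV vv = uu := by
    simp [swapUV, uu, vv, Equiv.swap_apply_right]
  have swap_mul : ∀ a b : R2, swapUV (a * b) = swapUV a * swapUV b := fun a b => by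
    simp [swapUV]
  have swap_add : ∀ a b : R2, swapUV (a + b) = swapUV a + swapUV b := fun a b => by
    simp [swapUV]
  have swap_nat : ∀ n : ℕ, swapUV (n : R2) = (n : R2) := fun n => by
    simp [swapUV]
  set Q : R2 := ∏ l ∈ Finset.range h, ((l : R2) * vv + ((2 * h - l : ℕ) : R2) * uu) with hQ
  set S : R2 := swapUV Q with hS
  -- expand products
  have e1 : (2 * h - h : ℕ) = h := by omega
  have e2 : (2 * h - (h + 1) : ℕ) = h - 1 := by omega
  have c1 : ((h - 1 : ℕ) : R2) = (h : R2) - 1 := by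
    rw [Nat.cast_sub (by omega)]; simp
  have p1 : (∏ l ∈ Finset.range (h + 1), ((l : R2) * vv + ((2 * h - l : ℕ) : R2) * uu))
      = Q * ((h : R2) * vv + (h : R2) * uu) := by
    rw [Finset.prod_range_succ, e1]
  have p2 : (∏ l ∈ Finset.range (h + 2), ((l : R2) * vv + ((2 * h - l : ℕ) : R2) * uu))
      = Q * ((h : R2) * vv + (h : R2) * uu) * (((h : R2) + 1) * vv + ((h : R2) - 1) * uu) := by
    have : h + 2 = (h + 1) + 1 := rfl
    rw [this, Finset.prod_range_succ, p1, e2, c1]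
    push_cast
    ring
  have key : ((h : R2) - 1) * ((uu - vv) * D2) =
      ((h : R2) - 1) * ((h : R2) - 2) * (uu + vv) * ((uu - vv) * D1) +
        (uu + vv) * ((h : R2) * ((h : R2) - 1) * ((uu - vv) * D0')) := by
    rw [hD2, hD1, hD0', p1, p2]
    rw [swap_mul, swap_mul, swap_mul, swap_add, swap_add, swap_add, swap_mul, swap_mul,
      swap_mul, swap_mul, swap_mul, ← hS, swap_uu, swap_vv, swap_nat]
    have s3 : swapUV 3 = (3 : R2) := by
      have := swap_nat 3; simpa using this
    have s4 : swapUV ((h : R2) + 1) = (h : R2) + 1 := by simp [swapUV]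
    have s5 : swapUV ((h : R2) - 1) = (h : R2) - 1 := by simp [swapUV]
    rw [s3, s4, s5]
    ring
  apply mul_left_cancel₀ huv
  linear_combination key
end
end

section
/- Let d ≥ 1 and m ≥ 0 be integers with 2m < d, and set Π := ∏_{l=0}^{m} (l·v + (d−l)·u) ∈ R. Then every polynomial F ∈ R that divides both Π and ∂Π is a unit (a nonzero constant); i.e. gcd(Π, ∂Π) = 1. -/
noncomputable section

open MvPolynomial in
lemma prime_lin (a b : ℚ) (ha : a ≠ 0) :
    Prime ((MvPolynomial.C a) * uu + (MvPolynomial.C b) * vv) := by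
  let e := MvPolynomial.finSuccEquiv ℚ 1
  have hC : ∀ r : ℚ, e (MvPolynomial.C r) = Polynomial.C (MvPolynomial.C r) := by
    intro r; simp [e, finSuccEquiv_apply]
  have hX1 : e vv = Polynomial.C (MvPolynomial.X 0) := by
    have : (vv : MvPolynomial (Fin (1+1)) ℚ) = X (Fin.succ 0) := rfl
    rw [this, finSuccEquiv_X_succ]
  have hX0 : e uu = Polynomial.X := finSuccEquiv_X_zero
  have himg : e ((MvPolynomial.C a) * uu + (MvPolynomial.C b) * vv)
      = Polynomial.C (MvPolynomial.C a) *
        (Polynomial.X + Polynomial.C (MvPolynomial.C (a⁻¹ * b) *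
          (MvPolynomial.X 0 : MvPolynomial (Fin 1) ℚ))) := by
    rw [map_add, map_mul, map_mul, hC, hC, hX0, hX1, mul_add, ← Polynomial.C_mul,
      ← Polynomial.C_mul, ← mul_assoc, ← MvPolynomial.C_mul, mul_inv_cancel_left₀ ha]
  have hu : IsUnit (Polynomial.C (MvPolynomial.C a) : Polynomial (MvPolynomial (Fin 1) ℚ)) :=
    IsUnit.map _ (IsUnit.map _ (isUnit_iff_ne_zero.mpr ha))
  have hp : Prime (Polynomial.X + Polynomial.C (MvPolynomial.C (a⁻¹ * b) *
      (MvPolynomial.X 0 : MvPolynomial (Fin 1) ℚ))) := by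
    have := Polynomial.prime_X_sub_C (-(MvPolynomial.C (a⁻¹ * b) *
      (MvPolynomial.X 0 : MvPolynomial (Fin 1) ℚ)))
    simpa [sub_neg_eq_add] using this
  have hpr : Prime (e ((MvPolynomial.C a) * uu + (MvPolynomial.C b) * vv)) := by
    rw [himg]
    exact (Associated.prime (associated_unit_mul_left _ _ hu).symm hp)
  exact (MulEquiv.prime_iff e).mp hpr

open Finset MvPolynomial in
/-- `gcd(Π, ∂Π) = 1` for `Π = ∏_{l=0}^{m} (l·v + (d−l)·u)`, `2m < d`. -/
theorem stmt13 (d m : ℕ) (hd : 1 ≤ d) (hm : 2 * m < d)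
    (D : R2)
    (hD : (uu - vv) * D =
        (∏ l ∈ Finset.range (m + 1), ((l : R2) * vv + ((d - l : ℕ) : R2) * uu)) -
          swapUV (∏ l ∈ Finset.range (m + 1), ((l : R2) * vv + ((d - l : ℕ) : R2) * uu))) :
    ∀ F : R2,
      F ∣ (∏ l ∈ Finset.range (m + 1), ((l : R2) * vv + ((d - l : ℕ) : R2) * uu)) →
      F ∣ D → IsUnit F := by
  intro F hFP hFD
  by_contra hF
  set PP : R2 := ∏ l ∈ Finset.range (m + 1), ((l : R2) * vv + ((d - l : ℕ) : R2) * uu) with hPdef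
  -- each factor is prime
  have hform : ∀ l : ℕ, ((l : R2) * vv + ((d - l : ℕ) : R2) * uu)
      = (MvPolynomial.C ((d - l : ℕ) : ℚ)) * uu + (MvPolynomial.C (l : ℚ)) * vv := by
    intro l
    rw [map_natCast (MvPolynomial.C : ℚ →+* R2), map_natCast (MvPolynomial.C : ℚ →+* R2)]
    ring
  have hLprime : ∀ l ∈ Finset.range (m + 1), Prime ((l : R2) * vv + ((d - l : ℕ) : R2) * uu) := by
    intro l hl
    rw [hform]
    refine prime_lin _ _ ?_
    have hl' : l < d := by have := mem_range.mp hl; omega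
    have : 0 < d - l := by omega
    exact_mod_cast (Nat.cast_pos (α := ℚ)).mpr this |>.ne'
  have hPP0 : PP ≠ 0 := prod_ne_zero_iff.mpr fun l hl => (hLprime l hl).ne_zero
  have hF0 : F ≠ 0 := fun h => hPP0 (zero_dvd_iff.mp (h ▸ hFP))
  obtain ⟨p, hpirr, hpF⟩ := WfDvdMonoid.exists_irreducible_factor hF hF0
  have hp : Prime p := hpirr.prime
  have hpPP : p ∣ PP := hpF.trans hFP
  have hpPPs : p ∣ swapUV PP := by
    have hs : swapUV PP = PP - (uu - vv) * D := by rw [hD]; ring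
    rw [hs]
    exact dvd_sub hpPP ((hpF.trans hFD).mul_left _)
  have hswap : swapUV PP = ∏ j ∈ Finset.range (m + 1),
      ((j : R2) * uu + ((d - j : ℕ) : R2) * vv) := by
    unfold swapUV
    rw [map_prod]
    refine Finset.prod_congr rfl fun j _ => ?_
    simp [uu, vv, map_add, map_mul, map_natCast, rename_X, Equiv.swap_apply_left,
      Equiv.swap_apply_right, add_comm]
  rw [hswap] at hpPPs
  obtain ⟨l, hl, hpl⟩ := hp.exists_mem_finset_dvd hpPP
  obtain ⟨j, hj, hpj⟩ := hp.exists_mem_finset_dvd hpPPs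
  have hassoc : Associated p ((l : R2) * vv + ((d - l : ℕ) : R2) * uu) :=
    hp.associated_of_dvd (hLprime l hl) hpl
  have hLM : ((l : R2) * vv + ((d - l : ℕ) : R2) * uu) ∣
      ((j : R2) * uu + ((d - j : ℕ) : R2) * vv) := hassoc.symm.dvd.trans hpj
  -- evaluate at u = l, v = -(d-l)
  obtain ⟨q, hq⟩ := hLM
  have heval := congrArg (MvPolynomial.eval ![(l : ℚ), -(((d - l : ℕ) : ℚ))]) hq
  simp only [map_add, map_mul, map_natCast, eval_X, uu, vv, map_neg] at heval
  simp [Matrix.cons_val_zero, Matrix.cons_val_one, Matrix.head_cons] at heval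
  -- heval should now say j*l - (d-j)*(d-l) = 0 (times something)
  have hlm : l ≤ m := by have := mem_range.mp hl; omega
  have hjm : j ≤ m := by have := mem_range.mp hj; omega
  have hnat : j * l < (d - j) * (d - l) := by
    calc j * l ≤ m * m := Nat.mul_le_mul hjm hlm
      _ < (d - m) * (d - m) := Nat.mul_lt_mul_of_lt_of_lt (by omega) (by omega)
      _ ≤ (d - j) * (d - l) := Nat.mul_le_mul (by omega) (by omega)
  have hQ : ((j : ℚ)) * (l : ℚ) < ((d - j : ℕ) : ℚ) * ((d - l : ℕ) : ℚ) := by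
    exact_mod_cast (Nat.cast_lt (α := ℚ)).mpr hnat
  nlinarith [heval, hQ]
end
end

section
/- Let d = 2h+1 with h ≥ 1, and set Π := ∏_{l=0}^{h} (l·v + (d−l)·u) and L := (h+1)·v + h·u in R. Then every polynomial F ∈ R that divides both ∂Π and ∂(Π·L) is a unit (a nonzero constant); i.e. ∂Π and ∂(Π·L) have no nontrivial common divisor. -/
noncomputable section

open MvPolynomial in
set_option maxHeartbeats 1000000 in
/-- Theorem 4.3, key claim: for `d = 2h+1`, `Π = ∏_{l=0}^{h}(lv+(d−l)u)` and
`L = (h+1)v + hu`, the polynomials `∂Π` and `∂(ΠL)` have no nontrivial common divisor. -/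
theorem stmt14 (h : ℕ) (hh : 1 ≤ h) (d : ℕ) (hd : d = 2 * h + 1)
    (DPi DPiL : R2)
    (hDPi : (uu - vv) * DPi =
        (∏ l ∈ Finset.range (h + 1), ((l : R2) * vv + ((d - l : ℕ) : R2) * uu)) -
          swapUV (∏ l ∈ Finset.range (h + 1), ((l : R2) * vv + ((d - l : ℕ) : R2) * uu)))
    (hDPiL : (uu - vv) * DPiL =
        (∏ l ∈ Finset.range (h + 1), ((l : R2) * vv + ((d - l : ℕ) : R2) * uu)) *
            (((h : R2) + 1) * vv + (h : R2) * uu) -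
          swapUV ((∏ l ∈ Finset.range (h + 1), ((l : R2) * vv + ((d - l : ℕ) : R2) * uu)) *
            (((h : R2) + 1) * vv + (h : R2) * uu))) :
    ∀ F : R2, F ∣ DPi → F ∣ DPiL → IsUnit F := by
  intro F hF1 hF2
  have hswap_prod : swapUV (∏ l ∈ Finset.range (h + 1),
      ((l : R2) * vv + ((d - l : ℕ) : R2) * uu)) =
      ∏ l ∈ Finset.range (h + 1), ((l : R2) * uu + ((d - l : ℕ) : R2) * vv) := by
    simp [swapUV, map_prod, uu, vv]
  have hswap_mul : ∀ P Q : R2, swapUV (P * Q) = swapUV P * swapUV Q := by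
    intro P Q; simp [swapUV]
  have hswapL : swapUV (((h : R2) + 1) * vv + (h : R2) * uu) =
      ((h : R2) + 1) * uu + (h : R2) * vv := by
    simp [swapUV, uu, vv]
  set Pi : R2 := ∏ l ∈ Finset.range (h + 1), ((l : R2) * vv + ((d - l : ℕ) : R2) * uu)
    with hPidef
  set Pis : R2 := ∏ l ∈ Finset.range (h + 1), ((l : R2) * uu + ((d - l : ℕ) : R2) * vv)
    with hPisdef
  -- evaluation maps
  have huvne : uu - vv ≠ 0 := by
    intro hEq
    have := congrArg (MvPolynomial.eval (fun i : Fin 2 => if i = 0 then (1 : ℚ) else 0)) hEq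
    simp [uu, vv] at this
  have hDPi' : (uu - vv) * DPi = Pi - Pis := by rw [hDPi, hswap_prod]
  have hDPiL' : (uu - vv) * DPiL =
      Pi * (((h : R2) + 1) * vv + (h : R2) * uu) -
        Pis * (((h : R2) + 1) * uu + (h : R2) * vv) := by
    rw [hDPiL, hswap_mul, hswap_prod, hswapL]
  have key1 : DPiL - (((h : R2) + 1) * uu + (h : R2) * vv) * DPi = -Pi := by
    apply mul_left_cancel₀ huvne
    linear_combination hDPiL' - (((h : R2) + 1) * uu + (h : R2) * vv) * hDPi'
  have key2 : DPiL - (((h : R2) + 1) * vv + (h : R2) * uu) * DPi = -Pis := by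
    apply mul_left_cancel₀ huvne
    linear_combination hDPiL' - (((h : R2) + 1) * vv + (h : R2) * uu) * hDPi'
  have hFPi : F ∣ Pi := by
    have := dvd_sub hF2 (hF1.mul_left (((h : R2) + 1) * uu + (h : R2) * vv))
    rw [key1] at this; exact dvd_neg.mp this
  have hFPis : F ∣ Pis := by
    have := dvd_sub hF2 (hF1.mul_left (((h : R2) + 1) * vv + (h : R2) * uu))
    rw [key2] at this; exact dvd_neg.mp this
  -- now show F is a unit
  by_contra hU
  have hPine : Pi ≠ 0 := by
    rw [hPidef, Finset.prod_ne_zero_iff]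
    intro l hl hzero
    have hld : l < d := by have := Finset.mem_range.mp hl; omega
    have h0 : ((d - l : ℕ) : ℚ) = 0 := by
      have := congrArg (MvPolynomial.eval (fun i : Fin 2 => if i = 0 then (1 : ℚ) else 0)) hzero
      simpa [uu, vv] using this
    have hne0 : (d - l : ℕ) ≠ 0 := by omega
    exact hne0 (Nat.cast_eq_zero.mp h0)
  have hF0 : F ≠ 0 := by
    intro h0; exact hPine (zero_dvd_iff.mp (h0 ▸ hFPi))
  obtain ⟨q, hqirr, hqF⟩ := WfDvdMonoid.exists_irreducible_factor hU hF0
  have hqp : Prime q := UniqueFactorizationMonoid.irreducible_iff_prime.mp hqirr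
  have hqPi : q ∣ ∏ l ∈ Finset.range (h + 1), ((l : R2) * vv + ((d - l : ℕ) : R2) * uu) := by
    rw [← hPidef]; exact hqF.trans hFPi
  have hqPis : q ∣ ∏ l ∈ Finset.range (h + 1), ((l : R2) * uu + ((d - l : ℕ) : R2) * vv) := by
    rw [← hPisdef]; exact hqF.trans hFPis
  obtain ⟨l, hl, hql⟩ := hqp.exists_mem_finset_dvd hqPi
  obtain ⟨m, hm, hqm⟩ := hqp.exists_mem_finset_dvd hqPis
  have hl' : l ≤ h := by have := Finset.mem_range.mp hl; omega
  have hm' : m ≤ h := by have := Finset.mem_range.mp hm; omega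
  -- key numeric fact
  have hnum : m * l < (d - l) * (d - m) := by
    calc m * l ≤ h * h := Nat.mul_le_mul hm' hl'
    _ < (h + 1) * (h + 1) := by nlinarith
    _ ≤ (d - l) * (d - m) := Nat.mul_le_mul (by omega) (by omega)
  have hK : ((m : ℚ) * l - ((d - l : ℕ) : ℚ) * ((d - m : ℕ) : ℚ)) ≠ 0 := by
    have : ((m * l : ℕ) : ℚ) < (((d - l) * (d - m) : ℕ) : ℚ) := by exact_mod_cast hnum
    push_cast at this
    intro hEq; rw [sub_eq_zero] at hEq; rw [hEq] at this; exact lt_irrefl _ this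
  -- q divides vv
  have e1 : (m : R2) * ((l : R2) * vv + ((d - l : ℕ) : R2) * uu) -
      ((d - l : ℕ) : R2) * ((m : R2) * uu + ((d - m : ℕ) : R2) * vv) =
      MvPolynomial.C ((m : ℚ) * l - ((d - l : ℕ) : ℚ) * ((d - m : ℕ) : ℚ)) * vv := by
    simp only [map_sub, map_mul, MvPolynomial.C_eq_coe_nat]
    ring
  have e2 : ((d - m : ℕ) : R2) * ((l : R2) * vv + ((d - l : ℕ) : R2) * uu) -
      (l : R2) * ((m : R2) * uu + ((d - m : ℕ) : R2) * vv) =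
      MvPolynomial.C (((d - l : ℕ) : ℚ) * ((d - m : ℕ) : ℚ) - (m : ℚ) * l) * uu := by
    simp only [map_sub, map_mul, MvPolynomial.C_eq_coe_nat]
    ring
  have hqv : q ∣ vv := by
    have h1 : q ∣ MvPolynomial.C ((m : ℚ) * l - ((d - l : ℕ) : ℚ) * ((d - m : ℕ) : ℚ)) * vv := by
      rw [← e1]; exact dvd_sub (hql.mul_left _) (hqm.mul_left _)
    have h2 := h1.mul_left (MvPolynomial.C ((m : ℚ) * l - ((d - l : ℕ) : ℚ) * ((d - m : ℕ) : ℚ))⁻¹)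
    rwa [← mul_assoc, ← map_mul, inv_mul_cancel₀ hK, MvPolynomial.C_1, one_mul] at h2
  have hqu : q ∣ uu := by
    have hK' : (((d - l : ℕ) : ℚ) * ((d - m : ℕ) : ℚ) - (m : ℚ) * l) ≠ 0 := by
      intro hEq; apply hK; linarith [sub_eq_zero.mp hEq]
    have h1 : q ∣ MvPolynomial.C (((d - l : ℕ) : ℚ) * ((d - m : ℕ) : ℚ) - (m : ℚ) * l) * uu := by
      rw [← e2]; exact dvd_sub (hql.mul_left _) (hqm.mul_left _)
    have h2 := h1.mul_left (MvPolynomial.C (((d - l : ℕ) : ℚ) * ((d - m : ℕ) : ℚ) - (m : ℚ) * l)⁻¹)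
    rwa [← mul_assoc, ← map_mul, inv_mul_cancel₀ hK', MvPolynomial.C_1, one_mul] at h2
  -- uu is prime
  have hup : Prime uu := by
    rw [← MulEquiv.prime_iff (MvPolynomial.finSuccEquiv ℚ 1).toMulEquiv]
    simpa [uu, MvPolynomial.finSuccEquiv_X_zero] using Polynomial.prime_X
  have huu0 : uu ≠ 0 := hup.1
  obtain ⟨w, hw⟩ := hqu
  have : uu ∣ q ∨ uu ∣ w := hup.2.2 q w (hw ▸ dvd_refl uu)
  have huv : uu ∣ vv := by
    rcases this with hq' | hw'
    · exact hq'.trans hqv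
    · exfalso
      obtain ⟨w', hw'⟩ := hw'
      apply hqirr.not_isUnit
      have : uu * 1 = uu * (q * w') := by
        calc uu * 1 = uu := mul_one _
        _ = q * (uu * w') := by rw [← hw']; exact hw
        _ = uu * (q * w') := by ring
      exact IsUnit.of_mul_eq_one (a := q) w' (mul_left_cancel₀ huu0 this).symm
  obtain ⟨w, hw⟩ := huv
  have := congrArg (MvPolynomial.eval (fun i : Fin 2 => if i = 0 then (0 : ℚ) else 1)) hw
  simp [uu, vv] at this
end
end

section
/- Let d = 2h with h > 2 and let 1 < j < h. Set Π := ∏_{l=0}^{h−1} (l·v + (d−l)·u) and let D_j ∈ R be the unique polynomial with (u−v)·D_j = ∏_{l=h−j+1}^{h} (l·v + (d−l)·u) − ∏_{l=0}^{j−1} (l·v + (d−l)·u). Then ∂(Π·D_j) does not belong to the ideal of R generated by (u+v)·∂Π and (u+v)·Π. -/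
noncomputable section

open MvPolynomial Finset

namespace Stmt15Aux

lemma comp_mul {c g : R2} {n N : ℕ} (hg : g.IsHomogeneous n) :
    homogeneousComponent N (c * g) =
      if n ≤ N then homogeneousComponent (N - n) c * g else 0 := by
  classical
  conv_lhs => rw [← MvPolynomial.sum_homogeneousComponent c]
  rw [Finset.sum_mul, map_sum]
  have key : ∀ i : ℕ, homogeneousComponent N (homogeneousComponent i c * g)
      = if i = N - n ∧ n ≤ N then homogeneousComponent i c * g else 0 := by
    intro i
    rw [homogeneousComponent_of_mem ((mem_homogeneousSubmodule _ _).mpr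
      ((homogeneousComponent_isHomogeneous i c).mul hg))]
    by_cases hi : N = i + n
    · rw [if_pos hi, if_pos (by omega)]
    · rw [if_neg hi, if_neg (by omega)]
  rw [Finset.sum_congr rfl (fun i _ => key i)]
  by_cases hnN : n ≤ N
  · rw [if_pos hnN]
    simp only [hnN, and_true]
    rw [Finset.sum_ite_eq' _ (N - n) (fun i => homogeneousComponent i c * g)]
    split_ifs with hmem
    · rfl
    · have hz : homogeneousComponent (N - n) c = 0 :=
        homogeneousComponent_eq_zero (N - n) c (by simp only [mem_range] at hmem; omega)
      rw [hz, zero_mul]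
  · rw [if_neg hnN, Finset.sum_eq_zero fun i _ => if_neg (by omega)]

lemma exists_comp_mul (c g : R2) (n N : ℕ) (hg : g.IsHomogeneous n) :
    ∃ r, homogeneousComponent N (c * g) = r * g := by
  rw [comp_mul hg]
  split_ifs
  exacts [⟨_, rfl⟩, ⟨0, (zero_mul g).symm⟩]

lemma uv_ne : (uu - vv : R2) ≠ 0 := by
  intro h0
  have : MvPolynomial.eval ![(1:ℚ), 0] (uu - vv) = 1 := by simp [uu, vv]
  rw [h0] at this
  simp at this

lemma hom_div {f g : R2} {n : ℕ} (hg : g.IsHomogeneous (n + 1))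
    (heq : (uu - vv) * f = g) : f.IsHomogeneous n := by
  have huv : (uu - vv : R2).IsHomogeneous 1 :=
    (isHomogeneous_X _ _).sub (isHomogeneous_X _ _)
  have hzero : ∀ i : ℕ, i ≠ n → homogeneousComponent i f = 0 := by
    intro i hi
    have h1 : homogeneousComponent (i + 1) (f * (uu - vv))
        = homogeneousComponent i f * (uu - vv) := by
      rw [comp_mul huv, if_pos (by omega), Nat.add_sub_cancel]
    have h2 : homogeneousComponent (i + 1) (f * (uu - vv)) = 0 := by
      rw [mul_comm f (uu - vv), heq,
        homogeneousComponent_of_mem ((mem_homogeneousSubmodule _ _).mpr hg),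
        if_neg (by omega)]
    rw [h2] at h1
    rcases mul_eq_zero.mp h1.symm with h | h
    · exact h
    · exact absurd h uv_ne
  have hf : f = homogeneousComponent n f := by
    conv_lhs => rw [← sum_homogeneousComponent f]
    by_cases hn : n ∈ range (f.totalDegree + 1)
    · exact Finset.sum_eq_single_of_mem n hn (fun i _ hi => hzero i hi)
    · have hz : homogeneousComponent n f = 0 :=
        homogeneousComponent_eq_zero n f (by simp only [mem_range] at hn; omega)
      rw [Finset.sum_eq_zero (fun i hi => hzero i (fun he => hn (he ▸ hi))), hz]
  exact hf ▸ homogeneousComponent_isHomogeneous n f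

lemma hom_cast {p : R2} {n m : ℕ} (h : p.IsHomogeneous n) (e : n = m) :
    p.IsHomogeneous m := e ▸ h

lemma prod_linear_hom (s : Finset ℕ) (d : ℕ) :
    (∏ l ∈ s, ((l : R2) * vv + ((d - l : ℕ) : R2) * uu)).IsHomogeneous s.card := by
  have := IsHomogeneous.prod s (fun l => ((l : R2) * vv + ((d - l : ℕ) : R2) * uu))
    (fun _ => 1) (fun l _ => ?_)
  · simpa using this
  · have h1 : ((l : R2) * vv).IsHomogeneous 1 := by
      have := isHomogeneous_C_mul_X ((l : ℚ)) (1 : Fin 2)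
      simpa [vv, map_natCast] using this
    have h2 : (((d - l : ℕ) : R2) * uu).IsHomogeneous 1 := by
      have := isHomogeneous_C_mul_X (((d - l : ℕ) : ℚ)) (0 : Fin 2)
      simpa [uu, map_natCast] using this
    exact h1.add h2

lemma swap_eval (x y : ℚ) (P : R2) :
    MvPolynomial.eval ![x, y] (swapUV P) = MvPolynomial.eval ![y, x] P := by
  unfold swapUV
  rw [eval_rename]
  have hfun : (![x, y] ∘ (Equiv.swap (0 : Fin 2) 1)) = ![y, x] := by
    funext i
    fin_cases i <;> simp [Equiv.swap_apply_left, Equiv.swap_apply_right]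
  rw [hfun]

lemma swap_hom {P : R2} {n : ℕ} (hP : P.IsHomogeneous n) :
    (swapUV P).IsHomogeneous n := hP.rename_isHomogeneous

end Stmt15Aux

open Stmt15Aux Polynomial in
/-- Proposition 4.5, claim (1): for `d = 2h`, `1 < j < h`, the Thom polynomial
`∂(Π·D_j)` does not lie in the ideal `((u+v)·∂Π, (u+v)·Π)`. -/
theorem stmt15 (h j : ℕ) (hh : 2 < h) (hj1 : 1 < j) (hj2 : j < h) (d : ℕ) (hd : d = 2 * h)
    (Dj : R2)
    (hDj : (uu - vv) * Dj =
        (∏ l ∈ Finset.Icc (h - j + 1) h, ((l : R2) * vv + ((d - l : ℕ) : R2) * uu)) -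
          ∏ l ∈ Finset.range j, ((l : R2) * vv + ((d - l : ℕ) : R2) * uu))
    (DPi : R2)
    (hDPi : (uu - vv) * DPi =
        (∏ l ∈ Finset.range h, ((l : R2) * vv + ((d - l : ℕ) : R2) * uu)) -
          swapUV (∏ l ∈ Finset.range h, ((l : R2) * vv + ((d - l : ℕ) : R2) * uu)))
    (DPiDj : R2)
    (hDPiDj : (uu - vv) * DPiDj =
        (∏ l ∈ Finset.range h, ((l : R2) * vv + ((d - l : ℕ) : R2) * uu)) * Dj -
          swapUV ((∏ l ∈ Finset.range h, ((l : R2) * vv + ((d - l : ℕ) : R2) * uu)) * Dj)) :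
    DPiDj ∉ Ideal.span ({(uu + vv) * DPi,
      (uu + vv) * ∏ l ∈ Finset.range h, ((l : R2) * vv + ((d - l : ℕ) : R2) * uu)} : Set R2) := by
  subst hd
  intro hmem
  obtain ⟨c1, c2, hc⟩ := Ideal.mem_span_pair.mp hmem
  set Pp : R2 := ∏ l ∈ Finset.range h, ((l : R2) * vv + ((2 * h - l : ℕ) : R2) * uu) with hPpdef
  -- homogeneity facts
  have hPih : Pp.IsHomogeneous h := by
    have := prod_linear_hom (Finset.range h) (2 * h)
    exact hom_cast this (by simp)
  have hAhom : (∏ l ∈ Finset.Icc (h - j + 1) h,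
      ((l : R2) * vv + ((2 * h - l : ℕ) : R2) * uu)).IsHomogeneous j := by
    have := prod_linear_hom (Finset.Icc (h - j + 1) h) (2 * h)
    exact hom_cast this (by rw [Nat.card_Icc]; omega)
  have hBhom : (∏ l ∈ Finset.range j,
      ((l : R2) * vv + ((2 * h - l : ℕ) : R2) * uu)).IsHomogeneous j := by
    have := prod_linear_hom (Finset.range j) (2 * h)
    exact hom_cast this (by simp)
  have hDjhom : Dj.IsHomogeneous (j - 1) :=
    hom_div (hom_cast (hAhom.sub hBhom) (by omega)) hDj
  have hDPihom : DPi.IsHomogeneous (h - 1) :=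
    hom_div (hom_cast (hPih.sub (swap_hom hPih)) (by omega)) hDPi
  have hPD : (Pp * Dj).IsHomogeneous (h + (j - 1)) := hPih.mul hDjhom
  have hDPiDjhom : DPiDj.IsHomogeneous (h + j - 2) :=
    hom_div (hom_cast (hPD.sub (swap_hom hPD)) (by omega)) hDPiDj
  have huvhom : (uu + vv : R2).IsHomogeneous 1 :=
    (isHomogeneous_X _ _).add (isHomogeneous_X _ _)
  have hG1 : ((uu + vv) * DPi).IsHomogeneous h :=
    hom_cast (huvhom.mul hDPihom) (by omega)
  have hG2 : ((uu + vv) * Pp).IsHomogeneous (h + 1) :=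
    hom_cast (huvhom.mul hPih) (by omega)
  -- extract the homogeneous component of degree h + j - 2
  have hE := congrArg (homogeneousComponent (h + j - 2)) hc
  rw [map_add, comp_mul hG1, if_pos (show h ≤ h + j - 2 by omega)] at hE
  obtain ⟨r, hr⟩ := exists_comp_mul c2 _ (h + 1) (h + j - 2) hG2
  rw [hr, homogeneousComponent_of_mem ((mem_homogeneousSubmodule _ _).mpr hDPiDjhom),
    if_pos rfl] at hE
  set a : R2 := homogeneousComponent (h + j - 2 - h) c1 with hadef
  have ha : a.IsHomogeneous (j - 2) :=
    hom_cast (homogeneousComponent_isHomogeneous _ c1) (by omega)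
  -- the univariate polynomial q
  set w : Fin 2 → Polynomial ℚ :=
    ![Polynomial.C (h : ℚ) - Polynomial.X, -Polynomial.C (h : ℚ) - Polynomial.X] with hwdef
  set q : Polynomial ℚ := MvPolynomial.aeval w a with hqdef
  have hqdeg : q.natDegree ≤ j - 2 := by
    have hb := MvPolynomial.aeval_natDegree_le (n := 1) a ha.totalDegree_le w ?_
    · simpa using hb
    · intro i
      fin_cases i
      · simpa [hwdef] using
          (Polynomial.natDegree_sub_le (Polynomial.C (h : ℚ)) Polynomial.X).trans (by simp)
      · simpa [hwdef] using
          (Polynomial.natDegree_sub_le (-Polynomial.C (h : ℚ)) Polynomial.X).trans (by simp)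
  have hq_eval : ∀ m : ℕ,
      q.eval (m : ℚ) = MvPolynomial.eval ![(h : ℚ) - m, -(h : ℚ) - m] a := by
    intro m
    have h2 := MvPolynomial.comp_aeval_apply
      ((Polynomial.aeval ((m : ℚ))) : Polynomial ℚ →ₐ[ℚ] ℚ) (f := w) a
    rw [← hqdef] at h2
    have h3 : Polynomial.eval ((m : ℚ)) q
        = (MvPolynomial.aeval fun i => (Polynomial.aeval ((m : ℚ))) (w i)) a :=
      (congrFun (Polynomial.coe_aeval_eq_eval ((m : ℚ))) q).symm.trans h2
    rw [h3]
    have hfun : (fun i => (Polynomial.aeval ((m : ℚ))) (w i))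
        = ![(h : ℚ) - m, -(h : ℚ) - m] := by
      funext i
      fin_cases i <;> simp [hwdef]
    rw [hfun, MvPolynomial.aeval_def, Algebra.algebraMap_self]
    rfl
  -- the interpolation polynomial NN
  set NN : Polynomial ℚ :=
    Polynomial.C ((-(2 * (h : ℚ))) ^ (j - 1)) *
      ((∏ i ∈ Finset.range j, (Polynomial.X + Polynomial.C (i : ℚ))) -
        ∏ l ∈ Finset.range j, (Polynomial.X + Polynomial.C ((h : ℚ) - l))) +
      Polynomial.C 2 * Polynomial.X * q with hNNdef
  have key : ∀ m : ℕ, 1 ≤ m → m ≤ h → NN.eval (m : ℚ) = 0 := by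
    intro m hm1 hm2
    set pt : Fin 2 → ℚ := ![(h : ℚ) - m, -(h : ℚ) - m] with hpt
    set pt' : Fin 2 → ℚ := ![-(h : ℚ) - m, (h : ℚ) - m] with hpt'
    obtain ⟨K, hKdef⟩ : ∃ K : ℚ, K = -(2 * (h : ℚ)) := ⟨_, rfl⟩
    obtain ⟨Pm, hPmdef⟩ : ∃ Pm : ℚ, Pm = ∏ k ∈ Finset.range h, ((m : ℚ) + k + 1) := ⟨_, rfl⟩
    obtain ⟨Am, hAmdef⟩ : ∃ Am : ℚ, Am = ∏ i ∈ Finset.range j, ((m : ℚ) + i) := ⟨_, rfl⟩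
    obtain ⟨Bm, hBmdef⟩ : ∃ Bm : ℚ, Bm = ∏ l ∈ Finset.range j, ((m : ℚ) + ((h : ℚ) - l)) := ⟨_, rfl⟩
    have hswap : ∀ P : R2,
        MvPolynomial.eval pt (swapUV P) = MvPolynomial.eval pt' P := by
      intro P
      rw [hpt, hpt']
      exact swap_eval _ _ P
    have fpt : ∀ l : ℕ, l ≤ 2 * h →
        MvPolynomial.eval pt ((l : R2) * vv + ((2 * h - l : ℕ) : R2) * uu)
          = (2 * (h : ℚ)) * ((h : ℚ) - m - l) := by
      intro l hl
      have hcast : ((2 * h - l : ℕ) : ℚ) = 2 * (h : ℚ) - l := by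
        rw [Nat.cast_sub hl]; push_cast; ring
      simp only [map_add, map_mul, map_natCast, uu, vv, MvPolynomial.eval_X, hpt,
        Matrix.cons_val_zero, Matrix.cons_val_one, Matrix.head_cons, hcast]
      ring
    have fpt' : ∀ l : ℕ, l ≤ 2 * h →
        MvPolynomial.eval pt' ((l : R2) * vv + ((2 * h - l : ℕ) : R2) * uu)
          = K * ((h : ℚ) + m - l) := by
      intro l hl
      have hcast : ((2 * h - l : ℕ) : ℚ) = 2 * (h : ℚ) - l := by
        rw [Nat.cast_sub hl]; push_cast; ring
      simp only [map_add, map_mul, map_natCast, uu, vv, MvPolynomial.eval_X, hpt',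
        Matrix.cons_val_zero, Matrix.cons_val_one, Matrix.head_cons, hcast, hKdef]
      ring
    have hPi_pt : MvPolynomial.eval pt Pp = 0 := by
      rw [hPpdef, map_prod]
      apply Finset.prod_eq_zero (Finset.mem_range.mpr (show h - m < h by omega))
      rw [fpt (h - m) (by omega), Nat.cast_sub hm2]
      ring
    have hprodK : ∀ s : Finset ℕ, (∀ l ∈ s, l ≤ 2 * h) →
        MvPolynomial.eval pt' (∏ l ∈ s, ((l : R2) * vv + ((2 * h - l : ℕ) : R2) * uu))
          = K ^ s.card * ∏ l ∈ s, ((h : ℚ) + m - l) := by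
      intro s hs
      rw [map_prod, Finset.prod_congr rfl (fun l hl => fpt' l (hs l hl)),
        Finset.prod_mul_distrib, Finset.prod_const]
    have hPi_pt' : MvPolynomial.eval pt' Pp = K ^ h * Pm := by
      rw [hPpdef, hprodK _ (fun l hl => by rw [Finset.mem_range] at hl; omega),
        Finset.card_range]
      congr 1
      rw [hPmdef, ← Finset.prod_range_reflect (fun k => ((m : ℚ) + k + 1)) h]
      apply Finset.prod_congr rfl
      intro l hl
      rw [Finset.mem_range] at hl
      rw [show h - 1 - l = h - (l + 1) from by omega, Nat.cast_sub (by omega)]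
      push_cast
      ring
    have hA_pt' : MvPolynomial.eval pt'
        (∏ l ∈ Finset.Icc (h - j + 1) h, ((l : R2) * vv + ((2 * h - l : ℕ) : R2) * uu))
          = K ^ j * Am := by
      rw [hprodK _ (fun l hl => by rw [Finset.mem_Icc] at hl; omega),
        show (Finset.Icc (h - j + 1) h).card = j from by rw [Nat.card_Icc]; omega]
      congr 1
      rw [hAmdef]
      refine Finset.prod_bij' (fun l _ => h - l) (fun i _ => h - i) ?_ ?_ ?_ ?_ ?_
      · intro l hl
        rw [Finset.mem_Icc] at hl
        show h - l ∈ Finset.range j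
        rw [Finset.mem_range]
        omega
      · intro i hi
        rw [Finset.mem_range] at hi
        show h - i ∈ Finset.Icc (h - j + 1) h
        rw [Finset.mem_Icc]
        omega
      · intro l hl
        rw [Finset.mem_Icc] at hl
        show h - (h - l) = l
        omega
      · intro i hi
        rw [Finset.mem_range] at hi
        show h - (h - i) = i
        omega
      · intro l hl
        rw [Finset.mem_Icc] at hl
        show (h : ℚ) + m - l = (m : ℚ) + ((h - l : ℕ) : ℚ)
        rw [Nat.cast_sub (by omega)]
        ring
    have hB_pt' : MvPolynomial.eval pt'
        (∏ l ∈ Finset.range j, ((l : R2) * vv + ((2 * h - l : ℕ) : R2) * uu))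
          = K ^ j * Bm := by
      rw [hprodK _ (fun l hl => by rw [Finset.mem_range] at hl; omega), Finset.card_range]
      congr 1
      rw [hBmdef]
      apply Finset.prod_congr rfl
      intro l _
      ring
    have euv : MvPolynomial.eval pt (uu - vv) = 2 * (h : ℚ) := by
      simp only [map_sub, uu, vv, MvPolynomial.eval_X, hpt,
        Matrix.cons_val_zero, Matrix.cons_val_one, Matrix.head_cons]
      ring
    have euv' : MvPolynomial.eval pt' (uu - vv) = K := by
      simp only [map_sub, uu, vv, MvPolynomial.eval_X, hpt', hKdef,
        Matrix.cons_val_zero, Matrix.cons_val_one, Matrix.head_cons]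
      ring
    have esum : MvPolynomial.eval pt (uu + vv) = -(2 * (m : ℚ)) := by
      simp only [map_add, uu, vv, MvPolynomial.eval_X, hpt,
        Matrix.cons_val_zero, Matrix.cons_val_one, Matrix.head_cons]
      ring
    have e1 := congrArg (MvPolynomial.eval pt) hDPi
    simp only [map_mul, map_sub, euv, hswap, hPi_pt, hPi_pt', zero_sub] at e1
    have e2 := congrArg (MvPolynomial.eval pt') hDj
    simp only [map_mul, map_sub, euv', hA_pt', hB_pt'] at e2
    have e3 := congrArg (MvPolynomial.eval pt) hDPiDj
    simp only [map_mul, map_sub, euv, hswap, hPi_pt, hPi_pt', zero_mul, zero_sub] at e3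
    have e4 := congrArg (MvPolynomial.eval pt) hE
    simp only [map_add, map_mul, esum, hPi_pt, mul_zero, add_zero] at e4
    have hqm := hq_eval m
    rw [← hpt] at hqm
    rw [← hqm] at e4
    -- final algebra
    have hh0 : (0 : ℚ) < (h : ℚ) := by exact_mod_cast (by omega : 0 < h)
    have h2h : (2 * (h : ℚ)) ≠ 0 := by positivity
    have hKne : K ≠ 0 := by rw [hKdef]; intro hK0; nlinarith
    have hPmne : Pm ≠ 0 := by
      rw [hPmdef]
      apply Finset.prod_ne_zero_iff.mpr
      intro k _
      positivity
    have hpowh : K ^ h = K ^ (h - 1) * K := by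
      conv_lhs => rw [show h = (h - 1) + 1 from by omega]
      rw [pow_succ]
    have hpowj : K ^ j = K ^ (j - 1) * K := by
      conv_lhs => rw [show j = (j - 1) + 1 from by omega]
      rw [pow_succ]
    have hPval : MvPolynomial.eval pt DPi = K ^ (h - 1) * Pm := by
      apply mul_left_cancel₀ h2h
      linear_combination e1 - Pm * hpowh - Pm * K ^ (h - 1) * hKdef
    have hDqval : MvPolynomial.eval pt' Dj = K ^ (j - 1) * (Am - Bm) := by
      apply mul_left_cancel₀ hKne
      linear_combination e2 + (Am - Bm) * hpowj
    rw [hPval] at e4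
    rw [hDqval] at e3
    have hNNeval : NN.eval (m : ℚ) = K ^ (j - 1) * (Am - Bm) + 2 * m * q.eval (m : ℚ) := by
      rw [hNNdef, hAmdef, hBmdef, hKdef]
      simp only [Polynomial.eval_add, Polynomial.eval_mul, Polynomial.eval_sub,
        Polynomial.eval_C, Polynomial.eval_X, Polynomial.eval_prod]
      try ring
    have hbig : ((2 * (h : ℚ)) * (K ^ (h - 1) * Pm)) *
        (K ^ (j - 1) * (Am - Bm) + 2 * m * q.eval (m : ℚ)) = 0 := by
      linear_combination (-1 : ℚ) * e3 - 2 * (h : ℚ) * e4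
        + Pm * K ^ (j - 1) * (Am - Bm) * hpowh
        + Pm * K ^ (j - 1) * (Am - Bm) * K ^ (h - 1) * hKdef
    rw [hNNeval]
    have hne : ((2 * (h : ℚ)) * (K ^ (h - 1) * Pm)) ≠ 0 :=
      mul_ne_zero h2h (mul_ne_zero (pow_ne_zero _ hKne) hPmne)
    exact (mul_eq_zero.mp hbig).resolve_left hne
  -- NN vanishes at h points and has degree < h, hence NN = 0
  have hNN0 : NN = 0 := by
    apply Polynomial.eq_zero_of_natDegree_lt_card_of_eval_eq_zero' NN
      ((Finset.Icc 1 h).image (Nat.cast : ℕ → ℚ))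
    · intro i hi
      obtain ⟨m, hm, rfl⟩ := Finset.mem_image.mp hi
      rw [Finset.mem_Icc] at hm
      exact key m hm.1 hm.2
    · have hcard : ((Finset.Icc 1 h).image (Nat.cast : ℕ → ℚ)).card = h := by
        rw [Finset.card_image_of_injective _ Nat.cast_injective, Nat.card_Icc]
        omega
      rw [hcard]
      have hdeg : NN.natDegree ≤ j := by
        rw [hNNdef]
        refine (Polynomial.natDegree_add_le _ _).trans (max_le ?_ ?_)
        · refine (Polynomial.natDegree_C_mul_le _ _).trans ?_
          refine (Polynomial.natDegree_sub_le _ _).trans (max_le ?_ ?_)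
          · refine (Polynomial.natDegree_prod_le _ _).trans ?_
            have hb : ∀ i ∈ Finset.range j,
                (Polynomial.X + Polynomial.C ((i : ℕ) : ℚ)).natDegree ≤ 1 :=
              fun i _ => le_of_eq (Polynomial.natDegree_X_add_C _)
            exact (Finset.sum_le_sum hb).trans (by simp)
          · refine (Polynomial.natDegree_prod_le _ _).trans ?_
            have hb : ∀ i ∈ Finset.range j,
                (Polynomial.X + Polynomial.C ((h : ℚ) - i)).natDegree ≤ 1 :=
              fun i _ => le_of_eq (Polynomial.natDegree_X_add_C _)
            exact (Finset.sum_le_sum hb).trans (by simp)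
        · refine Polynomial.natDegree_mul_le.trans ?_
          have h1 : (Polynomial.C (2 : ℚ) * Polynomial.X).natDegree ≤ 1 :=
            Polynomial.natDegree_mul_le.trans (by simp)
          omega
      omega
  -- contradiction: evaluate NN at 0
  have h0 := congrArg (Polynomial.eval 0) hNN0
  rw [hNNdef] at h0
  simp only [Polynomial.eval_add, Polynomial.eval_mul, Polynomial.eval_sub,
    Polynomial.eval_C, Polynomial.eval_X, Polynomial.eval_prod, Polynomial.eval_zero,
    mul_zero, zero_mul, add_zero] at h0
  have hz1 : (∏ i ∈ Finset.range j, ((0 : ℚ) + (i : ℚ))) = 0 :=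
    Finset.prod_eq_zero (Finset.mem_range.mpr (by omega : 0 < j)) (by norm_num)
  have hz2 : (∏ l ∈ Finset.range j, ((0 : ℚ) + ((h : ℚ) - (l : ℚ)))) ≠ 0 := by
    apply Finset.prod_ne_zero_iff.mpr
    intro l hl
    rw [Finset.mem_range] at hl
    have hlh : (l : ℚ) < (h : ℚ) := by exact_mod_cast (by omega : l < h)
    intro hcon
    linarith
  rw [hz1] at h0
  have hh0 : (0 : ℚ) < (h : ℚ) := by exact_mod_cast (by omega : 0 < h)
  have hKne : (-(2 * (h : ℚ))) ≠ 0 := by intro hK0; linarith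
  have : ((-(2 * (h : ℚ))) ^ (j - 1)) *
      (0 - ∏ l ∈ Finset.range j, ((0 : ℚ) + ((h : ℚ) - (l : ℚ)))) ≠ 0 := by
    apply mul_ne_zero (pow_ne_zero _ hKne)
    intro hcon
    apply hz2
    linarith
  exact this h0
end
end
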